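/- arXiv:1606.07308 — 6 statements merged into one kernel-verified Lean document; each statement's English description precedes it below -/
import Mathlib

section
/- Let n ≥ 1 be an integer, m > 0, k > 0, Λ > 0, let H: [0,∞) → [0,∞) be continuous, nondecreasing, with H(0) = 0, and let f: ℝ → ℝ be continuous with |f(τ)| ≤ 2|τ|^k and |f(τ) − |τ|^k| ≤ |τ|^k H(|τ|) for all τ ∈ ℝ. Define h(ε) = max( H(4Λ²ε^{2/k}), ε^{2k}, ε² ). Then there exists C < ∞ such that for every ε ∈ (0,m), setting ω = √(m²−ε²), and for all real numbers V̂, Û, Ṽ, Ũ with |V̂| ≤ Λ, m|Û| ≤ Λ and |Ṽ| + m|Ũ| ≤ Λ, setting V = V̂ + Ṽ and U = Û + Ũ, one has: |G₁| ≤ C ( h(ε)(|V|+|U|)^{1+2k} + |V̂|^{1+2k−min(2,1+2k)} |Ṽ|^{min(2,1+2k)} + |Ṽ|^{1+2k} + ε²|V̂| ) and |G₂| ≤ C ( ε² |V²−ε²U²|^k |U| + ε² |Û| ). -/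
open Real NNReal

/-- subadditivity of rpow for exponent in [0,1] on nonneg reals -/
lemma aux_rpow_add_le {x y p : ℝ} (hx : 0 ≤ x) (hy : 0 ≤ y) (hp : 0 ≤ p) (hp1 : p ≤ 1) :
    (x + y) ^ p ≤ x ^ p + y ^ p := by
  have h := NNReal.rpow_add_le_add_rpow (x.toNNReal) (y.toNNReal) hp hp1
  have hxy : ((x.toNNReal + y.toNNReal : ℝ≥0) : ℝ) = x + y := by
    push_cast
    rw [Real.coe_toNNReal _ hx, Real.coe_toNNReal _ hy]
  calc (x + y) ^ p = (((x.toNNReal + y.toNNReal : ℝ≥0) : ℝ)) ^ p := by rw [hxy]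
    _ = (((x.toNNReal + y.toNNReal) ^ p : ℝ≥0) : ℝ) := by rw [← NNReal.coe_rpow]
    _ ≤ ((x.toNNReal ^ p + y.toNNReal ^ p : ℝ≥0) : ℝ) := by exact_mod_cast h
    _ = x ^ p + y ^ p := by
        rw [NNReal.coe_add, NNReal.coe_rpow, NNReal.coe_rpow,
          Real.coe_toNNReal _ hx, Real.coe_toNNReal _ hy]

/-- MVT bound for rpow with exponent ≥ 1 -/
lemma aux_rpow_sub_le {p a b : ℝ} (hp : 1 ≤ p) (hb : 0 ≤ b) (hba : b ≤ a) :
    a ^ p - b ^ p ≤ p * a ^ (p - 1) * (a - b) := by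
  have ha : 0 ≤ a := hb.trans hba
  have key : ‖a ^ p - b ^ p‖ ≤ (p * a ^ (p - 1)) * ‖a - b‖ := by
    apply (convex_Icc b a).norm_image_sub_le_of_norm_hasDerivWithin_le
      (f := fun x : ℝ => x ^ p) (f' := fun x => p * x ^ (p - 1))
      (fun x hx => (Real.hasDerivAt_rpow_const (Or.inr hp)).hasDerivWithinAt)
      ?_ ⟨le_refl b, hba⟩ ⟨hba, le_refl a⟩
    intro x hx
    show ‖p * x ^ (p - 1)‖ ≤ _
    rw [Real.norm_eq_abs,
      abs_of_nonneg (mul_nonneg (by linarith) (Real.rpow_nonneg (hb.trans hx.1) _))]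
    have : x ^ (p - 1) ≤ a ^ (p - 1) :=
      Real.rpow_le_rpow (hb.trans hx.1) hx.2 (by linarith)
    nlinarith [Real.rpow_nonneg (hb.trans hx.1) (p - 1)]
  rw [Real.norm_eq_abs, Real.norm_eq_abs, abs_of_nonneg (by linarith : (0:ℝ) ≤ a - b)] at key
  calc a ^ p - b ^ p ≤ |a ^ p - b ^ p| := le_abs_self _
    _ ≤ p * a ^ (p - 1) * (a - b) := key

lemma aux_diff_aux {p : ℝ} (hp : 0 < p) {a b : ℝ} (hb : 0 ≤ b) (hba : b ≤ a) :
    a ^ p - b ^ p ≤ (1 + p) * (a + b) ^ (p - min p 1) * (a - b) ^ (min p 1) := by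
  have ha : 0 ≤ a := hb.trans hba
  rcases le_total p 1 with h1 | h1
  · have hmin : min p 1 = p := min_eq_left h1
    rw [hmin, sub_self, Real.rpow_zero, mul_one]
    have h2 : a ^ p ≤ (a - b) ^ p + b ^ p := by
      have := aux_rpow_add_le (x := a - b) (y := b) (by linarith) hb hp.le h1
      rwa [sub_add_cancel] at this
    nlinarith [Real.rpow_nonneg (by linarith : (0:ℝ) ≤ a - b) p]
  · have hmin : min p 1 = 1 := min_eq_right h1
    rw [hmin, Real.rpow_one]
    have h2 := aux_rpow_sub_le h1 hb hba
    have h3 : a ^ (p - 1) ≤ (a + b) ^ (p - 1) :=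
      Real.rpow_le_rpow ha (by linarith) (by linarith)
    have h4 := mul_le_mul_of_nonneg_right (mul_le_mul_of_nonneg_left h3 hp.le)
      (sub_nonneg.2 hba)
    have h5 : 0 ≤ (a + b) ^ (p - 1) * (a - b) :=
      mul_nonneg (Real.rpow_nonneg (by linarith) _) (by linarith)
    nlinarith [h4, h5]

/-- key power-difference estimate -/
lemma aux_pow_diff {p : ℝ} (hp : 0 < p) {a b : ℝ} (ha : 0 ≤ a) (hb : 0 ≤ b) :
    |a ^ p - b ^ p| ≤ (1 + p) * (a + b) ^ (p - min p 1) * |a - b| ^ (min p 1) := by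
  rcases le_total b a with h | h
  · rw [abs_of_nonneg (by linarith : (0:ℝ) ≤ a - b),
      abs_of_nonneg (sub_nonneg.2 (Real.rpow_le_rpow hb h hp.le))]
    exact aux_diff_aux hp hb h
  · rw [abs_sub_comm, abs_sub_comm a b, add_comm a b,
      abs_of_nonneg (sub_nonneg.2 (Real.rpow_le_rpow ha h hp.le)),
      abs_of_nonneg (by linarith : (0:ℝ) ≤ b - a)]
    exact aux_diff_aux hp ha h

/-- derivative of y ↦ |y|^p * y -/
lemma aux_hasDerivAt {p : ℝ} (hp : 0 < p) (x : ℝ) :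
    HasDerivAt (fun y : ℝ => |y| ^ p * y) ((1 + p) * |x| ^ p) x := by
  rcases lt_trichotomy x 0 with hx | hx | hx
  · have hne : -x ≠ 0 := by intro h; nlinarith [neg_eq_zero.1 h]
    have h1 : HasDerivAt (fun y : ℝ => (-y) ^ p) (p * (-x) ^ (p - 1) * (-1)) x :=
      (Real.hasDerivAt_rpow_const (p := p) (Or.inl hne)).comp x (hasDerivAt_neg x)
    have h2 := h1.mul (hasDerivAt_id x)
    have heq : (fun y : ℝ => (-y) ^ p * y) =ᶠ[nhds x] (fun y : ℝ => |y| ^ p * y) := by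
      filter_upwards [eventually_lt_nhds hx] with y hy
      rw [abs_of_neg hy]
    have h3 := h2.congr_of_eventuallyEq heq.symm
    refine h3.congr_deriv ?_
    rw [abs_of_neg hx, id_eq]
    have : (-x) ^ (p - 1) * (-x) = (-x) ^ p := by
      rw [← Real.rpow_add_one hne (p - 1)]; ring_nf
    nlinarith [this]
  · subst hx
    have hslope : ∀ y : ℝ, y ≠ 0 → slope (fun y : ℝ => |y| ^ p * y) 0 y = |y| ^ p := by
      intro y hy
      simp [slope, hy]
      field_simp
    rw [hasDerivAt_iff_tendsto_slope]
    have hlim : Filter.Tendsto (fun y : ℝ => |y| ^ p) (nhdsWithin 0 {(0:ℝ)}ᶜ) (nhds ((1 + p) * |(0:ℝ)| ^ p)) := by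
      have hc : Filter.Tendsto (fun y : ℝ => |y| ^ p) (nhds 0) (nhds (|(0:ℝ)| ^ p)) := by
        apply ((Real.continuousAt_rpow_const _ _ (Or.inr hp.le)).comp continuous_abs.continuousAt)
      rw [abs_zero, Real.zero_rpow hp.ne'] at hc ⊢
      rw [mul_zero]
      exact hc.mono_left nhdsWithin_le_nhds
    apply hlim.congr'
    filter_upwards [self_mem_nhdsWithin] with y hy
    exact (hslope y hy).symm
  · have h1 : HasDerivAt (fun y : ℝ => y ^ p) (p * x ^ (p - 1)) x :=
      Real.hasDerivAt_rpow_const (Or.inl hx.ne')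
    have h2 := h1.mul (hasDerivAt_id x)
    have heq : (fun y : ℝ => y ^ p * y) =ᶠ[nhds x] (fun y : ℝ => |y| ^ p * y) := by
      filter_upwards [eventually_gt_nhds hx] with y hy
      rw [abs_of_pos hy]
    have h3 := h2.congr_of_eventuallyEq heq.symm
    refine h3.congr_deriv ?_
    rw [abs_of_pos hx, id_eq]
    have : x ^ (p - 1) * x = x ^ p := by
      rw [← Real.rpow_add_one hx.ne' (p - 1)]; ring_nf
    nlinarith [this]

lemma aux_add_rpow {a b q : ℝ} (ha : 0 ≤ a) (hb : 0 ≤ b) (hq : 0 ≤ q) :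
    (a + b) ^ q ≤ 2 ^ q * (a ^ q + b ^ q) := by
  rcases le_total a b with h | h
  · calc (a + b) ^ q ≤ (2 * b) ^ q := Real.rpow_le_rpow (by linarith) (by linarith) hq
      _ = 2 ^ q * b ^ q := Real.mul_rpow (by norm_num) hb
      _ ≤ 2 ^ q * (a ^ q + b ^ q) := by
          nlinarith [Real.rpow_nonneg ha q, Real.rpow_nonneg hb q,
            Real.rpow_nonneg (by norm_num : (0:ℝ) ≤ 2) q]
  · calc (a + b) ^ q ≤ (2 * a) ^ q := Real.rpow_le_rpow (by linarith) (by linarith) hq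
      _ = 2 ^ q * a ^ q := Real.mul_rpow (by norm_num) ha
      _ ≤ 2 ^ q * (a ^ q + b ^ q) := by
          nlinarith [Real.rpow_nonneg ha q, Real.rpow_nonneg hb q,
            Real.rpow_nonneg (by norm_num : (0:ℝ) ≤ 2) q]

/-- Taylor-type bound for y ↦ |y|^p y -/
lemma aux_taylor {p : ℝ} (hp : 0 < p) (x t : ℝ) :
    abs (|x + t| ^ p * (x + t) - |x| ^ p * x - (1 + p) * |x| ^ p * t) ≤
      (1 + p) * (1 + p) * (2 ^ p * 2 ^ p) *
        (|x| ^ (p - min p 1) * |t| ^ (1 + min p 1) + |t| ^ (1 + p)) := by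
  set m' := min p 1 with hm'
  have hm'0 : 0 < m' := lt_min hp one_pos
  have hm'p : m' ≤ p := min_le_left _ _
  set q := p - m' with hqdef
  have hq0 : 0 ≤ q := by simp [hqdef]; linarith
  set B := (1 + p) * (1 + p) * (2 * |x| + |t|) ^ q * |t| ^ m' with hB
  set F := fun y : ℝ => |y| ^ p * y - (1 + p) * |x| ^ p * y with hF
  have key : ‖F (x + t) - F x‖ ≤ B * ‖(x + t) - x‖ := by
    apply (convex_Icc (min x (x + t)) (max x (x + t))).norm_image_sub_le_of_norm_hasDerivWithin_le
      (f' := fun y => (1 + p) * |y| ^ p - (1 + p) * |x| ^ p * 1)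
    · intro y hy
      exact ((aux_hasDerivAt hp y).sub ((hasDerivAt_id y).const_mul
        ((1 + p) * |x| ^ p))).hasDerivWithinAt
    · intro y hy
      have hy1 : |y - x| ≤ |t| := by
        rcases le_total x (x + t) with hc | hc
        · rw [min_eq_left hc, max_eq_right hc] at hy
          rw [abs_of_nonneg (by linarith [hy.1]), abs_of_nonneg (by linarith : (0:ℝ) ≤ t)]
          linarith [hy.2]
        · rw [min_eq_right hc, max_eq_left hc] at hy
          rw [abs_of_nonpos (by linarith [hy.2]), abs_of_nonpos (by linarith : t ≤ 0)]
          linarith [hy.1]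
      have hy2 : abs (|y| - |x|) ≤ |t| := (abs_abs_sub_abs_le_abs_sub y x).trans hy1
      have hy3 : |y| ≤ |x| + |t| := by
        have := abs_sub_abs_le_abs_sub y x
        linarith [(abs_le.1 hy2).2, this, hy1, abs_nonneg (y - x)]
      show abs ((1 + p) * |y| ^ p - (1 + p) * |x| ^ p * 1) ≤ B
      rw [mul_one, ← mul_sub, abs_mul,
        abs_of_nonneg (by linarith : (0:ℝ) ≤ 1 + p)]
      have hd := aux_pow_diff hp (abs_nonneg y) (abs_nonneg x)
      have hd2 : (|y| + |x|) ^ q * abs (|y| - |x|) ^ m' ≤ (2 * |x| + |t|) ^ q * |t| ^ m' :=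
        mul_le_mul (Real.rpow_le_rpow (by positivity) (by linarith) hq0)
          (Real.rpow_le_rpow (abs_nonneg _) hy2 (le_of_lt hm'0))
          (Real.rpow_nonneg (abs_nonneg _) m') (Real.rpow_nonneg (by positivity) q)
      rw [hB]
      calc (1 + p) * abs (|y| ^ p - |x| ^ p)
          ≤ (1 + p) * ((1 + p) * (|y| + |x|) ^ q * abs (|y| - |x|) ^ m') := by
            have := hd; rw [← hm', ← hqdef] at this
            nlinarith [this]
        _ ≤ (1 + p) * ((1 + p) * ((2 * |x| + |t|) ^ q * |t| ^ m')) := by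
            nlinarith [hd2, Real.rpow_nonneg (abs_nonneg (y-x)) m']
        _ = (1 + p) * (1 + p) * (2 * |x| + |t|) ^ q * |t| ^ m' := by ring
    · exact ⟨min_le_left _ _, le_max_left _ _⟩
    · exact ⟨min_le_right _ _, le_max_right _ _⟩
  have hFeq : F (x + t) - F x
      = |x + t| ^ p * (x + t) - |x| ^ p * x - (1 + p) * |x| ^ p * t := by
    rw [hF]; ring
  rw [hFeq, Real.norm_eq_abs, Real.norm_eq_abs, add_sub_cancel_left] at key
  have hq2 : (2 * |x| + |t|) ^ q ≤ 2 ^ p * 2 ^ p * (|x| ^ q + |t| ^ q) := by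
    calc (2 * |x| + |t|) ^ q ≤ (2 * (|x| + |t|)) ^ q :=
          Real.rpow_le_rpow (by positivity) (by linarith [abs_nonneg t]) hq0
      _ = 2 ^ q * (|x| + |t|) ^ q := Real.mul_rpow (by norm_num) (by positivity)
      _ ≤ 2 ^ q * (2 ^ q * (|x| ^ q + |t| ^ q)) := by
          have := aux_add_rpow (abs_nonneg x) (abs_nonneg t) hq0
          nlinarith [Real.rpow_nonneg (by norm_num : (0:ℝ) ≤ 2) q]
      _ ≤ 2 ^ p * (2 ^ p * (|x| ^ q + |t| ^ q)) := by
          have h2q : (2:ℝ) ^ q ≤ 2 ^ p :=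
            Real.rpow_le_rpow_of_exponent_le one_le_two (by linarith)
          have h2q0 : (0:ℝ) ≤ 2 ^ q := Real.rpow_nonneg (by norm_num) q
          have hs0 : (0:ℝ) ≤ |x| ^ q + |t| ^ q := by positivity
          have hmm := mul_le_mul_of_nonneg_right
            (mul_le_mul h2q h2q h2q0 (Real.rpow_nonneg (by norm_num : (0:ℝ) ≤ 2) p)) hs0
          nlinarith [hmm]
      _ = 2 ^ p * 2 ^ p * (|x| ^ q + |t| ^ q) := by ring
  have e1 : |t| ^ (1 + m') = |t| ^ m' * |t| := by
    rw [Real.rpow_add' (abs_nonneg t) (by positivity), Real.rpow_one, mul_comm]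
  have e2 : |t| ^ (1 + p) = |t| ^ q * (|t| ^ m' * |t|) := by
    rw [← e1, ← Real.rpow_add' (abs_nonneg t) (by rw [hqdef]; intro hcon; nlinarith)]
    congr 1; rw [hqdef]; ring
  have htm0 : (0:ℝ) ≤ |t| ^ m' := Real.rpow_nonneg (abs_nonneg t) m'
  calc abs (|x + t| ^ p * (x + t) - |x| ^ p * x - (1 + p) * |x| ^ p * t) ≤ B * |t| := key
    _ ≤ (1 + p) * (1 + p) * (2 ^ p * 2 ^ p * (|x| ^ q + |t| ^ q)) * |t| ^ m' * |t| := by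
        rw [hB]
        have h1p : (0:ℝ) ≤ (1+p)*(1+p) := by nlinarith
        nlinarith [hq2, mul_le_mul_of_nonneg_right (mul_le_mul_of_nonneg_left hq2 h1p)
          (mul_nonneg htm0 (abs_nonneg t)), abs_nonneg t]
    _ = (1 + p) * (1 + p) * (2 ^ p * 2 ^ p) *
        (|x| ^ q * (|t| ^ m' * |t|) + |t| ^ q * (|t| ^ m' * |t|)) := by ring
    _ = (1 + p) * (1 + p) * (2 ^ p * 2 ^ p) *
        (|x| ^ (p - min p 1) * |t| ^ (1 + min p 1) + |t| ^ (1 + p)) := by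
        rw [e1, e2, ← hm', ← hqdef]

set_option maxHeartbeats 2000000 in
/-- pointwise bounds on the nonlinear terms `G₁`, `G₂`.
Here `ω = √(m²−ε²)`, `V = V̂ + Ṽ`, `U = Û + Ũ`,
`G₁ = −ε⁻² f(ε^{2/k}(V²−ε²U²)) V + |V̂|^{2k} V̂ + (1+2k)|V̂|^{2k} Ṽ + (1/(m+ω) − 1/(2m)) V̂`,
`G₂ = f(ε^{2/k}(V²−ε²U²)) U + (m−ω) Û`, and
`h(ε) = max(H(4Λ²ε^{2/k}), ε^{2k}, ε²)`. -/
theorem stmt2 (n : ℕ) (hn : 1 ≤ n) (m k Λ : ℝ) (hm : 0 < m) (hk : 0 < k) (hΛ : 0 < Λ)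
    (H : ℝ → ℝ) (hHcont : ContinuousOn H (Set.Ici 0))
    (hHmono : MonotoneOn H (Set.Ici 0)) (hH0 : H 0 = 0)
    (hHnonneg : ∀ s ∈ Set.Ici (0 : ℝ), 0 ≤ H s)
    (f : ℝ → ℝ) (hfc : Continuous f)
    (hf1 : ∀ τ : ℝ, |f τ| ≤ 2 * |τ| ^ k)
    (hf2 : ∀ τ : ℝ, |f τ - |τ| ^ k| ≤ |τ| ^ k * H |τ|) :
    ∃ C : ℝ, ∀ ε ∈ Set.Ioo (0 : ℝ) m, ∀ Vh Uh Vt Ut : ℝ,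
      |Vh| ≤ Λ → m * |Uh| ≤ Λ → |Vt| + m * |Ut| ≤ Λ →
      (|(-(ε ^ (-2 : ℝ)) * f (ε ^ (2 / k) * ((Vh + Vt) ^ 2 - ε ^ 2 * (Uh + Ut) ^ 2)) * (Vh + Vt)
            + |Vh| ^ (2 * k) * Vh + (1 + 2 * k) * |Vh| ^ (2 * k) * Vt
            + (1 / (m + Real.sqrt (m ^ 2 - ε ^ 2)) - 1 / (2 * m)) * Vh)|
          ≤ C * (max (H (4 * Λ ^ 2 * ε ^ (2 / k))) (max (ε ^ (2 * k)) (ε ^ 2))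
                  * (|Vh + Vt| + |Uh + Ut|) ^ (1 + 2 * k)
                + |Vh| ^ (1 + 2 * k - min 2 (1 + 2 * k)) * |Vt| ^ (min 2 (1 + 2 * k))
                + |Vt| ^ (1 + 2 * k) + ε ^ 2 * |Vh|)) ∧
      |(f (ε ^ (2 / k) * ((Vh + Vt) ^ 2 - ε ^ 2 * (Uh + Ut) ^ 2)) * (Uh + Ut)
            + (m - Real.sqrt (m ^ 2 - ε ^ 2)) * Uh)|
        ≤ C * (ε ^ 2 * |(Vh + Vt) ^ 2 - ε ^ 2 * (Uh + Ut) ^ 2| ^ k * |Uh + Ut|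
              + ε ^ 2 * |Uh|) := by
  set Mm := max 1 m with hMm
  have hMm1 : (1:ℝ) ≤ Mm := le_max_left _ _
  have hMmm : m ≤ Mm := le_max_right _ _
  have hMm0 : (0:ℝ) < Mm := lt_of_lt_of_le one_pos hMm1
  set C1 := ((Mm ^ 2 : ℝ)) ^ (k : ℝ) with hC1def
  set C2 := (1 + k) * ((2 * Mm ^ 2 : ℝ)) ^ (k - min k 1) with hC2def
  set C3 := (1 + 2*k) * (1 + 2*k) * ((2:ℝ) ^ (2*k) * (2:ℝ) ^ (2*k)) with hC3def
  set C4 := 1 / (2 * m ^ 3) with hC4def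
  have hC10 : 0 ≤ C1 := Real.rpow_nonneg (by positivity) _
  have hC20 : 0 ≤ C2 := mul_nonneg (by linarith) (Real.rpow_nonneg (by positivity) _)
  have hC30 : 0 ≤ C3 := by positivity
  have hC40 : 0 ≤ C4 := by positivity
  refine ⟨C1 + C2 + C3 + C4 + 2 + 1/m, ?_⟩
  rintro ε ⟨hε0, hεm⟩ Vh Uh Vt Ut hVh hUh hVU
  set V := Vh + Vt with hVdef
  set U := Uh + Ut with hUdef
  set D := V ^ 2 - ε ^ 2 * U ^ 2 with hDdef
  set τ := ε ^ (2/k) * D with hτdef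
  set ω := Real.sqrt (m ^ 2 - ε ^ 2) with hωdef
  set S := |V| + |U| with hSdef
  set hh := max (H (4 * Λ ^ 2 * ε ^ (2/k))) (max (ε ^ (2*k)) (ε ^ 2)) with hhdef
  -- basic bounds
  have hVt : |Vt| ≤ Λ := by
    linarith only [hVU, mul_nonneg hm.le (abs_nonneg Ut)]
  have habsV : |V| ≤ 2 * Λ := (abs_add_le Vh Vt).trans (by linarith only [hVh, hVt])
  have hmU : m * |U| ≤ 2 * Λ := by
    have h := abs_add_le Uh Ut
    rw [← hUdef] at h
    have h2 := mul_le_mul_of_nonneg_left h hm.le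
    rw [mul_add] at h2
    linarith only [h2, hUh, hVU, abs_nonneg Vt]
  have hεU : ε * |U| ≤ 2 * Λ := by
    have h := mul_le_mul_of_nonneg_right hεm.le (abs_nonneg U)
    linarith only [h, hmU]
  have hV2 : V ^ 2 ≤ 4 * Λ ^ 2 := by
    have h := mul_le_mul habsV habsV (abs_nonneg V) (by linarith only [hΛ])
    rw [← abs_mul, abs_mul_self] at h
    nlinarith only [h]
  have hU2 : ε ^ 2 * U ^ 2 ≤ 4 * Λ ^ 2 := by
    have h := mul_le_mul hεU hεU (by positivity) (by linarith only [hΛ])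
    nlinarith only [h, sq_abs U]
  have hU20 : 0 ≤ ε ^ 2 * U ^ 2 := by positivity
  have hDabs : |D| ≤ 4 * Λ ^ 2 := by
    rw [abs_le]
    constructor <;> [linarith only [hDdef, sq_nonneg V, hU2]; linarith only [hDdef, hV2, hU20]]
  have hS0 : (0:ℝ) ≤ S := by positivity
  have hVS : |V| ≤ S := by rw [hSdef]; linarith only [abs_nonneg U]
  have hUS : |U| ≤ S := by rw [hSdef]; linarith only [abs_nonneg V]
  have hMS1 : V ^ 2 ≤ Mm ^ 2 * S ^ 2 := by
    have h1 : |V| ^ 2 ≤ S ^ 2 := pow_le_pow_left₀ (abs_nonneg V) hVS 2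
    rw [sq_abs] at h1
    have h2 : (1:ℝ) ≤ Mm ^ 2 := by nlinarith only [hMm1]
    have h3 := mul_le_mul_of_nonneg_right h2 (sq_nonneg S)
    linarith only [h1, h3]
  have hMS2 : ε ^ 2 * U ^ 2 ≤ Mm ^ 2 * S ^ 2 := by
    have h1 : |U| ^ 2 ≤ S ^ 2 := pow_le_pow_left₀ (abs_nonneg U) hUS 2
    rw [sq_abs] at h1
    have h2 : ε ^ 2 ≤ Mm ^ 2 := by nlinarith only [hε0.le, hεm.le, hMmm]
    exact mul_le_mul h2 h1 (sq_nonneg U) (by positivity)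
  have hDS : |D| ≤ Mm ^ 2 * S ^ 2 := by
    rw [abs_le]
    constructor <;> [linarith only [hDdef, sq_nonneg V, hMS2]; linarith only [hDdef, hMS1, hU20]]
  -- rpow facts
  have hε2k : (0:ℝ) < ε ^ ((2:ℝ)/k) := Real.rpow_pos_of_pos hε0 _
  have hτabs : |τ| = ε ^ ((2:ℝ)/k) * |D| := by rw [hτdef, abs_mul, abs_of_pos hε2k]
  have hpow : (ε ^ ((2:ℝ)/k)) ^ (k:ℝ) = ε ^ 2 := by
    rw [← Real.rpow_natCast ε 2, ← Real.rpow_mul hε0.le]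
    congr 1
    field_simp
    norm_num
  have hτk : |τ| ^ (k:ℝ) = ε ^ 2 * |D| ^ (k:ℝ) := by
    rw [hτabs, Real.mul_rpow hε2k.le (abs_nonneg D), hpow]
  have hεinv : ε ^ (-2:ℝ) * ε ^ 2 = 1 := by
    rw [← Real.rpow_natCast ε 2, ← Real.rpow_add hε0]
    norm_num
  have hid : ε ^ (-2:ℝ) * |τ| ^ (k:ℝ) = |D| ^ (k:ℝ) := by
    rw [hτk, ← mul_assoc, hεinv, one_mul]
  have hτle : |τ| ≤ 4 * Λ ^ 2 * ε ^ ((2:ℝ)/k) := by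
    rw [hτabs]
    have h := mul_le_mul_of_nonneg_left hDabs hε2k.le
    linarith only [h]
  have hHτ : H |τ| ≤ hh := by
    refine le_trans ?_ (le_max_left _ _)
    exact hHmono (Set.mem_Ici.2 (abs_nonneg τ)) (Set.mem_Ici.2 (by positivity)) hτle
  have hHτ0 : 0 ≤ H |τ| := hHnonneg _ (Set.mem_Ici.2 (abs_nonneg τ))
  have hh0 : (0:ℝ) ≤ hh := hHτ0.trans hHτ
  have hsqV : ((V ^ 2 : ℝ)) ^ (k:ℝ) = |V| ^ (2*k) := by
    rw [← sq_abs, ← Real.rpow_natCast |V| 2, ← Real.rpow_mul (abs_nonneg V)]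
    norm_num
  have hSsq : ∀ q : ℝ, ((S ^ 2 : ℝ)) ^ (q:ℝ) = S ^ (2*q) := by
    intro q
    rw [← Real.rpow_natCast S 2, ← Real.rpow_mul hS0]
    norm_num
  have hSpow : S ^ (1 + 2*k) = S ^ (2*k) * S := by
    rw [Real.rpow_of_add_eq hS0 (by positivity) (by ring : 2*k + 1 = 1 + 2*k), Real.rpow_one]
  have hDk : |D| ^ (k:ℝ) ≤ C1 * S ^ (2*k) := by
    calc |D| ^ (k:ℝ) ≤ (Mm ^ 2 * S ^ 2) ^ (k:ℝ) :=
          Real.rpow_le_rpow (abs_nonneg D) hDS hk.le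
      _ = C1 * S ^ (2*k) := by
          rw [Real.mul_rpow (by positivity) (by positivity), hSsq k]
  -- ω facts
  have hω0 : 0 ≤ ω := Real.sqrt_nonneg _
  have hωm : ω ≤ m := by
    rw [hωdef]
    calc Real.sqrt (m^2 - ε^2) ≤ Real.sqrt (m^2) := Real.sqrt_le_sqrt (by linarith only [sq_nonneg ε])
      _ = m := Real.sqrt_sq hm.le
  have hmω : m - ω ≤ ε ^ 2 / m := by
    have h1 : m - ε ^ 2 / m ≤ ω := by
      rw [hωdef]
      have hx0 : 0 ≤ m - ε ^ 2 / m := by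
        rw [sub_nonneg, div_le_iff₀ hm]
        nlinarith only [hεm, hε0]
      rw [show m - ε^2/m = Real.sqrt ((m - ε^2/m)^2) from (Real.sqrt_sq hx0).symm]
      apply Real.sqrt_le_sqrt
      have hm2 : (0:ℝ) < m^2 := by positivity
      have h2 : (m - ε^2/m)^2 = m^2 - 2*ε^2 + ε^2*ε^2/m^2 := by field_simp; ring
      have h3 : ε^2*ε^2/m^2 ≤ ε^2 := by
        rw [div_le_iff₀ hm2]
        have h4 : ε^2 ≤ m^2 := by nlinarith only [hεm, hε0]
        exact mul_le_mul_of_nonneg_left h4 (sq_nonneg ε)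
      linarith only [h2, h3]
    linarith only [h1]
  have h1m0 : (0:ℝ) < 1/m := by positivity
  have hmk0 : (0:ℝ) ≤ min k 1 := le_min hk.le zero_le_one
  have hkmk : (0:ℝ) ≤ k - min k 1 := sub_nonneg.2 (min_le_left k 1)
  constructor
  · -- G1 bound
    have keyeq : -ε ^ (-2:ℝ) * f τ * V + |Vh| ^ (2*k) * Vh
          + (1 + 2*k) * |Vh| ^ (2*k) * Vt + (1/(m + ω) - 1/(2*m)) * Vh
        = (-(ε ^ (-2:ℝ)) * (f τ - |τ| ^ (k:ℝ)) * V)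
          + (-((|D| ^ (k:ℝ) - |V| ^ (2*k)) * V))
          + (-(|V| ^ (2*k) * V - |Vh| ^ (2*k) * Vh - (1 + 2*k) * |Vh| ^ (2*k) * Vt))
          + (1/(m + ω) - 1/(2*m)) * Vh := by
      linear_combination (-V) * hid
    have habs3 : |(-(ε ^ (-2:ℝ)) * (f τ - |τ| ^ (k:ℝ)) * V)
          + (-((|D| ^ (k:ℝ) - |V| ^ (2*k)) * V))
          + (-(|V| ^ (2*k) * V - |Vh| ^ (2*k) * Vh - (1 + 2*k) * |Vh| ^ (2*k) * Vt))
          + (1/(m + ω) - 1/(2*m)) * Vh|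
        ≤ |(-(ε ^ (-2:ℝ)) * (f τ - |τ| ^ (k:ℝ)) * V)|
          + |(-((|D| ^ (k:ℝ) - |V| ^ (2*k)) * V))|
          + |(-(|V| ^ (2*k) * V - |Vh| ^ (2*k) * Vh - (1 + 2*k) * |Vh| ^ (2*k) * Vt))|
          + |(1/(m + ω) - 1/(2*m)) * Vh| := by
      refine (abs_add_le _ _).trans (add_le_add_left ?_ _)
      refine (abs_add_le _ _).trans (add_le_add_left ?_ _)
      exact abs_add_le _ _
    -- A1 bound
    have hA1b : |(-(ε ^ (-2:ℝ)) * (f τ - |τ| ^ (k:ℝ)) * V)| ≤ C1 * (hh * S ^ (1 + 2*k)) := by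
      have e : |(-(ε ^ (-2:ℝ)) * (f τ - |τ| ^ (k:ℝ)) * V)|
          = ε ^ (-2:ℝ) * |f τ - |τ| ^ (k:ℝ)| * |V| := by
        rw [abs_mul, abs_mul, abs_neg, abs_of_pos (Real.rpow_pos_of_pos hε0 _)]
      rw [e]
      have hC1S : (0:ℝ) ≤ C1 * S ^ (2*k) := mul_nonneg hC10 (Real.rpow_nonneg hS0 _)
      calc ε ^ (-2:ℝ) * |f τ - |τ| ^ (k:ℝ)| * |V|
          ≤ ε ^ (-2:ℝ) * (|τ| ^ (k:ℝ) * H |τ|) * |V| :=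
            mul_le_mul_of_nonneg_right (mul_le_mul_of_nonneg_left (hf2 τ)
              (le_of_lt (Real.rpow_pos_of_pos hε0 _))) (abs_nonneg V)
        _ = |D| ^ (k:ℝ) * H |τ| * |V| := by rw [← hid]; ring
        _ ≤ (C1 * S ^ (2*k)) * hh * S :=
            mul_le_mul (mul_le_mul hDk hHτ hHτ0 hC1S) hVS (abs_nonneg V)
              (mul_nonneg hC1S hh0)
        _ = C1 * (hh * S ^ (1 + 2*k)) := by rw [hSpow]; ring
    -- A2 bound
    have hA2b : |(-((|D| ^ (k:ℝ) - |V| ^ (2*k)) * V))| ≤ C2 * (hh * S ^ (1 + 2*k)) := by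
      rw [abs_neg, abs_mul]
      have hpd := aux_pow_diff hk (abs_nonneg D) (sq_nonneg V)
      rw [hsqV] at hpd
      have hUsq : U ^ 2 ≤ S ^ 2 := by
        have h1 := pow_le_pow_left₀ (abs_nonneg U) hUS 2
        rw [sq_abs] at h1; exact h1
      have b1 : |(|D| - V ^ 2)| ≤ ε ^ 2 * S ^ 2 := by
        have h := abs_abs_sub_abs_le_abs_sub D (V ^ 2)
        rw [abs_of_nonneg (sq_nonneg V)] at h
        have e : D - V ^ 2 = -(ε ^ 2 * U ^ 2) := by rw [hDdef]; ring
        rw [e, abs_neg, abs_of_nonneg hU20] at h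
        have h2 := mul_le_mul_of_nonneg_left hUsq (sq_nonneg ε)
        linarith only [h, h2]
      have b2 : |D| + V ^ 2 ≤ 2 * Mm ^ 2 * S ^ 2 := by linarith only [hDS, hMS1]
      have h1k : (0:ℝ) ≤ 1 + k := by linarith only [hk.le]
      have hEhh : ε ^ (2 * min k 1) ≤ hh := by
        rcases le_total k 1 with h | h
        · rw [min_eq_left h]
          exact le_trans (le_max_left _ _) (le_max_right _ _)
        · rw [min_eq_right h, mul_one]
          have e : ε ^ (2:ℝ) = ε ^ (2:ℕ) := by
            rw [← Real.rpow_natCast ε 2]; norm_num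
          rw [e]
          exact le_trans (le_max_right _ _) (le_max_right _ _)
      have hne : 2*(k - min k 1) + 2 * min k 1 ≠ 0 := by
        rw [show 2*(k - min k 1) + 2 * min k 1 = 2*k by ring]
        positivity
      have hSsplit : S ^ (2*(k - min k 1)) * S ^ (2 * min k 1) * S = S ^ (1 + 2*k) := by
        rw [← Real.rpow_add' hS0 hne,
          show 2*(k - min k 1) + 2 * min k 1 = 2*k by ring, ← hSpow]
      calc |(|D| ^ (k:ℝ) - |V| ^ (2*k))| * |V|
          ≤ ((1 + k) * (|D| + V ^ 2) ^ (k - min k 1) * |(|D| - V ^ 2)| ^ (min k 1)) * |V| :=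
            mul_le_mul_of_nonneg_right hpd (abs_nonneg V)
        _ ≤ ((1 + k) * (2 * Mm ^ 2 * S ^ 2) ^ (k - min k 1) * (ε ^ 2 * S ^ 2) ^ (min k 1)) * S := by
            refine mul_le_mul (mul_le_mul (mul_le_mul_of_nonneg_left
              (Real.rpow_le_rpow (by positivity) b2 hkmk) h1k)
              (Real.rpow_le_rpow (abs_nonneg _) b1 hmk0)
              (Real.rpow_nonneg (abs_nonneg _) _) ?_) hVS (abs_nonneg V) ?_
            · exact mul_nonneg h1k (Real.rpow_nonneg (by positivity) _)
            · exact mul_nonneg (mul_nonneg h1k (Real.rpow_nonneg (by positivity) _))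
                (Real.rpow_nonneg (by positivity) _)
        _ = C2 * (ε ^ (2 * min k 1) * S ^ (1 + 2*k)) := by
            rw [Real.mul_rpow (by positivity) (sq_nonneg S),
              Real.mul_rpow (sq_nonneg ε) (sq_nonneg S), hSsq (k - min k 1), hSsq (min k 1),
              show ((ε ^ 2 : ℝ)) ^ (min k 1) = ε ^ (2 * min k 1) by
                rw [← Real.rpow_natCast ε 2, ← Real.rpow_mul hε0.le]; norm_num,
              ← hSsplit, hC2def]
            ring
        _ ≤ C2 * (hh * S ^ (1 + 2*k)) := by
            refine mul_le_mul_of_nonneg_left (mul_le_mul_of_nonneg_right hEhh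
              (Real.rpow_nonneg hS0 _)) hC20
    -- A3 bound
    have hA3b : |(-(|V| ^ (2*k) * V - |Vh| ^ (2*k) * Vh - (1 + 2*k) * |Vh| ^ (2*k) * Vt))|
        ≤ C3 * (|Vh| ^ (1 + 2*k - min 2 (1 + 2*k)) * |Vt| ^ (min 2 (1 + 2*k))
            + |Vt| ^ (1 + 2*k)) := by
      rw [abs_neg]
      have e1 : 2*k - min (2*k) 1 = 1 + 2*k - min 2 (1 + 2*k) := by
        rcases le_total (2*k) 1 with h | h
        · rw [min_eq_left h, min_eq_right (by linarith only [h] : 1 + 2*k ≤ 2)]; ring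
        · rw [min_eq_right h, min_eq_left (by linarith only [h] : (2:ℝ) ≤ 1 + 2*k)]; ring
      have e2 : 1 + min (2*k) 1 = min 2 (1 + 2*k) := by
        rcases le_total (2*k) 1 with h | h
        · rw [min_eq_left h, min_eq_right (by linarith only [h] : 1 + 2*k ≤ 2)]
        · rw [min_eq_right h, min_eq_left (by linarith only [h] : (2:ℝ) ≤ 1 + 2*k)]
          norm_num
      rw [← e1, ← e2, hC3def, hVdef]
      have ht := aux_taylor (p := 2*k) (by positivity) Vh Vt
      convert ht using 3 <;> first | ring | norm_num
    -- A4 bound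
    have hA4b : |(1/(m + ω) - 1/(2*m)) * Vh| ≤ C4 * (ε ^ 2 * |Vh|) := by
      have hmω0 : (0:ℝ) < m + ω := by linarith only [hm, hω0]
      have heq : 1/(m + ω) - 1/(2*m) = (m - ω)/((2*m)*(m + ω)) := by
        field_simp
        ring
      rw [abs_mul, heq, abs_of_nonneg (div_nonneg (by linarith only [hωm]) (by positivity))]
      have hdb : (2*m)*m ≤ (2*m)*(m + ω) := by nlinarith only [hm, hω0]
      have hd0 : (0:ℝ) < (2*m)*m := by positivity
      have hstep : (m - ω)/((2*m)*(m + ω)) ≤ (ε ^ 2/m)/((2*m)*m) :=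
        div_le_div₀ (by positivity) hmω hd0 hdb
      have heq2 : (ε ^ 2/m)/((2*m)*m) = C4 * ε ^ 2 := by
        rw [hC4def]; field_simp
      calc (m - ω)/((2*m)*(m + ω)) * |Vh| ≤ ((ε ^ 2/m)/((2*m)*m)) * |Vh| :=
            mul_le_mul_of_nonneg_right hstep (abs_nonneg Vh)
        _ = C4 * (ε ^ 2 * |Vh|) := by rw [heq2]; ring
    -- combine
    rw [keyeq]
    have hX0 : (0:ℝ) ≤ hh * S ^ (1 + 2*k) := mul_nonneg hh0 (Real.rpow_nonneg hS0 _)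
    have hT20 : (0:ℝ) ≤ |Vh| ^ (1 + 2*k - min 2 (1 + 2*k)) * |Vt| ^ (min 2 (1 + 2*k)) :=
      mul_nonneg (Real.rpow_nonneg (abs_nonneg _) _) (Real.rpow_nonneg (abs_nonneg _) _)
    have hT30 : (0:ℝ) ≤ |Vt| ^ (1 + 2*k) := Real.rpow_nonneg (abs_nonneg _) _
    have hY0 : (0:ℝ) ≤ ε ^ 2 * |Vh| := by positivity
    have qX := mul_le_mul_of_nonneg_right
      (show C1 + C2 ≤ C1 + C2 + C3 + C4 + 2 + 1/m by linarith only [hC30, hC40, h1m0]) hX0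
    have qT2 := mul_le_mul_of_nonneg_right
      (show C3 ≤ C1 + C2 + C3 + C4 + 2 + 1/m by linarith only [hC10, hC20, hC40, h1m0]) hT20
    have qT3 := mul_le_mul_of_nonneg_right
      (show C3 ≤ C1 + C2 + C3 + C4 + 2 + 1/m by linarith only [hC10, hC20, hC40, h1m0]) hT30
    have qY := mul_le_mul_of_nonneg_right
      (show C4 ≤ C1 + C2 + C3 + C4 + 2 + 1/m by linarith only [hC10, hC20, hC30, h1m0]) hY0
    linarith only [habs3, hA1b, hA2b, hA3b, hA4b, qX, qT2, qT3, qY]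
  · -- G2 bound
    have hG2a : |f τ * U + (m - ω) * Uh| ≤ 2 * (ε ^ 2 * |D| ^ (k:ℝ)) * |U| + (ε ^ 2/m) * |Uh| := by
      calc |f τ * U + (m - ω) * Uh| ≤ |f τ * U| + |(m - ω) * Uh| := abs_add_le _ _
        _ = |f τ| * |U| + (m - ω) * |Uh| := by
            rw [abs_mul, abs_mul, abs_of_nonneg (by linarith only [hωm] : (0:ℝ) ≤ m - ω)]
        _ ≤ 2 * (ε ^ 2 * |D| ^ (k:ℝ)) * |U| + (ε ^ 2/m) * |Uh| := by
            have g1 := mul_le_mul_of_nonneg_right (hf1 τ) (abs_nonneg U)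
            rw [hτk] at g1
            have g2 := mul_le_mul_of_nonneg_right hmω (abs_nonneg Uh)
            linarith only [g1, g2]
    have t1 : (0:ℝ) ≤ ε ^ 2 * |D| ^ (k:ℝ) * |U| := by positivity
    have t2 : (0:ℝ) ≤ ε ^ 2 * |Uh| := by positivity
    have q1 := mul_le_mul_of_nonneg_right
      (show (2:ℝ) ≤ C1 + C2 + C3 + C4 + 2 + 1/m by linarith only [hC10, hC20, hC30, hC40, h1m0]) t1
    have q2 := mul_le_mul_of_nonneg_right
      (show 1/m ≤ C1 + C2 + C3 + C4 + 2 + 1/m by linarith only [hC10, hC20, hC30, hC40]) t2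
    have e3 : (ε ^ 2/m) * |Uh| = (1/m) * (ε ^ 2 * |Uh|) := by ring
    rw [e3] at hG2a
    linarith only [hG2a, q1, q2]
end

section
/- Let n ≥ 1 be an integer, m > 0, k > 0, ε ∈ (0,m), ω = √(m²−ε²), and let f: ℝ → ℝ be continuous. Let V, U: ℝ → ℝ be continuous, with V even and U odd (so U(0) = 0), differentiable on ℝ∖{0}, and suppose that for all t ≠ 0 one has U'(t) + ((n−1)/t) U(t) + V(t)/(m+ω) = ε^{−2} f(ε^{2/k}(V(t)² − ε²U(t)²)) V(t) and V'(t) + (m+ω) U(t) = f(ε^{2/k}(V(t)² − ε²U(t)²)) U(t). Then V and U are continuously differentiable on all of ℝ, and the function t ↦ U(t)/t (defined for t ≠ 0) extends to a continuous function on ℝ. Moreover, if there is C < ∞ with |V(t)| + |U(t)| ≤ C for all t ∈ ℝ, then V', U', and t ↦ U(t)/t are bounded on ℝ. -/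
open Set Filter Topology intervalIntegral

set_option maxHeartbeats 2000000 in
/-- regularity of solutions of the rescaled system, `f ∈ C`:
if `V` (even) and `U` (odd) are continuous on `ℝ`, differentiable away from `0`,
and solve the system there, then `V, U ∈ C¹(ℝ)` and `t ↦ U(t)/t` extends
continuously to `ℝ`; moreover, if `|V| + |U|` is bounded then so are
`V'`, `U'` and `U(t)/t`. -/
theorem stmt5 (n : ℕ) (hn : 1 ≤ n) (m k ε : ℝ) (hm : 0 < m) (hk : 0 < k)
    (hε : ε ∈ Set.Ioo (0 : ℝ) m) (ω : ℝ) (hω : ω = Real.sqrt (m ^ 2 - ε ^ 2))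
    (f : ℝ → ℝ) (hf : Continuous f)
    (V U : ℝ → ℝ) (hVc : Continuous V) (hUc : Continuous U)
    (hVeven : ∀ t, V (-t) = V t) (hUodd : ∀ t, U (-t) = -U t)
    (hVd : ∀ t : ℝ, t ≠ 0 → DifferentiableAt ℝ V t)
    (hUd : ∀ t : ℝ, t ≠ 0 → DifferentiableAt ℝ U t)
    (heq1 : ∀ t : ℝ, t ≠ 0 →
      deriv U t + ((n : ℝ) - 1) / t * U t + V t / (m + ω)
        = ε ^ (-2 : ℝ) * f (ε ^ (2 / k) * (V t ^ 2 - ε ^ 2 * U t ^ 2)) * V t)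
    (heq2 : ∀ t : ℝ, t ≠ 0 →
      deriv V t + (m + ω) * U t
        = f (ε ^ (2 / k) * (V t ^ 2 - ε ^ 2 * U t ^ 2)) * U t) :
    ContDiff ℝ 1 V ∧ ContDiff ℝ 1 U ∧
      (∃ Hc : ℝ → ℝ, Continuous Hc ∧ ∀ t : ℝ, t ≠ 0 → Hc t = U t / t) ∧
      ((∃ C : ℝ, ∀ t, |V t| + |U t| ≤ C) →
        ∃ C' : ℝ, ∀ t : ℝ,
          |deriv V t| ≤ C' ∧ |deriv U t| ≤ C' ∧ (t ≠ 0 → |U t / t| ≤ C')) := by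
  obtain ⟨hε0, hεm⟩ := hε
  have hω0 : 0 ≤ ω := hω ▸ Real.sqrt_nonneg _
  have hmω : 0 < m + ω := by linarith
  set a : ℝ → ℝ := fun t => ε ^ (2 / k) * (V t ^ 2 - ε ^ 2 * U t ^ 2) with hadef
  have hat : ∀ t, a t = ε ^ (2 / k) * (V t ^ 2 - ε ^ 2 * U t ^ 2) := fun t => rfl
  have hac : Continuous a := by
    rw [hadef]
    exact continuous_const.mul ((hVc.pow 2).sub (continuous_const.mul (hUc.pow 2)))
  set g : ℝ → ℝ := fun t => f (a t) * U t - (m + ω) * U t with hgdef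
  have hgt : ∀ t, g t = f (a t) * U t - (m + ω) * U t := fun t => rfl
  have hgc : Continuous g := by
    rw [hgdef]; exact ((hf.comp hac).mul hUc).sub (continuous_const.mul hUc)
  set h : ℝ → ℝ := fun t => ε ^ (-2 : ℝ) * f (a t) * V t - V t / (m + ω) with hhdef
  have hht : ∀ t, h t = ε ^ (-2 : ℝ) * f (a t) * V t - V t / (m + ω) := fun t => rfl
  have hhc : Continuous h := by
    rw [hhdef]
    exact ((continuous_const.mul (hf.comp hac)).mul hVc).sub (hVc.div_const _)
  have hU0 : U 0 = 0 := by have := hUodd 0; simp only [neg_zero] at this; linarith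
  -- derivative identities
  have hdV : ∀ t : ℝ, t ≠ 0 → deriv V t = g t := by
    intro t ht
    have := heq2 t ht
    rw [hgt, hat]
    linarith
  have hdU : ∀ t : ℝ, t ≠ 0 → deriv U t = h t - ((n : ℝ) - 1) / t * U t := by
    intro t ht
    have := heq1 t ht
    rw [hht, hat]
    linarith
  have hVg : ∀ t : ℝ, t ≠ 0 → HasDerivAt V (g t) t := fun t ht =>
    hdV t ht ▸ (hVd t ht).hasDerivAt
  have hVall : ∀ t, HasDerivAt V (g t) t := by
    intro t
    rcases eq_or_ne t 0 with rfl | ht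
    · exact hasDerivAt_of_hasDerivAt_of_ne hVg hVc.continuousAt hgc.continuousAt
    · exact hVg t ht
  -- the exponent
  set p : ℕ := n - 1 with hpdef
  have hnp : (p : ℝ) + 1 = (n : ℝ) := by
    rw [hpdef]
    have : n - 1 + 1 = n := Nat.sub_add_cancel hn
    exact_mod_cast congrArg (Nat.cast (R := ℝ)) this
  have hn0 : (0 : ℝ) < (n : ℝ) := by exact_mod_cast hn
  -- derivative of t^p * U t away from 0
  have key : ∀ x : ℝ, x ≠ 0 → HasDerivAt (fun s => s ^ p * U s) (x ^ p * h x) x := by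
    intro x hx
    have h1 := (hasDerivAt_pow p x).mul (hUd x hx).hasDerivAt
    have h2 : (p : ℝ) * x ^ (p - 1) * U x + x ^ p * deriv U x = x ^ p * h x := by
      have hhx : h x = deriv U x + ((n : ℝ) - 1) / x * U x := by
        rw [hdU x hx]; ring
      have hn1 : (n : ℝ) - 1 = (p : ℝ) := by rw [← hnp]; ring
      rw [hhx, hn1]
      rcases Nat.eq_zero_or_pos p with hp0 | hp
      · rw [hp0]; simp
      · have hxp : x ^ p = x ^ (p - 1) * x := by
          conv_lhs => rw [← Nat.sub_add_cancel hp]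
          rw [pow_succ]
        rw [hxp]
        field_simp
        ring
    exact h2 ▸ h1
  -- integral representation for t > 0
  have hqint : ∀ t : ℝ, IntervalIntegrable (fun s => s ^ p * h s) MeasureTheory.volume 0 t :=
    fun t => ((continuous_pow p).mul hhc).intervalIntegrable 0 t
  have hrep : ∀ t : ℝ, 0 < t → t ^ p * U t = ∫ s in (0:ℝ)..t, s ^ p * h s := by
    intro t ht
    have := intervalIntegral.integral_eq_sub_of_hasDerivAt_of_le ht.le
      (((continuous_pow p).mul hUc).continuousOn)
      (fun x hx => key x (ne_of_gt hx.1)) (hqint t)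
    rw [this]; simp [hU0]
  -- the limit of U t / t from the right
  have hL : Tendsto (fun t => U t / t) (𝓝[>] (0:ℝ)) (𝓝 (h 0 / n)) := by
    rw [Metric.tendsto_nhdsWithin_nhds]
    intro δ hδ
    obtain ⟨r, hr, hcont⟩ := Metric.continuousAt_iff.1 hhc.continuousAt (δ / 2) (by linarith)
    refine ⟨r, hr, fun t htI hts => ?_⟩
    have ht0 : 0 < t := htI
    have htr : t < r := by
      rw [Real.dist_eq, sub_zero, abs_of_pos ht0] at hts; exact hts
    have htp1 : (0 : ℝ) < t ^ (p + 1) := pow_pos ht0 _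
    set I := ∫ s in (0:ℝ)..t, s ^ p * (h s - h 0) with hIdef
    have hIeq : I = (∫ s in (0:ℝ)..t, s ^ p * h s) - h 0 * (t ^ (p + 1) / ((p : ℝ) + 1)) := by
      rw [hIdef]
      have e1 : ∀ s : ℝ, s ^ p * (h s - h 0) = s ^ p * h s - s ^ p * h 0 := fun s => by ring
      simp_rw [e1]
      rw [intervalIntegral.integral_sub (g := fun s : ℝ => s ^ p * h 0) (hqint t)
        (((continuous_pow p).mul continuous_const).intervalIntegrable 0 t),
        intervalIntegral.integral_mul_const, integral_pow]
      push_cast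
      ring
    have hmain : U t / t - h 0 / (n : ℝ) = I / t ^ (p + 1) := by
      rw [hIeq, ← hrep t ht0, ← hnp, eq_div_iff htp1.ne']
      have ht' : t ^ (p + 1) = t ^ p * t := pow_succ t p
      have hp1 : (0:ℝ) < (p : ℝ) + 1 := by positivity
      field_simp [ht0.ne']
      ring
    have hIb : |I| ≤ t ^ p * (δ / 2) * t := by
      have := intervalIntegral.norm_integral_le_of_norm_le_const
        (C := t ^ p * (δ / 2)) (f := fun s => s ^ p * (h s - h 0)) (a := 0) (b := t) ?_
      · rw [Real.norm_eq_abs] at this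
        calc |I| ≤ t ^ p * (δ / 2) * |t - 0| := this
          _ = t ^ p * (δ / 2) * t := by rw [sub_zero, abs_of_pos ht0]
      · intro s hs
        rw [Set.uIoc_of_le ht0.le] at hs
        obtain ⟨hs0, hst⟩ := hs
        rw [Real.norm_eq_abs, abs_mul]
        have h1 : |s ^ p| ≤ t ^ p := by
          rw [abs_pow, abs_of_pos hs0]
          exact pow_le_pow_left₀ hs0.le hst p
        have h2 : |h s - h 0| ≤ δ / 2 := by
          have : dist s 0 < r := by
            rw [Real.dist_eq, sub_zero, abs_of_pos hs0]; exact lt_of_le_of_lt hst htr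
          have := hcont this
          rw [Real.dist_eq] at this
          linarith
        exact mul_le_mul h1 h2 (abs_nonneg _) (by positivity)
    have habs : |U t / t - h 0 / (n : ℝ)| = |I| / t ^ (p + 1) := by
      rw [hmain, abs_div, abs_of_pos htp1]
    rw [Real.dist_eq, habs, div_lt_iff₀ htp1]
    calc |I| ≤ t ^ p * (δ / 2) * t := hIb
      _ = (δ / 2) * t ^ (p + 1) := by rw [pow_succ]; ring
      _ < δ * t ^ (p + 1) := by nlinarith
  -- the limit from the left, by oddness
  have hnegmap : Tendsto (fun t : ℝ => -t) (𝓝[<] (0:ℝ)) (𝓝[>] (0:ℝ)) := by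
    apply tendsto_nhdsWithin_of_tendsto_nhds_of_eventually_within
    · exact (continuous_neg.tendsto' 0 0 (by simp)).mono_left nhdsWithin_le_nhds
    · exact eventually_mem_nhdsWithin.mono fun t ht => by
        simp only [Set.mem_Iio] at ht
        simpa using ht
  have hL' : Tendsto (fun t => U t / t) (𝓝[<] (0:ℝ)) (𝓝 (h 0 / n)) := by
    have hcomp := hL.comp hnegmap
    refine hcomp.congr fun t => ?_
    show U (-t) / (-t) = U t / t
    rw [hUodd t, neg_div_neg_eq]
  have hLfull : Tendsto (fun t => U t / t) (𝓝[≠] (0:ℝ)) (𝓝 (h 0 / n)) := by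
    rw [← nhdsLT_sup_nhdsGT, tendsto_sup]
    exact ⟨hL', hL⟩
  -- the continuous extension of U t / t
  set Hc : ℝ → ℝ := fun t => if t = 0 then h 0 / n else U t / t with hHcdef
  have hHceq : ∀ t : ℝ, t ≠ 0 → Hc t = U t / t := fun t ht => if_neg ht
  have hHc0 : Hc 0 = h 0 / n := if_pos rfl
  have hHccont : Continuous Hc := by
    rw [continuous_iff_continuousAt]
    intro x
    rcases eq_or_ne x 0 with rfl | hx
    · rw [ContinuousAt, hHc0, ← nhdsNE_sup_pure, tendsto_sup]
      constructor
      · refine hLfull.congr' (eventually_mem_nhdsWithin.mono fun t ht => ?_)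
        exact (hHceq t ht).symm
      · simpa [hHc0] using tendsto_pure_nhds Hc 0
    · have hco : ContinuousAt (fun t => U t / t) x :=
        hUc.continuousAt.div continuousAt_id hx
      apply hco.congr
      filter_upwards [isOpen_compl_singleton.mem_nhds hx] with t ht
      exact (hHceq t ht).symm
  -- U is C¹
  set GU : ℝ → ℝ := fun t => h t - ((n : ℝ) - 1) * Hc t with hGUdef
  have hGUt : ∀ t, GU t = h t - ((n : ℝ) - 1) * Hc t := fun t => rfl
  have hGUc : Continuous GU := by
    rw [hGUdef]; exact hhc.sub (continuous_const.mul hHccont)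
  have hUg : ∀ t : ℝ, t ≠ 0 → HasDerivAt U (GU t) t := by
    intro t ht
    have : GU t = deriv U t := by
      rw [hGUt, hdU t ht, hHceq t ht]
      ring
    exact this ▸ (hUd t ht).hasDerivAt
  have hUall : ∀ t, HasDerivAt U (GU t) t := by
    intro t
    rcases eq_or_ne t 0 with rfl | ht
    · exact hasDerivAt_of_hasDerivAt_of_ne hUg hUc.continuousAt hGUc.continuousAt
    · exact hUg t ht
  have hderivV : deriv V = g := funext fun t => (hVall t).deriv
  have hderivU : deriv U = GU := funext fun t => (hUall t).deriv
  refine ⟨?_, ?_, ⟨Hc, hHccont, hHceq⟩, ?_⟩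
  · rw [contDiff_one_iff_deriv]
    exact ⟨fun t => (hVall t).differentiableAt, hderivV ▸ hgc⟩
  · rw [contDiff_one_iff_deriv]
    exact ⟨fun t => (hUall t).differentiableAt, hderivU ▸ hGUc⟩
  -- boundedness
  rintro ⟨C, hC⟩
  have hC0 : 0 ≤ C := le_trans (by positivity) (hC 0)
  have hVb : ∀ t, |V t| ≤ C := fun t => le_trans (le_add_of_nonneg_right (abs_nonneg _)) (hC t)
  have hUb : ∀ t, |U t| ≤ C := fun t => le_trans (le_add_of_nonneg_left (abs_nonneg _)) (hC t)
  set R : ℝ := |ε ^ (2 / k)| * (C ^ 2 + ε ^ 2 * C ^ 2) with hRdef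
  have hR0 : 0 ≤ R := by positivity
  have haR : ∀ t, a t ∈ Set.Icc (-R) R := by
    intro t
    have h1 : V t ^ 2 ≤ C ^ 2 := by
      have := abs_le.1 (hVb t); nlinarith
    have h2 : U t ^ 2 ≤ C ^ 2 := by
      have := abs_le.1 (hUb t); nlinarith
    have h3 : |a t| ≤ R := by
      rw [hat, abs_mul, hRdef]
      refine mul_le_mul_of_nonneg_left ?_ (abs_nonneg _)
      have : |V t ^ 2 - ε ^ 2 * U t ^ 2| ≤ |V t ^ 2| + |ε ^ 2 * U t ^ 2| := abs_sub _ _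
      refine this.trans ?_
      rw [abs_of_nonneg (sq_nonneg (V t)), abs_mul,
        abs_of_nonneg (sq_nonneg ε), abs_of_nonneg (sq_nonneg (U t))]
      exact add_le_add h1 (mul_le_mul_of_nonneg_left h2 (sq_nonneg ε))
    exact abs_le.1 h3
  obtain ⟨M, hM⟩ :=
    (isCompact_Icc : IsCompact (Set.Icc (-R) R)).exists_bound_of_continuousOn hf.continuousOn
  have hfb : ∀ t, |f (a t)| ≤ M := fun t => by
    have := hM _ (haR t); rwa [Real.norm_eq_abs] at this
  have hM0 : 0 ≤ M := le_trans (abs_nonneg _) (hfb 0)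
  -- bound for g
  have hgb : ∀ t, |g t| ≤ M * C + (m + ω) * C := by
    intro t
    rw [hgt]
    calc |f (a t) * U t - (m + ω) * U t| ≤ |f (a t) * U t| + |(m + ω) * U t| := abs_sub _ _
      _ = |f (a t)| * |U t| + |m + ω| * |U t| := by rw [abs_mul, abs_mul]
      _ ≤ M * C + (m + ω) * C := by
          rw [abs_of_pos hmω]
          exact add_le_add (mul_le_mul (hfb t) (hUb t) (abs_nonneg _) hM0)
            (mul_le_mul_of_nonneg_left (hUb t) hmω.le)
  -- bound for h
  have hhb : ∀ t, |h t| ≤ |ε ^ (-2 : ℝ)| * M * C + C / (m + ω) := by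
    intro t
    rw [hht]
    calc |ε ^ (-2 : ℝ) * f (a t) * V t - V t / (m + ω)|
        ≤ |ε ^ (-2 : ℝ) * f (a t) * V t| + |V t / (m + ω)| := abs_sub _ _
      _ = |ε ^ (-2 : ℝ)| * |f (a t)| * |V t| + |V t| / |m + ω| := by
          rw [abs_mul, abs_mul, abs_div]
      _ ≤ |ε ^ (-2 : ℝ)| * M * C + C / (m + ω) := by
          rw [abs_of_pos hmω]
          exact add_le_add
            (mul_le_mul (mul_le_mul_of_nonneg_left (hfb t) (abs_nonneg _)) (hVb t)
              (abs_nonneg _) (by positivity))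
            ((div_le_div_iff_of_pos_right hmω).2 (hVb t))
  -- bound for Hc
  obtain ⟨B, hB⟩ :=
    (isCompact_Icc : IsCompact (Set.Icc (-1 : ℝ) 1)).exists_bound_of_continuousOn
      hHccont.continuousOn
  have hHcb : ∀ t, |Hc t| ≤ max B C := by
    intro t
    rcases le_or_gt |t| 1 with htle | htgt
    · have := hB t (abs_le.1 htle)
      rw [Real.norm_eq_abs] at this
      exact this.trans (le_max_left _ _)
    · have ht0 : t ≠ 0 := by
        intro hh; rw [hh] at htgt; simp at htgt; linarith
      rw [hHceq t ht0, abs_div]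
      refine le_trans ?_ (le_max_right B C)
      calc |U t| / |t| ≤ |U t| := div_le_self (abs_nonneg _) htgt.le
        _ ≤ C := hUb t
  -- final constant
  set C' : ℝ := max (M * C + (m + ω) * C)
      (max ((|ε ^ (-2 : ℝ)| * M * C + C / (m + ω)) + |(n : ℝ) - 1| * max B C) (max B C)) with hC'def
  refine ⟨C', fun t => ⟨?_, ?_, fun ht => ?_⟩⟩
  · rw [hderivV]
    exact (hgb t).trans (le_max_left _ _)
  · rw [hderivU]
    have : |GU t| ≤ (|ε ^ (-2 : ℝ)| * M * C + C / (m + ω)) + |(n : ℝ) - 1| * max B C := by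
      rw [hGUt]
      calc |h t - ((n : ℝ) - 1) * Hc t| ≤ |h t| + |((n : ℝ) - 1) * Hc t| := abs_sub _ _
        _ = |h t| + |(n : ℝ) - 1| * |Hc t| := by rw [abs_mul]
        _ ≤ (|ε ^ (-2 : ℝ)| * M * C + C / (m + ω)) + |(n : ℝ) - 1| * max B C := by
            gcongr
            exacts [hhb t, hHcb t]
    exact this.trans ((le_max_left _ _).trans (le_max_right _ _))
  · rw [← hHceq t ht]
    exact (hHcb t).trans ((le_max_right _ _).trans (le_max_right _ _))
end

section
/- Let n ≥ 1 be an integer, m > 0, k > 0, ε ∈ (0,m), ω = √(m²−ε²). Let f: ℝ → ℝ be continuous on ℝ and continuously differentiable on ℝ∖{0}. Let V, U: ℝ → ℝ be continuously differentiable, with V even and U odd, satisfying V(t)² − ε²U(t)² > 0 for all t ∈ ℝ, and suppose that for all t ∈ ℝ one has U'(t) + ((n−1)/t) U(t) + V(t)/(m+ω) = ε^{−2} f(ε^{2/k}(V(t)² − ε²U(t)²)) V(t) and V'(t) + (m+ω) U(t) = f(ε^{2/k}(V(t)² − ε²U(t)²)) U(t), where at t = 0 the quotient U(t)/t is interpreted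 as U'(0). Then V and U are twice continuously differentiable on ℝ, and the function t ↦ U(t)/t (t ≠ 0) extends to a continuously differentiable function on ℝ. -/
open Filter Topology intervalIntegral

lemma keylem (p : ℕ) (R U : ℝ → ℝ) (hR : ContDiff ℝ 1 R) (hU : ContDiff ℝ 1 U)
    (hU0 : U 0 = 0)
    (hd : ∀ t : ℝ, t ≠ 0 → deriv U t = R t - p * (U t / t))
    (hd0 : deriv U 0 = R 0 / (p + 1)) :
    ∃ H : ℝ → ℝ, ContDiff ℝ 1 H ∧ (∀ t : ℝ, t ≠ 0 → H t = U t / t) ∧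
      deriv U = fun t => R t - p * H t := by
  have hRc : Continuous R := hR.continuous
  have hUd : Differentiable ℝ U := hU.differentiable one_ne_zero
  set H : ℝ → ℝ := fun t => if t = 0 then R 0 / (p + 1) else U t / t with hHdef
  -- K t = t^p * U t  has derivative t^p * R t everywhere
  have hK : ∀ t : ℝ, HasDerivAt (fun s => s ^ p * U s) (t ^ p * R t) t := by
    intro t
    have h1 : HasDerivAt (fun s : ℝ => s ^ p * U s)
        ((p : ℝ) * t ^ (p - 1) * U t + t ^ p * deriv U t) t :=
      (hasDerivAt_pow p t).mul (hUd t).hasDerivAt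
    convert h1 using 1
    rcases eq_or_ne t 0 with rfl | ht
    · rcases Nat.eq_zero_or_pos p with rfl | hp
      · simp [hd0]
      · simp [hU0, zero_pow hp.ne']
    · rw [hd t ht]
      cases p with
      | zero => simp
      | succ q =>
        simp only [Nat.add_sub_cancel, pow_succ]
        field_simp
        ring
  -- hence K equals the integral of s^p * R s
  have hrep : ∀ t : ℝ, t ^ p * U t = ∫ s in (0:ℝ)..t, s ^ p * R s := by
    have hc : Continuous fun s : ℝ => s ^ p * R s := (continuous_pow p).mul hRc
    intro t
    have := is_const_of_deriv_eq_zero (f := fun t => t ^ p * U t - ∫ s in (0:ℝ)..t, s ^ p * R s)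
      (fun x => ((hK x).sub (hc.integral_hasStrictDerivAt 0 x).hasDerivAt).differentiableAt)
      (fun x => by
        have := ((hK x).sub (hc.integral_hasStrictDerivAt 0 x).hasDerivAt).deriv
        simpa [Pi.sub_def] using this) t 0
    simp only [intervalIntegral.integral_same] at this
    have h0 : (0:ℝ) ^ p * U 0 - 0 = 0 := by simp [hU0]
    nlinarith [this]
  set dR := deriv R 0 with hdRdef
  set L := dR / (p + 2) with hLdef
  have hp1 : ((p:ℝ) + 1) ≠ 0 := by positivity
  have hp2 : ((p:ℝ) + 2) ≠ 0 := by positivity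
  -- split integral
  have hsplit : ∀ t : ℝ, (∫ s in (0:ℝ)..t, s ^ p * (R s - R 0 - s * dR))
      = t ^ p * U t - R 0 * t ^ (p+1) / (p+1) - dR * t ^ (p+2) / (p+2) := by
    intro t
    have i1 : IntervalIntegrable (fun s : ℝ => s ^ p * R s) MeasureTheory.volume 0 t :=
      ((continuous_pow p).mul hRc).intervalIntegrable 0 t
    have i2 : IntervalIntegrable (fun s : ℝ => R 0 * s ^ p) MeasureTheory.volume 0 t :=
      (continuous_const.mul (continuous_pow p)).intervalIntegrable 0 t
    have i3 : IntervalIntegrable (fun s : ℝ => dR * s ^ (p+1)) MeasureTheory.volume 0 t :=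
      (continuous_const.mul (continuous_pow (p+1))).intervalIntegrable 0 t
    have e1 : ∀ s : ℝ, s ^ p * (R s - R 0 - s * dR)
        = s ^ p * R s - R 0 * s ^ p - dR * s ^ (p+1) := by intro s; ring
    simp_rw [e1, intervalIntegral.integral_sub (i1.sub i2) i3,
      intervalIntegral.integral_sub i1 i2, intervalIntegral.integral_const_mul,
      integral_pow, ← hrep t]
    push_cast
    ring
  have hdR : HasDerivAt R dR 0 := (hR.differentiable one_ne_zero 0).hasDerivAt
  have hH00 : H 0 = R 0 / (p+1) := by simp [hHdef]
  -- H is differentiable at 0 with derivative L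
  have hH0 : HasDerivAt H L 0 := by
    rw [hasDerivAt_iff_isLittleO, Asymptotics.isLittleO_iff]
    intro c hc
    have hlittle := Asymptotics.isLittleO_iff.1 (hasDerivAt_iff_isLittleO.1 hdR) hc
    rw [Metric.eventually_nhds_iff] at hlittle ⊢
    obtain ⟨δ, hδ, hb⟩ := hlittle
    refine ⟨δ, hδ, fun t htδ => ?_⟩
    rcases eq_or_ne t 0 with rfl | ht
    · simp
    have habs : (0:ℝ) < |t| := abs_pos.2 ht
    have hintb : ‖∫ s in (0:ℝ)..t, s ^ p * (R s - R 0 - s * dR)‖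
        ≤ (c * |t| * |t| ^ p) * |t - 0| := by
      apply intervalIntegral.norm_integral_le_of_norm_le_const
      intro s hs
      have hst : |s| ≤ |t| := by
        rcases le_total 0 t with h | h
        · rw [Set.uIoc_of_le h] at hs
          rw [abs_of_pos hs.1, abs_of_nonneg h]; exact hs.2
        · rw [Set.uIoc_comm, Set.uIoc_of_le h] at hs
          rw [abs_of_nonpos hs.2, abs_of_nonpos h]; linarith [hs.1]
      have hsδ : dist s 0 < δ := by
        rw [Real.dist_eq, sub_zero]
        calc |s| ≤ |t| := hst
          _ < δ := by rw [Real.dist_eq, sub_zero] at htδ; exact htδ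
      have hφ : ‖R s - R 0 - s * dR‖ ≤ c * |s| := by
        have := hb hsδ
        simpa [Real.norm_eq_abs, smul_eq_mul] using this
      calc ‖s ^ p * (R s - R 0 - s * dR)‖ = |s| ^ p * ‖R s - R 0 - s * dR‖ := by
            rw [norm_mul, Real.norm_eq_abs, abs_pow]
        _ ≤ |t| ^ p * (c * |t|) := by
            apply mul_le_mul (pow_le_pow_left₀ (abs_nonneg s) hst p)
              (hφ.trans (by nlinarith)) (norm_nonneg _) (by positivity)
        _ = c * |t| * |t| ^ p := by ring
    have hkey : H t - H 0 - t * L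
        = (∫ s in (0:ℝ)..t, s ^ p * (R s - R 0 - s * dR)) / t ^ (p+1) := by
      rw [hsplit t, hH00]
      simp only [hHdef, if_neg ht]
      rw [hLdef]
      have htp : t ^ (p+1) ≠ 0 := pow_ne_zero _ ht
      field_simp
      ring
    rw [sub_zero, smul_eq_mul, hkey, Real.norm_eq_abs, Real.norm_eq_abs, abs_div,
      abs_pow, div_le_iff₀ (by positivity)]
    rw [sub_zero, Real.norm_eq_abs] at hintb
    calc |∫ s in (0:ℝ)..t, s ^ p * (R s - R 0 - s * dR)| ≤ c * |t| * |t| ^ p * |t| := hintb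
      _ = c * |t| * |t| ^ (p+1) := by ring
  -- derivative of H away from 0
  have hHt : ∀ t : ℝ, t ≠ 0 → HasDerivAt H ((R t - ((p:ℝ)+1) * H t) / t) t := by
    intro t ht
    have hUt : HasDerivAt U (deriv U t) t := (hUd t).hasDerivAt
    have h1 : HasDerivAt (fun s => U s / s) ((deriv U t * t - U t * 1) / t ^ 2) t :=
      hUt.div (hasDerivAt_id t) ht
    have heq : H =ᶠ[𝓝 t] fun s => U s / s := by
      filter_upwards [isOpen_compl_singleton.mem_nhds (ht : t ∈ ({0}ᶜ : Set ℝ))] with s hs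
      simp only [Set.mem_compl_iff, Set.mem_singleton_iff] at hs
      simp [hHdef, hs]
    have h2 : HasDerivAt H ((deriv U t * t - U t * 1) / t ^ 2) t :=
      h1.congr_of_eventuallyEq heq
    convert h2 using 1
    rw [hd t ht]
    simp only [hHdef, if_neg ht]
    field_simp
    ring
  have hHd : ∀ t : ℝ, deriv H t = if t = 0 then L else (R t - ((p:ℝ)+1) * H t) / t := by
    intro t; rcases eq_or_ne t 0 with rfl | ht
    · simp [hH0.deriv]
    · simp [ht, (hHt t ht).deriv]
  have hHdiff : Differentiable ℝ H := by
    intro t; rcases eq_or_ne t 0 with rfl | ht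
    · exact hH0.differentiableAt
    · exact (hHt t ht).differentiableAt
  have hHcont : Continuous H := hHdiff.continuous
  -- continuity of deriv H
  have hcd : Continuous (deriv H) := by
    rw [continuous_iff_continuousAt]
    intro t
    rcases eq_or_ne t 0 with rfl | ht
    · have hev : ∀ s : ℝ, s ≠ 0 → deriv H s = slope R 0 s - ((p:ℝ)+1) * slope H 0 s := by
        intro s hs
        rw [hHd s, if_neg hs, slope_def_field, slope_def_field, hH00]
        field_simp
        ring
      have hslopeR : Tendsto (slope R 0) (𝓝[≠] 0) (𝓝 dR) := hasDerivAt_iff_tendsto_slope.1 hdR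
      have hslopeH : Tendsto (slope H 0) (𝓝[≠] 0) (𝓝 L) := hasDerivAt_iff_tendsto_slope.1 hH0
      have h3 : Tendsto (fun s => slope R 0 s - ((p:ℝ)+1) * slope H 0 s) (𝓝[≠] (0:ℝ))
          (𝓝 (dR - ((p:ℝ)+1) * L)) := hslopeR.sub (hslopeH.const_mul _)
      have h4 : dR - ((p:ℝ)+1) * L = L := by rw [hLdef]; field_simp; ring
      rw [h4] at h3
      have h2 : Tendsto (deriv H) (𝓝[≠] (0:ℝ)) (𝓝 L) :=
        h3.congr' (by filter_upwards [self_mem_nhdsWithin] with s hs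
                      exact (hev s hs).symm)
      have h5 : Tendsto (deriv H) (𝓝 (0:ℝ)) (𝓝 L) := by
        rw [← nhdsNE_sup_pure (0:ℝ)]
        refine Tendsto.sup h2 ?_
        have : deriv H 0 = L := hH0.deriv
        simpa [this] using tendsto_pure_nhds (deriv H) (0:ℝ)
      rw [ContinuousAt, hH0.deriv]
      exact h5
    · have heq : (fun s => (R s - ((p:ℝ)+1) * H s) / s) =ᶠ[𝓝 t] deriv H := by
        filter_upwards [isOpen_compl_singleton.mem_nhds (ht : t ∈ ({0}ᶜ : Set ℝ))] with s hs
        simp only [Set.mem_compl_iff, Set.mem_singleton_iff] at hs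
        rw [hHd s, if_neg hs]
      exact (((hRc.continuousAt).sub (continuousAt_const.mul hHcont.continuousAt)).div
        continuousAt_id ht).congr heq
  refine ⟨H, contDiff_one_iff_deriv.2 ⟨hHdiff, hcd⟩, fun t ht => by simp [hHdef, ht], ?_⟩
  funext t
  rcases eq_or_ne t 0 with rfl | ht
  · simp only [hd0, hHdef, if_pos rfl]
    field_simp
    ring
  · rw [hd t ht]
    simp [hHdef, ht]


/-- improved regularity, `f ∈ C¹(ℝ∖{0}) ∩ C(ℝ)`:
if `V` (even) and `U` (odd) are `C¹`, `V² − ε²U² > 0` everywhere, and they solve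
the rescaled system (with `U(t)/t` read as `U'(0)` at `t = 0`), then
`V, U ∈ C²(ℝ)` and `t ↦ U(t)/t` extends to a `C¹` function on `ℝ`. -/
theorem stmt6 (n : ℕ) (hn : 1 ≤ n) (m k ε : ℝ) (hm : 0 < m) (hk : 0 < k)
    (hε : ε ∈ Set.Ioo (0 : ℝ) m) (ω : ℝ) (hω : ω = Real.sqrt (m ^ 2 - ε ^ 2))
    (f : ℝ → ℝ) (hfc : Continuous f) (hf1 : ContDiffOn ℝ 1 f {(0 : ℝ)}ᶜ)
    (V U : ℝ → ℝ) (hV : ContDiff ℝ 1 V) (hU : ContDiff ℝ 1 U)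
    (hVeven : ∀ t, V (-t) = V t) (hUodd : ∀ t, U (-t) = -U t)
    (hpos : ∀ t, 0 < V t ^ 2 - ε ^ 2 * U t ^ 2)
    (heq1 : ∀ t : ℝ,
      deriv U t + ((n : ℝ) - 1) * (if t = 0 then deriv U 0 else U t / t)
          + V t / (m + ω)
        = ε ^ (-2 : ℝ) * f (ε ^ (2 / k) * (V t ^ 2 - ε ^ 2 * U t ^ 2)) * V t)
    (heq2 : ∀ t : ℝ,
      deriv V t + (m + ω) * U t
        = f (ε ^ (2 / k) * (V t ^ 2 - ε ^ 2 * U t ^ 2)) * U t) :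
    ContDiff ℝ 2 V ∧ ContDiff ℝ 2 U ∧
      ∃ Hc : ℝ → ℝ, ContDiff ℝ 1 Hc ∧ ∀ t : ℝ, t ≠ 0 → Hc t = U t / t := by
  have hε0 : (0:ℝ) < ε := hε.1
  set g : ℝ → ℝ := fun t => f (ε ^ (2 / k) * (V t ^ 2 - ε ^ 2 * U t ^ 2)) with hgdef
  have hw : ContDiff ℝ 1 (fun t => ε ^ (2 / k) * (V t ^ 2 - ε ^ 2 * U t ^ 2)) :=
    contDiff_const.mul ((hV.pow 2).sub (contDiff_const.mul (hU.pow 2)))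
  have hwne : ∀ t : ℝ, ε ^ (2 / k) * (V t ^ 2 - ε ^ 2 * U t ^ 2) ∈ ({(0:ℝ)}ᶜ : Set ℝ) := by
    intro t
    simp only [Set.mem_compl_iff, Set.mem_singleton_iff]
    exact ne_of_gt (mul_pos (Real.rpow_pos_of_pos hε0 _) (hpos t))
  have hg : ContDiff ℝ 1 g := hf1.comp_contDiff hw hwne
  set R : ℝ → ℝ := fun t => ε ^ (-2:ℝ) * g t * V t - V t / (m + ω) with hRdef
  have hR : ContDiff ℝ 1 R := ((contDiff_const.mul hg).mul hV).sub (hV.div_const _)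
  set p : ℕ := n - 1 with hpdef
  have hpn : ((p:ℝ)) = (n:ℝ) - 1 := by
    rw [hpdef, Nat.cast_sub hn]; norm_num
  have hpn1 : ((p:ℝ)) + 1 = (n:ℝ) := by rw [hpn]; ring
  have hnpos : (0:ℝ) < (n:ℝ) := by exact_mod_cast Nat.lt_of_lt_of_le Nat.zero_lt_one hn
  have hd : ∀ t : ℝ, t ≠ 0 → deriv U t = R t - p * (U t / t) := by
    intro t ht
    have h := heq1 t
    rw [if_neg ht] at h
    rw [hRdef]; simp only [hgdef]
    rw [hpn]
    linarith [h]
  have hd0 : deriv U 0 = R 0 / (p + 1) := by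
    have h := heq1 0
    rw [if_pos rfl] at h
    rw [eq_div_iff (by positivity : ((p:ℝ)+1) ≠ 0), hpn1]
    rw [hRdef]; simp only [hgdef]
    nlinarith [h]
  have hU00 : U 0 = 0 := by
    have h := hUodd 0
    rw [neg_zero] at h
    linarith
  obtain ⟨H, hHsm, hHeq, hdU⟩ := keylem p R U hR hU hU00 hd hd0
  have hdV : deriv V = fun t => g t * U t - (m + ω) * U t := by
    funext t
    have h := heq2 t
    simp only [hgdef]
    linarith [h]
  have h21 : (2 : WithTop ℕ∞) = 1 + 1 := by norm_num
  refine ⟨?_, ?_, H, hHsm, hHeq⟩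
  · rw [h21, contDiff_succ_iff_deriv]
    exact ⟨hV.differentiable one_ne_zero, by simp, by
      rw [hdV]; exact (hg.mul hU).sub (contDiff_const.mul hU)⟩
  · rw [h21, contDiff_succ_iff_deriv]
    exact ⟨hU.differentiable one_ne_zero, by simp, by
      rw [hdU]; exact hR.sub (contDiff_const.mul hHsm)⟩
end

section
/- Let n ≥ 1 be an integer, m > 0, k > 0, ε ∈ (0,m) with ω := √(m²−ε²) > m/2, and let f: ℝ → ℝ be continuous with |f(τ)| ≤ 2|τ|^k for all τ. Let T₁ ≥ 2n and let (V,U): [T₁,∞) → ℝ² be continuously differentiable, satisfy U'(t) + ((n−1)/t) U(t) + V(t)/(m+ω) = ε^{−2} f(ε^{2/k}(V(t)² − ε²U(t)²)) V(t) and V'(t) + (m+ω) U(t) = f(ε^{2/k}(V(t)² − ε²U(t)²)) U(t) for all t ≥ T₁, satisfy V(t) > 0 and V(t)/(4m) ≤ U(t) ≤ 2V(t)/m for all t ≥ T₁, and suppose there exist B < ∞ and γ > 0 with |V(t)| + |U(t)| ≤ B e^{−γ t} for all t ≥ T₁. Then there exist constants 0 < c₁ ≤ C₁ < ∞ such that for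 all t ≥ T₁: c₁ t^{−(n−1)/2} e^{−t} ≤ V(t) and V(t) + U(t) ≤ C₁ t^{−(n−1)/2} e^{−t}. -/
open Set Filter Real
set_option maxHeartbeats 1000000

lemma monoAux {T : ℝ} {g g' : ℝ → ℝ}
    (hd : ∀ t ∈ Set.Ici T, HasDerivAt g (g' t) t)
    (h0 : ∀ t ∈ Set.Ici T, 0 ≤ g' t) : MonotoneOn g (Set.Ici T) := by
  apply monotoneOn_of_deriv_nonneg (convex_Ici T)
  · exact fun t ht => (hd t ht).continuousAt.continuousWithinAt
  · intro t ht
    rw [interior_Ici] at ht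
    exact (hd t (Set.Ioi_subset_Ici_self ht)).differentiableAt.differentiableWithinAt
  · intro t ht
    rw [interior_Ici] at ht
    rw [(hd t (Set.Ioi_subset_Ici_self ht)).deriv]
    exact h0 t (Set.Ioi_subset_Ici_self ht)

lemma antiAux {T : ℝ} {g g' : ℝ → ℝ}
    (hd : ∀ t ∈ Set.Ici T, HasDerivAt g (g' t) t)
    (h0 : ∀ t ∈ Set.Ici T, g' t ≤ 0) : AntitoneOn g (Set.Ici T) := by
  apply antitoneOn_of_deriv_nonpos (convex_Ici T)
  · exact fun t ht => (hd t ht).continuousAt.continuousWithinAt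
  · intro t ht
    rw [interior_Ici] at ht
    exact (hd t (Set.Ioi_subset_Ici_self ht)).differentiableAt.differentiableWithinAt
  · intro t ht
    rw [interior_Ici] at ht
    rw [(hd t (Set.Ioi_subset_Ici_self ht)).deriv]
    exact h0 t (Set.Ioi_subset_Ici_self ht)

lemma barrierAux {T : ℝ} {w b w' b' : ℝ → ℝ}
    (hw : ∀ t ∈ Set.Ici T, HasDerivAt w (w' t) t)
    (hb : ∀ t ∈ Set.Ici T, HasDerivAt b (b' t) t)
    (habs : ∀ t ∈ Set.Ici T, |w' t| ≤ -b' t)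
    (hwl : Filter.Tendsto w Filter.atTop (nhds 0))
    (hbl : Filter.Tendsto b Filter.atTop (nhds 0)) :
    ∀ t ∈ Set.Ici T, |w t| ≤ b t := by
  have hmono : MonotoneOn (fun t => w t - b t) (Set.Ici T) := by
    apply monoAux (fun t ht => (hw t ht).sub (hb t ht))
    intro t ht
    have h1 := abs_le.mp (habs t ht)
    linarith [h1.1, h1.2, neg_abs_le (w' t)]
  have hanti : AntitoneOn (fun t => w t + b t) (Set.Ici T) := by
    apply antiAux (fun t ht => (hw t ht).add (hb t ht))
    intro t ht
    have h1 := abs_le.mp (habs t ht)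
    have h2 := le_abs_self (w' t)
    linarith
  intro t ht
  have h1 : w t - b t ≤ 0 - 0 := by
    apply ge_of_tendsto (hwl.sub hbl)
    filter_upwards [eventually_ge_atTop t] with s hs
    exact hmono ht (le_trans ht hs) hs
  have h2 : 0 + 0 ≤ w t + b t := by
    apply le_of_tendsto (hwl.add hbl)
    filter_upwards [eventually_ge_atTop t] with s hs
    exact hanti ht (le_trans ht hs) hs
  rw [abs_le]
  constructor <;> linarith

lemma expTendAux {c : ℝ} (hc : 0 < c) :
    Filter.Tendsto (fun t : ℝ => Real.exp (-c*t)) Filter.atTop (nhds 0) := by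
  have h : Tendsto (fun t : ℝ => -c*t) atTop atBot :=
    Tendsto.const_mul_atTop_of_neg (by linarith) (tendsto_id : Tendsto (fun x:ℝ => x) atTop atTop)
  exact Real.tendsto_exp_atBot.comp h

lemma expDerivAux (c t : ℝ) : HasDerivAt (fun y : ℝ => Real.exp (c*y)) (Real.exp (c*t) * c) t := by
  have h := ((hasDerivAt_id t).const_mul c).exp
  simpa using h

/-- Master lemma: sharp two-sided decay for the system
`R' = -R - (ν/t)(R-S)/2 + e₁`, `S' = S + (ν/t)(R-S)/2 + e₂` with `|S| ≤ R`,
`R > 0` and exponentially small errors. -/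
lemma masterAux {T ν kg c₂ : ℝ} (hT : 0 < T) (hν : 0 ≤ ν) (hc2 : 0 < c₂) (hkg : 0 < kg)
    {R S e₁ e₂ : ℝ → ℝ}
    (hRd : ∀ t ∈ Set.Ici T, HasDerivAt R (-(R t) - ν*(R t - S t)/(2*t) + e₁ t) t)
    (hSd : ∀ t ∈ Set.Ici T, HasDerivAt S (S t + ν*(R t - S t)/(2*t) + e₂ t) t)
    (hRpos : ∀ t ∈ Set.Ici T, 0 < R t)
    (hSle : ∀ t ∈ Set.Ici T, |S t| ≤ R t)
    (he₁ : ∀ t ∈ Set.Ici T, |e₁ t| ≤ c₂ * Real.exp (-kg*t) * R t)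
    (he₂ : ∀ t ∈ Set.Ici T, |e₂ t| ≤ c₂ * Real.exp (-kg*t) * R t) :
    ∃ c C : ℝ, 0 < c ∧ c ≤ C ∧ ∀ t ∈ Set.Ici T,
      c * t ^ (-ν/2) * Real.exp (-t) ≤ R t ∧ R t ≤ C * t ^ (-ν/2) * Real.exp (-t) := by
  have htpos : ∀ t ∈ Set.Ici T, (0:ℝ) < t := fun t ht => lt_of_lt_of_le hT ht
  set q : ℝ → ℝ := fun t => S t / R t with hqdef
  set hfun : ℝ → ℝ := fun t => ν*((R t)^2 - (S t)^2)/(2*t*(R t)^2)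
      + (e₂ t * R t - S t * e₁ t)/(R t)^2 with hhdef
  set β : ℝ → ℝ := fun t => ν/t + 2*c₂*Real.exp (-kg*t) with hβdef
  clear_value q hfun β
  have hq1 : ∀ t ∈ Set.Ici T, |q t| ≤ 1 := by
    intro t ht
    rw [hqdef]
    dsimp only
    rw [abs_div, abs_of_pos (hRpos t ht), div_le_one (hRpos t ht)]
    exact hSle t ht
  have hqd : ∀ t ∈ Set.Ici T, HasDerivAt q (2 * q t + hfun t) t := by
    intro t ht
    have ht0 := htpos t ht
    have H := (hSd t ht).div (hRd t ht) (hRpos t ht).ne'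
    have hRt := hRpos t ht
    rw [hqdef]
    simp only [hhdef, hqdef]
    refine H.congr_deriv ?_
    field_simp
    ring
  have hhb : ∀ t ∈ Set.Ici T, |hfun t| ≤ β t := by
    intro t ht
    have ht0 := htpos t ht
    have hRt := hRpos t ht
    have hSt := hSle t ht
    have hS2 : (S t)^2 ≤ (R t)^2 := by
      have h := abs_le.mp hSt
      nlinarith [h.1, h.2]
    simp only [hhdef, hβdef]
    refine le_trans (abs_add_le _ _) ?_
    have hterm1 : |ν*((R t)^2 - (S t)^2)/(2*t*(R t)^2)| ≤ ν/t := by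
      rw [abs_div, abs_of_pos (by positivity : (0:ℝ) < 2*t*(R t)^2),
        div_le_div_iff₀ (by positivity : (0:ℝ) < 2*t*(R t)^2) ht0,
        abs_of_nonneg (by nlinarith : (0:ℝ) ≤ ν*((R t)^2 - (S t)^2))]
      nlinarith [mul_nonneg (mul_nonneg hν ht0.le) (sq_nonneg (S t)),
        mul_nonneg (mul_nonneg hν ht0.le) (sq_nonneg (R t))]
    have hterm2 : |(e₂ t * R t - S t * e₁ t)/(R t)^2| ≤ 2*c₂*Real.exp (-kg*t) := by
      rw [abs_div, abs_of_pos (by positivity : (0:ℝ) < (R t)^2),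
        div_le_iff₀ (by positivity : (0:ℝ) < (R t)^2)]
      have h1 := he₁ t ht
      have h2 := he₂ t ht
      have htri : |e₂ t * R t - S t * e₁ t| ≤ |e₂ t| * R t + R t * |e₁ t| := by
        rw [sub_eq_add_neg]
        refine le_trans (abs_add_le _ _) ?_
        rw [abs_neg, abs_mul, abs_mul, abs_of_pos hRt]
        have h3 : |S t| * |e₁ t| ≤ R t * |e₁ t| :=
          mul_le_mul_of_nonneg_right hSt (abs_nonneg _)
        linarith
      have hm1 : |e₂ t| * R t ≤ (c₂ * Real.exp (-kg*t) * R t) * R t :=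
        mul_le_mul_of_nonneg_right h2 hRt.le
      have hm2 : R t * |e₁ t| ≤ R t * (c₂ * Real.exp (-kg*t) * R t) :=
        mul_le_mul_of_nonneg_left h1 hRt.le
      nlinarith
    linarith
  -- barrier argument: |q t| ≤ β t
  have hq2 : ∀ t ∈ Set.Ici T, |q t| ≤ β t := by
    have hwd : ∀ t ∈ Set.Ici T,
        HasDerivAt (fun s => Real.exp (-2*s) * q s) (Real.exp (-2*t) * hfun t) t := by
      intro t ht
      have H := (expDerivAux (-2) t).mul (hqd t ht)
      refine H.congr_deriv ?_
      ring
    have hbd : ∀ t ∈ Set.Ici T,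
        HasDerivAt (fun s => Real.exp (-2*s) * β s)
          (Real.exp (-2*t) * ((-(ν/t^2) - 2*c₂*kg*Real.exp (-kg*t)) - 2 * β t)) t := by
      intro t ht
      have ht0 := htpos t ht
      have h1 : HasDerivAt (fun y : ℝ => ν / y) (-(ν/t^2)) t := by
        have h := (hasDerivAt_inv ht0.ne').const_mul ν
        simpa [div_eq_mul_inv, mul_neg] using h
      have h2 : HasDerivAt (fun y : ℝ => 2*c₂ * Real.exp (-kg*y))
          (2*c₂ * (Real.exp (-kg*t) * -kg)) t :=
        (expDerivAux (-kg) t).const_mul (2*c₂)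
      have hβd : HasDerivAt β (-(ν/t^2) + 2*c₂ * (Real.exp (-kg*t) * -kg)) t := by
        rw [hβdef]; exact h1.add h2
      have H := (expDerivAux (-2) t).mul hβd
      refine H.congr_deriv ?_
      ring
    have habs : ∀ t ∈ Set.Ici T, |Real.exp (-2*t) * hfun t|
        ≤ -(Real.exp (-2*t) * ((-(ν/t^2) - 2*c₂*kg*Real.exp (-kg*t)) - 2 * β t)) := by
      intro t ht
      have ht0 := htpos t ht
      rw [abs_mul, abs_of_pos (Real.exp_pos _)]
      have h1 := hhb t ht
      have h2 : 0 ≤ ν/t^2 := by positivity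
      have h3 : 0 ≤ 2*c₂*kg*Real.exp (-kg*t) := by positivity
      have h4 : |hfun t| ≤ (ν/t^2 + 2*c₂*kg*Real.exp (-kg*t)) + 2 * β t := by
        have hβ0 : 0 ≤ β t := le_trans (abs_nonneg _) h1
        linarith
      have h5 := mul_le_mul_of_nonneg_left h4 (Real.exp_pos (-2*t)).le
      nlinarith [h5]
    have hwl : Filter.Tendsto (fun s => Real.exp (-2*s) * q s) Filter.atTop (nhds 0) := by
      apply squeeze_zero_norm' ?_ (expTendAux (by norm_num : (0:ℝ) < 2))
      filter_upwards [eventually_ge_atTop T] with s hs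
      have h1 := hq1 s hs
      rw [Real.norm_eq_abs, abs_mul, abs_of_pos (Real.exp_pos _)]
      nlinarith [Real.exp_pos (-2*s), abs_nonneg (q s)]
    have hβl : Filter.Tendsto β Filter.atTop (nhds 0) := by
      rw [hβdef]
      have h1 : Filter.Tendsto (fun t : ℝ => ν / t) Filter.atTop (nhds 0) := by
        simpa [div_eq_mul_inv] using tendsto_inv_atTop_zero.const_mul ν
      have h2 : Filter.Tendsto (fun t : ℝ => 2*c₂ * Real.exp (-kg*t)) Filter.atTop
          (nhds (2*c₂ * 0)) := (expTendAux hkg).const_mul (2*c₂)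
      simpa using h1.add h2
    have hbl : Filter.Tendsto (fun s => Real.exp (-2*s) * β s) Filter.atTop (nhds 0) := by
      have h := (expTendAux (by norm_num : (0:ℝ) < 2)).mul hβl
      simpa using h
    intro t ht
    have h := barrierAux hwd hbd habs hwl hbl t ht
    rw [abs_mul, abs_of_pos (Real.exp_pos _)] at h
    exact le_of_mul_le_mul_left h (Real.exp_pos _)
  -- the logarithmic quantity G
  set A : ℝ := ν^2/2 with hAdef
  set K : ℝ := ν*c₂/T + c₂ with hKdef
  set G : ℝ → ℝ := fun t => Real.log (R t) + t + (ν/2) * Real.log t with hGdef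
  set Gd : ℝ → ℝ := fun t => ν/(2*t) * q t + e₁ t / R t with hGddef
  clear_value A K G Gd
  have hA0 : 0 ≤ A := by rw [hAdef]; positivity
  have hK0 : 0 < K := by
    have h1 : 0 ≤ ν*c₂/T := by positivity
    rw [hKdef]
    linarith
  have hGd : ∀ t ∈ Set.Ici T, HasDerivAt G (Gd t) t := by
    intro t ht
    have ht0 := htpos t ht
    have hRt := hRpos t ht
    have h1 : HasDerivAt (fun s => Real.log (R s))
        ((-(R t) - ν*(R t - S t)/(2*t) + e₁ t) / R t) t :=
      (hRd t ht).log hRt.ne'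
    have h2 : HasDerivAt (fun s : ℝ => s) (1:ℝ) t := hasDerivAt_id t
    have h3 : HasDerivAt (fun s : ℝ => (ν/2) * Real.log s) ((ν/2) * t⁻¹) t :=
      (Real.hasDerivAt_log ht0.ne').const_mul (ν/2)
    have H := (h1.add h2).add h3
    rw [hGdef]
    simp only [hGddef, hqdef]
    refine H.congr_deriv ?_
    field_simp
    ring
  have hGb : ∀ t ∈ Set.Ici T, |Gd t| ≤ A/t^2 + K*Real.exp (-kg*t) := by
    intro t ht
    have ht0 := htpos t ht
    have hRt := hRpos t ht
    have h2 := he₁ t ht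
    rw [hGddef, hAdef, hKdef]
    dsimp only
    refine le_trans (abs_add_le _ _) ?_
    have hterm1 : |ν/(2*t) * q t| ≤ (ν^2/2)/t^2 + (ν*c₂/T)*Real.exp (-kg*t) := by
      rw [abs_mul, abs_of_nonneg (by positivity : (0:ℝ) ≤ ν/(2*t))]
      have hβt : |q t| ≤ ν/t + 2*c₂*Real.exp (-kg*t) := by
        have h := hq2 t ht
        rw [hβdef] at h
        exact h
      have hb1 : ν/(2*t) * |q t| ≤ ν/(2*t) * (ν/t + 2*c₂*Real.exp (-kg*t)) :=
        mul_le_mul_of_nonneg_left hβt (by positivity)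
      have hc : ν/(2*t) * (ν/t + 2*c₂*Real.exp (-kg*t))
          = (ν^2/2)/t^2 + (ν*c₂/t)*Real.exp (-kg*t) := by
        field_simp
      have hdd : ν*c₂/t ≤ ν*c₂/T := by
        gcongr
        exact ht
      have hd : (ν*c₂/t)*Real.exp (-kg*t) ≤ (ν*c₂/T)*Real.exp (-kg*t) :=
        mul_le_mul_of_nonneg_right hdd (Real.exp_pos _).le
      rw [hc] at hb1
      linarith
    have hterm2 : |e₁ t / R t| ≤ c₂*Real.exp (-kg*t) := by
      rw [abs_div, abs_of_pos hRt, div_le_iff₀ hRt]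
      exact h2
    have hexpand : (ν*c₂/T + c₂)*Real.exp (-kg*t)
        = (ν*c₂/T)*Real.exp (-kg*t) + c₂*Real.exp (-kg*t) := by ring
    rw [hexpand]
    linarith
  set ρ : ℝ → ℝ := fun t => -(A/t) - (K/kg)*Real.exp (-kg*t) with hρdef
  clear_value ρ
  have hρd : ∀ t ∈ Set.Ici T, HasDerivAt ρ (A/t^2 + K*Real.exp (-kg*t)) t := by
    intro t ht
    have ht0 := htpos t ht
    have h1 : HasDerivAt (fun y : ℝ => A / y) (-(A/t^2)) t := by
      have h := (hasDerivAt_inv ht0.ne').const_mul A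
      simpa [div_eq_mul_inv, mul_neg] using h
    have h2 : HasDerivAt (fun y : ℝ => (K/kg) * Real.exp (-kg*y))
        ((K/kg) * (Real.exp (-kg*t) * -kg)) t :=
      (expDerivAux (-kg) t).const_mul (K/kg)
    have H := h1.neg.sub h2
    rw [hρdef]
    refine H.congr_deriv ?_
    field_simp
    ring
  have hρ0 : ∀ t ∈ Set.Ici T, ρ t ≤ 0 := by
    intro t ht
    have ht0 := htpos t ht
    rw [hρdef]
    have h1 : 0 ≤ A/t := by positivity
    have h2 : 0 ≤ (K/kg)*Real.exp (-kg*t) := by positivity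
    dsimp only
    linarith
  have hmono : MonotoneOn (fun t => G t + ρ t) (Set.Ici T) := by
    apply monoAux (g' := fun t => Gd t + (A/t^2 + K*Real.exp (-kg*t)))
      (fun t ht => (hGd t ht).add (hρd t ht))
    intro t ht
    have h1 := hGb t ht
    have h2 := neg_abs_le (Gd t)
    linarith
  have hanti : AntitoneOn (fun t => G t - ρ t) (Set.Ici T) := by
    apply antiAux (g' := fun t => Gd t - (A/t^2 + K*Real.exp (-kg*t)))
      (fun t ht => (hGd t ht).sub (hρd t ht))
    intro t ht
    have h1 := hGb t ht
    have h2 := le_abs_self (Gd t)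
    linarith
  have hGlb : ∀ t ∈ Set.Ici T, G T + ρ T ≤ G t := by
    intro t ht
    have h1 := hmono Set.self_mem_Ici ht ht
    have h2 := hρ0 t ht
    dsimp at h1
    linarith
  have hGub : ∀ t ∈ Set.Ici T, G t ≤ G T - ρ T := by
    intro t ht
    have h1 := hanti Set.self_mem_Ici ht ht
    have h2 := hρ0 t ht
    dsimp at h1
    linarith
  refine ⟨Real.exp (G T + ρ T), Real.exp (G T - ρ T), Real.exp_pos _, ?_, ?_⟩
  · apply Real.exp_le_exp.mpr
    have h := hρ0 T Set.self_mem_Ici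
    linarith
  intro t ht
  have ht0 := htpos t ht
  have hRt := hRpos t ht
  have hrpow : t ^ (-ν/2) = Real.exp (Real.log t * (-ν/2)) := Real.rpow_def_of_pos ht0 _
  have hlogR : Real.log (R t) = G t - t - (ν/2) * Real.log t := by
    rw [hGdef]; ring
  have hRform : R t = Real.exp (G t - t - (ν/2) * Real.log t) := by
    rw [← hlogR, Real.exp_log hRt]
  constructor
  · rw [hrpow, hRform, ← Real.exp_add, ← Real.exp_add]
    apply Real.exp_le_exp.mpr
    have h := hGlb t ht
    linarith
  · rw [hrpow, hRform, ← Real.exp_add, ← Real.exp_add]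
    apply Real.exp_le_exp.mpr
    have h := hGub t ht
    linarith

/-- sharp exponential decay, Lemma on `𝒱, 𝒰`:
a positive `C¹` solution of the rescaled system on `[T₁, ∞)` satisfying
`V/(4m) ≤ U ≤ 2V/m` and decaying exponentially satisfies the two-sided bound
`c₁ t^{−(n−1)/2} e^{−t} ≤ V(t)` and `V(t) + U(t) ≤ C₁ t^{−(n−1)/2} e^{−t}`. -/
theorem stmt7 (n : ℕ) (hn : 1 ≤ n) (m k ε : ℝ) (hm : 0 < m) (hk : 0 < k)
    (hε : ε ∈ Set.Ioo (0 : ℝ) m) (ω : ℝ) (hω : ω = Real.sqrt (m ^ 2 - ε ^ 2))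
    (hωm : m / 2 < ω)
    (f : ℝ → ℝ) (hfc : Continuous f) (hf : ∀ τ : ℝ, |f τ| ≤ 2 * |τ| ^ k)
    (T₁ : ℝ) (hT₁ : 2 * (n : ℝ) ≤ T₁)
    (V U V' U' : ℝ → ℝ)
    (hVd : ∀ t ∈ Set.Ici T₁, HasDerivAt V (V' t) t)
    (hUd : ∀ t ∈ Set.Ici T₁, HasDerivAt U (U' t) t)
    (hV'c : ContinuousOn V' (Set.Ici T₁)) (hU'c : ContinuousOn U' (Set.Ici T₁))
    (heq1 : ∀ t ∈ Set.Ici T₁,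
      U' t + ((n : ℝ) - 1) / t * U t + V t / (m + ω)
        = ε ^ (-2 : ℝ) * f (ε ^ (2 / k) * (V t ^ 2 - ε ^ 2 * U t ^ 2)) * V t)
    (heq2 : ∀ t ∈ Set.Ici T₁,
      V' t + (m + ω) * U t = f (ε ^ (2 / k) * (V t ^ 2 - ε ^ 2 * U t ^ 2)) * U t)
    (hVpos : ∀ t ∈ Set.Ici T₁, 0 < V t)
    (hUV : ∀ t ∈ Set.Ici T₁, V t / (4 * m) ≤ U t ∧ U t ≤ 2 * V t / m)
    (hdecay : ∃ B : ℝ, ∃ γ > 0, ∀ t ∈ Set.Ici T₁, |V t| + |U t| ≤ B * Real.exp (-γ * t)) :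
    ∃ c₁ C₁ : ℝ, 0 < c₁ ∧ c₁ ≤ C₁ ∧ ∀ t ∈ Set.Ici T₁,
      c₁ * t ^ (-((n : ℝ) - 1) / 2) * Real.exp (-t) ≤ V t ∧
      V t + U t ≤ C₁ * t ^ (-((n : ℝ) - 1) / 2) * Real.exp (-t) := by
  obtain ⟨hε0, hεm⟩ := hε
  obtain ⟨B, γ, hγ, hBd⟩ := hdecay
  have hω0 : 0 < ω := lt_trans (by linarith) hωm
  have hωle : ω ≤ m := by
    rw [hω]
    calc Real.sqrt (m^2 - ε^2) ≤ Real.sqrt (m^2) := Real.sqrt_le_sqrt (by nlinarith)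
    _ = m := Real.sqrt_sq hm.le
  set a := m + ω with ha
  have ha0 : 0 < a := by rw [ha]; positivity
  have ha3 : 3*m ≤ 2*a := by rw [ha]; linarith
  have ha2m : a ≤ 2*m := by rw [ha]; linarith
  clear_value a
  have hn1 : (1:ℝ) ≤ (n:ℝ) := by exact_mod_cast hn
  have hn0 : (0:ℝ) ≤ (n:ℝ) - 1 := by linarith
  have hT12 : (2:ℝ) ≤ T₁ := by linarith
  have hT1pos : (0:ℝ) < T₁ := by linarith
  have hεinv : ε ^ (-2:ℝ) = (ε^2)⁻¹ := by
    rw [show (-2:ℝ) = ((-2:ℤ):ℝ) by norm_num, Real.rpow_intCast, zpow_neg]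
    norm_cast
  set F : ℝ → ℝ := fun t => f (ε ^ (2/k) * (V t ^ 2 - ε ^ 2 * U t ^ 2)) with hFdef
  clear_value F
  -- rewritten ODEs
  have heq2' : ∀ t ∈ Set.Ici T₁, V' t = F t * U t - a * U t := by
    intro t ht
    have h := heq2 t ht
    rw [hFdef]
    dsimp only
    linarith
  have heq1' : ∀ t ∈ Set.Ici T₁,
      U' t = (ε^2)⁻¹ * F t * V t - ((n:ℝ)-1)/t * U t - V t / a := by
    intro t ht
    have h := heq1 t ht
    rw [hεinv] at h
    rw [hFdef]
    dsimp only
    linarith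
  -- positivity facts
  have hUpos : ∀ t ∈ Set.Ici T₁, 0 < U t := by
    intro t ht
    have h1 := (hUV t ht).1
    have h2 := hVpos t ht
    have h3 : 0 < V t / (4*m) := by positivity
    linarith
  have hB0 : 0 < B := by
    have h := hBd T₁ Set.self_mem_Ici
    have h2 := hVpos T₁ Set.self_mem_Ici
    have h3 := le_abs_self (V T₁)
    have h4 := abs_nonneg (U T₁)
    nlinarith [Real.exp_pos (-γ * T₁)]
  set Kd : ℝ := 2 * (5 * B^2) ^ k with hKd
  have hKd0 : 0 < Kd := by
    have h5 : (0:ℝ) < (5 * B^2) ^ k := Real.rpow_pos_of_pos (by positivity) k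
    rw [hKd]; positivity
  clear_value Kd
  -- the nonlinear term bound
  have hFb : ∀ t ∈ Set.Ici T₁, |F t| ≤ ε^2 * (Kd * Real.exp (-(2*k*γ) * t)) := by
    intro t ht
    rw [hFdef, hKd]
    dsimp only
    have hx : |V t ^ 2 - ε ^ 2 * U t ^ 2| ≤ 5 * B^2 * Real.exp (-(2*γ) * t) := by
      have hVb : V t ≤ B * Real.exp (-γ*t) := by
        have h1 := hBd t ht
        have h2 := le_abs_self (V t)
        have h3 := abs_nonneg (U t)
        linarith
      have hV0 := hVpos t ht
      have hU0 := hUpos t ht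
      have h2' : U t * m ≤ 2 * V t := by
        have h2 := (hUV t ht).2
        rw [le_div_iff₀ hm] at h2
        linarith
      have hε2m : ε^2 ≤ m^2 := by nlinarith
      have hεU : ε^2 * U t^2 ≤ 4 * V t^2 := by
        have hA : ε^2 * U t^2 ≤ m^2 * U t^2 := by nlinarith [sq_nonneg (U t)]
        nlinarith [mul_le_mul h2' h2' (by positivity : (0:ℝ) ≤ U t * m)
          (by positivity : (0:ℝ) ≤ 2 * V t)]
      have hexp : Real.exp (-(2*γ)*t) = Real.exp (-γ*t) * Real.exp (-γ*t) := by
        rw [← Real.exp_add]; ring_nf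
      have hV2 : V t ^ 2 ≤ B^2 * Real.exp (-(2*γ)*t) := by
        rw [hexp]; nlinarith [Real.exp_pos (-γ*t)]
      rw [abs_le]
      constructor
      · nlinarith [sq_nonneg (V t), Real.exp_pos (-(2*γ)*t)]
      · nlinarith [sq_nonneg (U t), sq_nonneg ε, Real.exp_pos (-(2*γ)*t)]
    refine le_trans (hf _) ?_
    have h1 : |ε ^ (2/k) * (V t ^ 2 - ε ^ 2 * U t ^ 2)| ^ k
        = ε^2 * |V t ^ 2 - ε ^ 2 * U t ^ 2| ^ k := by
      rw [abs_mul, abs_of_pos (Real.rpow_pos_of_pos hε0 _),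
        Real.mul_rpow (Real.rpow_pos_of_pos hε0 _).le (abs_nonneg _),
        ← Real.rpow_mul hε0.le, div_mul_cancel₀ _ hk.ne',
        show (2:ℝ) = ((2:ℕ):ℝ) by norm_num, Real.rpow_natCast]
    rw [h1]
    have h2 : |V t ^ 2 - ε ^ 2 * U t ^ 2| ^ k
        ≤ (5 * B^2) ^ k * Real.exp (-(2*k*γ) * t) := by
      have h3 : |V t ^ 2 - ε ^ 2 * U t ^ 2| ^ k
          ≤ (5 * B^2 * Real.exp (-(2*γ) * t)) ^ k :=
        Real.rpow_le_rpow (abs_nonneg _) hx hk.le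
      refine le_trans h3 (le_of_eq ?_)
      rw [Real.mul_rpow (by positivity) (Real.exp_pos _).le, ← Real.exp_mul]
      ring_nf
    calc 2 * (ε^2 * |V t ^ 2 - ε ^ 2 * U t ^ 2| ^ k)
        ≤ 2 * (ε^2 * ((5 * B^2) ^ k * Real.exp (-(2*k*γ) * t))) := by
          have h4 : (0:ℝ) < ε^2 := by positivity
          nlinarith
      _ = ε^2 * ((2 * (5 * B^2) ^ k) * Real.exp (-(2*k*γ) * t)) := by ring
  have hFb2 : ∀ t ∈ Set.Ici T₁, (ε^2)⁻¹ * |F t| ≤ Kd * Real.exp (-(2*k*γ) * t) := by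
    intro t ht
    have h := hFb t ht
    have hε2 : (0:ℝ) < ε^2 := by positivity
    rw [inv_mul_le_iff₀ hε2]
    linarith
  -- R and S
  set R : ℝ → ℝ := fun t => V t + a * U t with hRdef
  set S : ℝ → ℝ := fun t => V t - a * U t with hSdef
  clear_value R S
  have hRpos : ∀ t ∈ Set.Ici T₁, 0 < R t := by
    intro t ht
    have h1 := hVpos t ht
    have h2 := hUpos t ht
    rw [hRdef]
    dsimp only
    nlinarith
  have hSleR : ∀ t ∈ Set.Ici T₁, |S t| ≤ R t := by
    intro t ht
    have h1 := hVpos t ht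
    have h2 := hUpos t ht
    rw [hRdef, hSdef]
    dsimp only
    rw [abs_le]
    constructor <;> nlinarith
  have haU : ∀ t ∈ Set.Ici T₁, a * U t ≤ R t := by
    intro t ht
    have h1 := hVpos t ht
    rw [hRdef]
    dsimp only
    linarith
  have hVle : ∀ t ∈ Set.Ici T₁, V t ≤ R t := by
    intro t ht
    have h2 := hUpos t ht
    rw [hRdef]
    dsimp only
    nlinarith
  have hR5V : ∀ t ∈ Set.Ici T₁, R t ≤ 5 * V t := by
    intro t ht
    have h2 := hUpos t ht
    have h3 := (hUV t ht).2
    have h1 := hVpos t ht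
    rw [le_div_iff₀ hm] at h3
    rw [hRdef]
    dsimp only
    nlinarith [mul_nonneg (by linarith : (0:ℝ) ≤ 2*m - a) h2.le]
  -- derivatives in master form
  have hRd : ∀ t ∈ Set.Ici T₁, HasDerivAt R
      (-(R t) - ((n:ℝ)-1)*(R t - S t)/(2*t)
        + (F t * U t + a*((ε^2)⁻¹ * F t * V t))) t := by
    intro t ht
    have ht0 : 0 < t := lt_of_lt_of_le hT1pos ht
    have H := (hVd t ht).add ((hUd t ht).const_mul a)
    rw [hRdef, hSdef]
    dsimp only
    refine H.congr_deriv ?_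
    rw [heq2' t ht, heq1' t ht]
    field_simp
    ring
  have hSd : ∀ t ∈ Set.Ici T₁, HasDerivAt S
      (S t + ((n:ℝ)-1)*(R t - S t)/(2*t)
        + (F t * U t - a*((ε^2)⁻¹ * F t * V t))) t := by
    intro t ht
    have ht0 : 0 < t := lt_of_lt_of_le hT1pos ht
    have H := (hVd t ht).sub ((hUd t ht).const_mul a)
    rw [hRdef, hSdef]
    dsimp only
    refine H.congr_deriv ?_
    rw [heq2' t ht, heq1' t ht]
    field_simp
    ring
  -- error bounds
  have hc20 : (0:ℝ) < 3*m*Kd := mul_pos (by linarith) hKd0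
  have hEE : ∀ t ∈ Set.Ici T₁, |F t| * U t + a*((ε^2)⁻¹ * |F t| * V t)
      ≤ 3*m*Kd * Real.exp (-(2*k*γ)*t) * R t := by
    intro t ht
    have hFt := hFb t ht
    have hFt2 := hFb2 t ht
    have hUt := hUpos t ht
    have hVt0 := hVpos t ht
    have hRt := hRpos t ht
    have haUt := haU t ht
    have hVt := hVle t ht
    have hε2m : ε^2 ≤ m^2 := by nlinarith
    have hP0 : (0:ℝ) < Kd * Real.exp (-(2*k*γ)*t) :=
      mul_pos hKd0 (Real.exp_pos _)
    have e1 : 0 ≤ (m^2 - ε^2) * U t := mul_nonneg (by linarith) hUt.le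
    have e2 : 0 ≤ (2*a - 3*m) * (m * U t) :=
      mul_nonneg (by linarith) (mul_nonneg hm.le hUt.le)
    have e3 : 2*m*(a*U t) ≤ 2*m*(R t) :=
      mul_le_mul_of_nonneg_left haUt (by linarith)
    have key1 : ε^2 * U t ≤ m * R t := by nlinarith
    have e4 : 0 ≤ (2*m - a) * V t := mul_nonneg (by linarith) hVt0.le
    have key2 : a * V t ≤ 2*m*(R t) := by nlinarith
    have b1 : |F t| * U t ≤ (ε^2 * (Kd * Real.exp (-(2*k*γ)*t))) * U t :=
      mul_le_mul_of_nonneg_right hFt hUt.le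
    have b2 : (ε^2)⁻¹ * |F t| * V t ≤ (Kd * Real.exp (-(2*k*γ)*t)) * V t :=
      mul_le_mul_of_nonneg_right hFt2 hVt0.le
    have c1 : (ε^2 * (Kd * Real.exp (-(2*k*γ)*t))) * U t
        = (Kd * Real.exp (-(2*k*γ)*t)) * (ε^2 * U t) := by ring
    have c2 : (Kd * Real.exp (-(2*k*γ)*t)) * (ε^2 * U t)
        ≤ (Kd * Real.exp (-(2*k*γ)*t)) * (m * R t) :=
      mul_le_mul_of_nonneg_left key1 hP0.le
    have c3 : a * ((Kd * Real.exp (-(2*k*γ)*t)) * V t)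
        = (Kd * Real.exp (-(2*k*γ)*t)) * (a * V t) := by ring
    have c4 : (Kd * Real.exp (-(2*k*γ)*t)) * (a * V t)
        ≤ (Kd * Real.exp (-(2*k*γ)*t)) * (2*m*(R t)) :=
      mul_le_mul_of_nonneg_left key2 hP0.le
    have b2' : a * ((ε^2)⁻¹ * |F t| * V t) ≤ a * ((Kd * Real.exp (-(2*k*γ)*t)) * V t) :=
      mul_le_mul_of_nonneg_left b2 ha0.le
    linarith
  have hE1 : ∀ t ∈ Set.Ici T₁, |F t * U t + a*((ε^2)⁻¹ * F t * V t)|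
      ≤ 3*m*Kd * Real.exp (-(2*k*γ)*t) * R t := by
    intro t ht
    refine le_trans (abs_add_le _ _) (le_trans ?_ (hEE t ht))
    have hUt := hUpos t ht
    have hVt0 := hVpos t ht
    rw [abs_mul, abs_mul, abs_mul, abs_mul, abs_of_pos hUt, abs_of_pos hVt0,
      abs_of_pos ha0, abs_of_pos (by positivity : (0:ℝ) < (ε^2)⁻¹)]
  have hE2 : ∀ t ∈ Set.Ici T₁, |F t * U t - a*((ε^2)⁻¹ * F t * V t)|
      ≤ 3*m*Kd * Real.exp (-(2*k*γ)*t) * R t := by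
    intro t ht
    rw [sub_eq_add_neg]
    refine le_trans (abs_add_le _ _) (le_trans ?_ (hEE t ht))
    have hUt := hUpos t ht
    have hVt0 := hVpos t ht
    rw [abs_neg, abs_mul, abs_mul, abs_mul, abs_mul, abs_of_pos hUt, abs_of_pos hVt0,
      abs_of_pos ha0, abs_of_pos (by positivity : (0:ℝ) < (ε^2)⁻¹)]
  -- apply the master lemma
  obtain ⟨c, C, hc0, hcC, hRS⟩ :=
    masterAux (T := T₁) (ν := (n:ℝ)-1) (kg := 2*k*γ) (c₂ := 3*m*Kd)
      hT1pos hn0 hc20 (by positivity)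
      (e₁ := fun t => F t * U t + a*((ε^2)⁻¹ * F t * V t))
      (e₂ := fun t => F t * U t - a*((ε^2)⁻¹ * F t * V t))
      hRd hSd hRpos hSleR hE1 hE2
  have hC0 : 0 < C := lt_of_lt_of_le hc0 hcC
  refine ⟨c/5, C*(1+a⁻¹), by positivity, ?_, ?_⟩
  · have hainv : 0 < a⁻¹ := by positivity
    nlinarith
  intro t ht
  have ht0 : 0 < t := lt_of_lt_of_le hT1pos ht
  obtain ⟨hlow, hhigh⟩ := hRS t ht
  have h5V := hR5V t ht
  have hVR := hVle t ht
  have haUt := haU t ht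
  have hUt := hUpos t ht
  have hP0 : 0 < t ^ (-((n:ℝ)-1)/2) * Real.exp (-t) := by positivity
  have hUlt : U t ≤ a⁻¹ * R t := by
    rw [← mul_le_mul_iff_right₀ ha0]
    calc a * U t ≤ R t := haUt
    _ = a * (a⁻¹ * R t) := by field_simp
  constructor
  · linarith
  · have hRC : a⁻¹ * R t ≤ a⁻¹ * (C * t ^ (-((n:ℝ)-1)/2) * Real.exp (-t)) :=
      mul_le_mul_of_nonneg_left hhigh (by positivity)
    have h1 : V t + U t ≤ R t + a⁻¹ * R t := by linarith
    have h3 : (C * t ^ (-((n:ℝ)-1)/2) * Real.exp (-t))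
        + a⁻¹ * (C * t ^ (-((n:ℝ)-1)/2) * Real.exp (-t))
        = C*(1+a⁻¹) * t ^ (-((n:ℝ)-1)/2) * Real.exp (-t) := by ring
    linarith [h1, hRC, hhigh, h3.le, h3.ge]
end

section
/- Let k > 0, K > k, set κ = min(1, K/k − 1), let m > 0, Λ > 0, ε₁ > 0, c < ∞, and let f: ℝ → ℝ satisfy |f(τ) − |τ|^k| ≤ c|τ|^K for all τ ∈ ℝ. Then there exists C < ∞ such that for every ε ∈ (0, ε₁) and all real numbers V̂, Û, Ṽ, Ũ ∈ [−Λ, Λ], with V = V̂ + Ṽ and U = Û + Ũ, satisfying ε₁|U| ≤ V/2 and |Ṽ| ≤ V̂/2, one has | f(ε^{2/k}(V² − ε²U²)) − ε² V̂^{2k} | ≤ C ( ε^{2+2κ} V̂^{2k} + ε² V̂^{2k−1} |Ṽ| ). -/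
open Real in
lemma stmt8_aux (k : ℝ) (hk : 0 < k) : ∃ L : ℝ, 0 ≤ L ∧ ∀ x : ℝ, 3/16 ≤ x → x ≤ 9/4 →
    |x ^ k - 1| ≤ L * |x - 1| := by
  obtain ⟨n, hn⟩ := exists_nat_ge k
  refine ⟨(n : ℝ) * (9/4 : ℝ) ^ (n - 1), by positivity, ?_⟩
  intro x hx1 hx2
  have hx0 : (0:ℝ) < x := by linarith
  have hS : ∀ y : ℝ, 0 ≤ y → y ≤ 9/4 → (∑ i ∈ Finset.range n, y ^ i) ≤ (n:ℝ) * (9/4)^(n-1) := by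
    intro y hy0 hy2
    calc (∑ i ∈ Finset.range n, y ^ i) ≤ ∑ i ∈ Finset.range n, (9/4:ℝ)^(n-1) := by
          apply Finset.sum_le_sum
          intro i hi
          have hi2 := Finset.mem_range.mp hi
          calc y ^ i ≤ (9/4:ℝ) ^ i := by apply pow_le_pow_left₀ hy0 hy2
            _ ≤ (9/4:ℝ) ^ (n-1) := by
                apply pow_le_pow_right₀ (by norm_num)
                omega
      _ = (n:ℝ) * (9/4)^(n-1) := by
          rw [Finset.sum_const, Finset.card_range, nsmul_eq_mul]
  have hgeo : (∑ i ∈ Finset.range n, x ^ i) * (x - 1) = x ^ n - 1 := geom_sum_mul x n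
  have hSx := hS x hx0.le hx2
  have hSnn : 0 ≤ (∑ i ∈ Finset.range n, x ^ i) := by positivity
  rcases le_total 1 x with h1 | h1
  · -- x ≥ 1
    have hk1 : 1 ≤ x ^ k := Real.one_le_rpow h1 hk.le
    have hkn : x ^ k ≤ x ^ n := by
      rw [← Real.rpow_natCast x n]
      exact Real.rpow_le_rpow_of_exponent_le h1 hn
    rw [abs_of_nonneg (by linarith), abs_of_nonneg (by linarith)]
    nlinarith [hgeo, hSx, hSnn]
  · -- x ≤ 1
    have hk1 : x ^ k ≤ 1 := Real.rpow_le_one hx0.le h1 hk.le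
    have hkn : x ^ (n:ℕ) ≤ x ^ k := by
      rw [← Real.rpow_natCast x n]
      exact Real.rpow_le_rpow_of_exponent_ge hx0 h1 hn
    have hSn : (∑ i ∈ Finset.range n, x ^ i) ≤ (n:ℝ) := by
      calc (∑ i ∈ Finset.range n, x ^ i) ≤ ∑ i ∈ Finset.range n, (1:ℝ) := by
            apply Finset.sum_le_sum
            intro i _
            exact pow_le_one₀ hx0.le h1
        _ = (n:ℝ) := by simp
    have h94 : (1:ℝ) ≤ (9/4:ℝ)^(n-1) := one_le_pow₀ (by norm_num)
    rw [abs_of_nonpos (by linarith), abs_of_nonpos (by linarith)]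
    nlinarith [hgeo, hSn, hSnn, sq_nonneg ((n:ℝ) - ∑ i ∈ Finset.range n, x ^ i)]


set_option maxHeartbeats 2000000 in
/-- Lemma `f-is-u`: under `|f(τ) − |τ|^k| ≤ c|τ|^K`, for
`ε ∈ (0, ε₁)` and `V̂, Û, Ṽ, Ũ ∈ [−Λ, Λ]` with `V = V̂+Ṽ`, `U = Û+Ũ`,
`ε₁|U| ≤ V/2`, `|Ṽ| ≤ V̂/2`, one has
`|f(ε^{2/k}(V²−ε²U²)) − ε² V̂^{2k}| ≤ C (ε^{2+2κ} V̂^{2k} + ε² V̂^{2k−1} |Ṽ|)`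
with `κ = min(1, K/k − 1)`. -/
theorem stmt8 (k K : ℝ) (hk : 0 < k) (hkK : k < K) (m Λ ε₁ c : ℝ)
    (hm : 0 < m) (hΛ : 0 < Λ) (hε₁ : 0 < ε₁)
    (f : ℝ → ℝ) (hf : ∀ τ : ℝ, |f τ - |τ| ^ k| ≤ c * |τ| ^ K) :
    ∃ C : ℝ, ∀ ε ∈ Set.Ioo 0 ε₁, ∀ Vh Uh Vt Ut : ℝ,
      Vh ∈ Set.Icc (-Λ) Λ → Uh ∈ Set.Icc (-Λ) Λ →
      Vt ∈ Set.Icc (-Λ) Λ → Ut ∈ Set.Icc (-Λ) Λ →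
      ε₁ * |Uh + Ut| ≤ (Vh + Vt) / 2 → |Vt| ≤ Vh / 2 →
      |f (ε ^ (2 / k) * ((Vh + Vt) ^ 2 - ε ^ 2 * (Uh + Ut) ^ 2)) - ε ^ 2 * Vh ^ (2 * k)|
        ≤ C * (ε ^ (2 + 2 * min 1 (K / k - 1)) * Vh ^ (2 * k)
              + ε ^ 2 * Vh ^ (2 * k - 1) * |Vt|) := by
  obtain ⟨L, hL0, hL⟩ := stmt8_aux k hk
  set κ : ℝ := min 1 (K / k - 1) with hκdef
  have hKk1 : 0 < K / k - 1 := by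
    have : 1 < K / k := (one_lt_div hk).mpr hkK
    linarith
  have hκ0 : 0 < κ := lt_min one_pos hKk1
  have hκ1 : κ ≤ 1 := min_le_left _ _
  have hκK : κ ≤ K / k - 1 := min_le_right _ _
  set M : ℝ := max 1 ε₁ with hM
  have hM1 : (1:ℝ) ≤ M := le_max_left _ _
  have hMε : ε₁ ≤ M := le_max_right _ _
  set δ : ℝ := K / k - 1 - κ with hδ
  clear_value κ M δ
  have hδ0 : 0 ≤ δ := by simp only [hδ]; linarith
  set C₁ : ℝ := |c| * (9/4 : ℝ) ^ k * ((9/4) * Λ ^ 2) ^ (K - k) * M ^ (2*δ) with hC₁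
  set C₂ : ℝ := L * (9 / (16 * ε₁ ^ 2)) * M ^ (2 - 2*κ) with hC₂
  clear_value C₁ C₂
  have hC₁0 : 0 ≤ C₁ := by
    rw [hC₁]
    have : (0:ℝ) < (9/4:ℝ) ^ k := Real.rpow_pos_of_pos (by norm_num) _
    have : (0:ℝ) < ((9/4) * Λ ^ 2 : ℝ) ^ (K - k) := Real.rpow_pos_of_pos (by positivity) _
    positivity
  have hC₂0 : 0 ≤ C₂ := by
    rw [hC₂]
    have : (0:ℝ) < M ^ (2 - 2*κ) := Real.rpow_pos_of_pos (by linarith) _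
    positivity
  refine ⟨C₁ + C₂ + 5 * L / 2, ?_⟩
  rintro ε ⟨hε0, hεlt⟩ Vh Uh Vt Ut hVhm hUhm hVtm hUtm hUb hVtb
  have hVh0 : 0 ≤ Vh := by
    have := abs_nonneg Vt; linarith
  have hVhΛ : Vh ≤ Λ := hVhm.2
  rcases eq_or_lt_of_le hVh0 with h0 | hVhp
  · -- degenerate case Vh = 0
    have hVh' : Vh = 0 := h0.symm
    have hVt0 : Vt = 0 := by
      have : |Vt| ≤ 0 := by rw [hVh'] at hVtb; linarith
      exact abs_nonpos_iff.mp this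
    have hU0 : Uh + Ut = 0 := by
      have h1 : ε₁ * |Uh + Ut| ≤ 0 := by rw [hVh', hVt0] at hUb; linarith
      have h2 : 0 ≤ |Uh + Ut| := abs_nonneg _
      have : |Uh + Ut| ≤ 0 := by nlinarith
      exact abs_nonpos_iff.mp this
    have hf0 : f 0 = 0 := by
      have h := hf 0
      simp only [abs_zero, Real.zero_rpow (ne_of_gt hk),
        Real.zero_rpow (ne_of_gt (lt_trans hk hkK)), sub_zero, mul_zero] at h
      exact abs_nonpos_iff.mp h
    rw [hVh', hVt0, hU0]
    norm_num
    rw [Real.zero_rpow (by positivity : (2*k) ≠ 0), hf0]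
    simp
  · -- main case Vh > 0
    have hVlow : Vh / 2 ≤ Vh + Vt := by
      have := neg_abs_le Vt; linarith
    have hVhigh : Vh + Vt ≤ 3 * Vh / 2 := by
      have := le_abs_self Vt; linarith
    have hVpos : 0 < Vh + Vt := by linarith
    have hUabs : ε * |Uh + Ut| ≤ (Vh + Vt) / 2 :=
      le_trans (mul_le_mul_of_nonneg_right hεlt.le (abs_nonneg _)) hUb
    have hU2 : ε ^ 2 * (Uh + Ut) ^ 2 ≤ (Vh + Vt) ^ 2 / 4 := by
      have h : (ε * |Uh + Ut|) ^ 2 ≤ ((Vh + Vt) / 2) ^ 2 :=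
        pow_le_pow_left₀ (by positivity) hUabs 2
      rw [mul_pow, sq_abs] at h
      linarith
    have hUVh : (Uh + Ut) ^ 2 ≤ 9 / (16 * ε₁ ^ 2) * Vh ^ 2 := by
      have h1 : ε₁ * |Uh + Ut| ≤ 3 * Vh / 4 := by linarith
      have h2 : (ε₁ * |Uh + Ut|) ^ 2 ≤ (3 * Vh / 4) ^ 2 :=
        pow_le_pow_left₀ (by positivity) h1 2
      rw [mul_pow, sq_abs] at h2
      rw [div_mul_eq_mul_div, le_div_iff₀ (by positivity)]
      linarith [h2]
    set A : ℝ := (Vh + Vt) ^ 2 - ε ^ 2 * (Uh + Ut) ^ 2 with hAdef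
    clear_value A
    have hB2 : (0:ℝ) < Vh ^ 2 := by positivity
    have hAlow : 3/16 * Vh ^ 2 ≤ A := by
      have hsq : (Vh/2)^2 ≤ (Vh+Vt)^2 := pow_le_pow_left₀ (by positivity) hVlow 2
      have e : (Vh/2:ℝ)^2 = Vh^2/4 := by ring
      rw [hAdef]
      rw [e] at hsq
      linarith [hU2]
    have hAhigh : A ≤ 9/4 * Vh ^ 2 := by
      have h0 : (0:ℝ) ≤ ε ^ 2 * (Uh + Ut) ^ 2 := by positivity
      have hsq : (Vh+Vt)^2 ≤ (3*Vh/2)^2 := pow_le_pow_left₀ (by positivity) hVhigh 2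
      have e : (3*Vh/2:ℝ)^2 = 9/4 * Vh^2 := by ring
      rw [hAdef]
      rw [e] at hsq
      linarith
    have hApos : 0 < A := by linarith
    -- τ and its powers
    set τ : ℝ := ε ^ (2/k) * A with hτdef
    clear_value τ
    have hρpos : (0:ℝ) < ε ^ (2/k) := Real.rpow_pos_of_pos hε0 _
    have hτpos : 0 < τ := by rw [hτdef]; exact mul_pos hρpos hApos
    have hek : (ε ^ (2/k)) ^ k = ε ^ 2 := by
      rw [← Real.rpow_natCast ε 2, ← Real.rpow_mul hε0.le]
      congr 1
      push_cast
      field_simp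
    have hτk : |τ| ^ k = ε ^ 2 * A ^ k := by
      rw [abs_of_pos hτpos, hτdef, Real.mul_rpow hρpos.le hApos.le, hek]
    have heK : (ε ^ (2/k)) ^ K = ε ^ (2/k*K) := by
      rw [← Real.rpow_mul hε0.le]
    have hτK : |τ| ^ K = ε ^ (2/k*K) * A ^ K := by
      rw [abs_of_pos hτpos, hτdef, Real.mul_rpow hρpos.le hApos.le, heK]
    have hBk : (Vh ^ 2 : ℝ) ^ (k:ℝ) = Vh ^ (2*k) := by
      rw [← Real.rpow_natCast Vh 2, ← Real.rpow_mul hVh0]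
      norm_num
    have hVh2k : (0:ℝ) < Vh ^ (2*k) := Real.rpow_pos_of_pos hVhp _
    -- Term 1 : |f τ - τ^k| ≤ C₁ ε^{2+2κ} Vh^{2k}
    have hterm1 : |f τ - |τ| ^ k| ≤ C₁ * (ε ^ (2 + 2*κ) * Vh ^ (2*k)) := by
      have h1 : |f τ - |τ| ^ k| ≤ |c| * |τ| ^ K := by
        have h0 : (0:ℝ) ≤ |τ| ^ K := Real.rpow_nonneg (abs_nonneg _) _
        exact le_trans (hf τ) (mul_le_mul_of_nonneg_right (le_abs_self c) h0)
      refine le_trans h1 ?_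
      rw [hτK]
      have hAK : A ^ K = A ^ k * A ^ (K - k) := by
        rw [← Real.rpow_add hApos]; ring_nf
      have hAk : A ^ k ≤ (9/4:ℝ) ^ k * Vh ^ (2*k) := by
        rw [← hBk, ← Real.mul_rpow (by norm_num) hB2.le]
        exact Real.rpow_le_rpow hApos.le hAhigh hk.le
      have hAKk : A ^ (K - k) ≤ ((9/4) * Λ ^ 2) ^ (K - k) := by
        apply Real.rpow_le_rpow hApos.le _ (by linarith)
        have : Vh^2 ≤ Λ^2 := pow_le_pow_left₀ hVh0 hVhΛ 2
        linarith
      have heps : ε ^ (2/k*K) = ε ^ (2 + 2*κ) * ε ^ (2*δ) := by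
        rw [← Real.rpow_add hε0]
        congr 1
        field_simp [hδ]
        have hkK' : k * (K / k) = K := by field_simp
        rw [hδ]; linear_combination (-1:ℝ) * hkK'
      have hεM : ε ^ (2*δ) ≤ M ^ (2*δ) := by
        apply Real.rpow_le_rpow hε0.le (le_trans hεlt.le hMε) (by linarith)
      calc |c| * (ε ^ (2/k*K) * A ^ K)
          = |c| * ε ^ (2 + 2*κ) * ε ^ (2*δ) * (A ^ k * A ^ (K-k)) := by
            rw [heps, hAK]; ring
        _ ≤ |c| * ε ^ (2 + 2*κ) * M ^ (2*δ) * (((9/4:ℝ) ^ k * Vh ^ (2*k)) * ((9/4) * Λ ^ 2) ^ (K - k)) := by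
            have h2 : (0:ℝ) ≤ ε ^ (2+2*κ) := Real.rpow_nonneg hε0.le _
            have h3 : (0:ℝ) ≤ A ^ k := Real.rpow_nonneg hApos.le _
            have h4 : (0:ℝ) ≤ A ^ (K-k) := Real.rpow_nonneg hApos.le _
            gcongr
        _ = C₁ * (ε ^ (2 + 2*κ) * Vh ^ (2*k)) := by rw [hC₁]; ring
    -- Term 2 : ε² |A^k - Vh^{2k}| bound
    have hxmem1 : 3/16 ≤ A / Vh ^ 2 := by
      rw [le_div_iff₀ hB2]; linarith
    have hxmem2 : A / Vh ^ 2 ≤ 9/4 := by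
      rw [div_le_iff₀ hB2]; linarith
    have hLx := hL (A / Vh ^ 2) hxmem1 hxmem2
    have hdiv : (A / Vh ^ 2 : ℝ) ^ (k:ℝ) = A ^ k / Vh ^ (2*k) := by
      rw [Real.div_rpow hApos.le hB2.le, hBk]
    have hkey : |A ^ k - Vh ^ (2*k)| ≤ L * Vh ^ (2*k) / Vh ^ 2 * |A - Vh ^ 2| := by
      rw [hdiv] at hLx
      have e1 : |A ^ k / Vh ^ (2*k) - 1| = |A ^ k - Vh ^ (2*k)| / Vh ^ (2*k) := by
        have e : A ^ k / Vh ^ (2*k) - 1 = (A ^ k - Vh ^ (2*k)) / Vh ^ (2*k) := by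
          field_simp
        rw [e, abs_div, abs_of_pos hVh2k]
      have e2 : |A / Vh ^ 2 - 1| = |A - Vh ^ 2| / Vh ^ 2 := by
        have e : A / Vh ^ 2 - 1 = (A - Vh ^ 2) / Vh ^ 2 := by
          field_simp
        rw [e, abs_div, abs_of_pos hB2]
      rw [e1, e2] at hLx
      rw [div_le_iff₀ hVh2k] at hLx
      calc |A ^ k - Vh ^ (2*k)| ≤ L * (|A - Vh ^ 2| / Vh ^ 2) * Vh ^ (2*k) := hLx
        _ = L * Vh ^ (2*k) / Vh ^ 2 * |A - Vh ^ 2| := by ring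
    have hAB : |A - Vh ^ 2| ≤ 5/2 * Vh * |Vt| + ε ^ 2 * (Uh + Ut) ^ 2 := by
      have e : A - Vh ^ 2 = Vt * ((Vh + Vt) + Vh) - ε ^ 2 * (Uh + Ut) ^ 2 := by
        simp only [hAdef]; ring
      rw [e]
      refine le_trans (abs_sub _ _) ?_
      rw [abs_mul, abs_of_nonneg (by positivity : (0:ℝ) ≤ ε ^ 2 * (Uh + Ut) ^ 2),
        abs_of_pos (show (0:ℝ) < (Vh + Vt) + Vh by linarith)]
      have h5 : (Vh + Vt) + Vh ≤ 5/2 * Vh := by linarith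
      have h6 := mul_le_mul_of_nonneg_left h5 (abs_nonneg Vt)
      linarith
    have hpow1 : Vh ^ (2*k) / Vh = Vh ^ (2*k - 1) := by
      rw [Real.rpow_sub hVhp, Real.rpow_one]
    have hε4 : (ε:ℝ) ^ (4:ℕ) ≤ M ^ (2 - 2*κ) * ε ^ (2 + 2*κ) := by
      have e1 : (ε:ℝ) ^ (4:ℕ) = ε ^ (2 - 2*κ) * ε ^ (2 + 2*κ) := by
        rw [← Real.rpow_natCast ε 4, ← Real.rpow_add hε0]
        congr 1
        push_cast
        ring
      rw [e1]
      have h1 : ε ^ (2 - 2*κ) ≤ M ^ (2 - 2*κ) :=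
        Real.rpow_le_rpow hε0.le (le_trans hεlt.le hMε) (by linarith)
      have h2 : (0:ℝ) ≤ ε ^ (2 + 2*κ) := Real.rpow_nonneg hε0.le _
      exact mul_le_mul_of_nonneg_right h1 h2
    have hterm2 : ε ^ 2 * |A ^ k - Vh ^ (2*k)| ≤
        C₂ * (ε ^ (2 + 2*κ) * Vh ^ (2*k)) + 5*L/2 * (ε ^ 2 * Vh ^ (2*k-1) * |Vt|) := by
      have hε2 : (0:ℝ) ≤ ε ^ 2 := by positivity
      have hD : (0:ℝ) ≤ L * Vh ^ (2*k) / Vh ^ 2 :=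
        div_nonneg (mul_nonneg hL0 hVh2k.le) hB2.le
      have hQ2 : Vh ^ (2*k) / Vh ^ 2 * Vh = Vh ^ (2*k-1) := by
        rw [← hpow1]
        field_simp
      have hQ3 : Vh ^ (2*k) / Vh ^ 2 * Vh ^ 2 = Vh ^ (2*k) :=
        div_mul_cancel₀ _ (ne_of_gt hB2)
      have hQnn : (0:ℝ) ≤ Vh ^ (2*k) / Vh ^ 2 := (div_pos hVh2k hB2).le
      calc ε ^ 2 * |A ^ k - Vh ^ (2*k)|
          ≤ ε ^ 2 * (L * Vh ^ (2*k) / Vh ^ 2 * |A - Vh ^ 2|) :=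
            mul_le_mul_of_nonneg_left hkey hε2
        _ ≤ ε ^ 2 * (L * Vh ^ (2*k) / Vh ^ 2 * (5/2 * Vh * |Vt| + ε ^ 2 * (Uh + Ut) ^ 2)) :=
            mul_le_mul_of_nonneg_left (mul_le_mul_of_nonneg_left hAB hD) hε2
        _ = 5*L/2 * (ε ^ 2 * (Vh ^ (2*k) / Vh ^ 2 * Vh) * |Vt|)
              + L * ε ^ (4:ℕ) * ((Uh + Ut) ^ 2 * (Vh ^ (2*k) / Vh ^ 2)) := by ring
        _ ≤ 5*L/2 * (ε ^ 2 * Vh ^ (2*k-1) * |Vt|)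
              + L * ε ^ (4:ℕ) * ((9 / (16 * ε₁ ^ 2) * Vh ^ 2) * (Vh ^ (2*k) / Vh ^ 2)) := by
            rw [hQ2]
            have hb := mul_le_mul_of_nonneg_right hUVh hQnn
            have hc := mul_le_mul_of_nonneg_left hb (by positivity : (0:ℝ) ≤ L * ε ^ (4:ℕ))
            linarith
        _ = L * (9 / (16 * ε₁ ^ 2)) * (Vh ^ (2*k) * ε ^ (4:ℕ))
              + 5*L/2 * (ε ^ 2 * Vh ^ (2*k-1) * |Vt|) := by
            have hVhne : Vh ≠ 0 := ne_of_gt hVhp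
            have hε₁ne : ε₁ ≠ 0 := ne_of_gt hε₁
            field_simp
            ring
        _ ≤ L * (9 / (16 * ε₁ ^ 2)) * (Vh ^ (2*k) * (M ^ (2 - 2*κ) * ε ^ (2 + 2*κ)))
              + 5*L/2 * (ε ^ 2 * Vh ^ (2*k-1) * |Vt|) := by
            have hcoef : (0:ℝ) ≤ L * (9 / (16 * ε₁ ^ 2)) * Vh ^ (2*k) := by
              have := hVh2k.le
              positivity
            have := mul_le_mul_of_nonneg_left hε4 hcoef
            linarith
        _ = C₂ * (ε ^ (2 + 2*κ) * Vh ^ (2*k)) + 5*L/2 * (ε ^ 2 * Vh ^ (2*k-1) * |Vt|) := by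
            rw [hC₂]
            ring
    -- combine
    have htri : |f τ - ε ^ 2 * Vh ^ (2*k)| ≤ |f τ - |τ| ^ k| + ε ^ 2 * |A ^ k - Vh ^ (2*k)| := by
      have : f τ - ε ^ 2 * Vh ^ (2*k) = (f τ - |τ| ^ k) + (ε ^ 2 * A ^ k - ε ^ 2 * Vh ^ (2*k)) := by
        rw [hτk]; ring
      rw [this]
      refine le_trans (abs_add_le _ _) ?_
      have : |ε ^ 2 * A ^ k - ε ^ 2 * Vh ^ (2*k)| = ε ^ 2 * |A ^ k - Vh ^ (2*k)| := by
        rw [← mul_sub, abs_mul, abs_of_pos (by positivity : (0:ℝ) < ε ^ 2)]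
      linarith [this.le, this.ge]
    have hT1 : (0:ℝ) ≤ ε ^ (2 + 2*κ) * Vh ^ (2*k) := by positivity
    have hT2 : (0:ℝ) ≤ ε ^ 2 * Vh ^ (2*k-1) * |Vt| := by
      have : (0:ℝ) < Vh ^ (2*k-1) := Real.rpow_pos_of_pos hVhp _
      positivity
    calc |f τ - ε ^ 2 * Vh ^ (2*k)|
        ≤ |f τ - |τ| ^ k| + ε ^ 2 * |A ^ k - Vh ^ (2*k)| := htri
      _ ≤ C₁ * (ε ^ (2 + 2*κ) * Vh ^ (2*k)) +
          (C₂ * (ε ^ (2 + 2*κ) * Vh ^ (2*k)) + 5*L/2 * (ε ^ 2 * Vh ^ (2*k-1) * |Vt|)) := by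
          linarith
      _ ≤ (C₁ + C₂ + 5*L/2) * (ε ^ (2 + 2*κ) * Vh ^ (2*k) + ε ^ 2 * Vh ^ (2*k-1) * |Vt|) := by
          have h1 := mul_nonneg hC₁0 hT2
          have h2 := mul_nonneg hC₂0 hT2
          have h3 := mul_nonneg (by linarith : (0:ℝ) ≤ 5*L/2) hT1
          linarith [h1, h2, h3]
end

section
/- Let k > 0, K > k, κ = min(1, K/k − 1), m > 0, Λ > 0, ε₁ ∈ (0, m), R > 0, c < ∞, and let f: ℝ → ℝ satisfy |f(τ) − |τ|^k| ≤ c|τ|^K and |f(τ)| ≤ (c+1)|τ|^k for all τ ∈ ℝ. Then there exists C < ∞ such that for every ε ∈ (0, ε₁), setting ω = √(m²−ε²), and all real numbers V̂, Û, Ṽ, Ũ ∈ [−Λ, Λ], with V = V̂ + Ṽ, U = Û + Ũ, satisfying ε₁|U| ≤ V/2, |Ṽ| ≤ V̂/2, and |Û| ≤ R·V̂, the following three inequalities hold: (i) | G₁ − (1/(m+ω) − 1/(2m)) V̂ − k ε² V^{2k−1} U² | ≤ C ( (ε^{2K/k−2} + ε⁴) V̂^{2k+1} + V̂^{2k−1}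 Ṽ² ); (ii) | G₂ − ε² V̂^{2k} Û − (m−ω) Û | ≤ C ( ε^{2+2κ} V̂^{2k} + ε² V̂^{2k−1} |Ṽ| ) |U| + ε² V̂^{2k} |Ũ|; (iii) |G₁| + |G₂| ≤ C ε^{2κ} V̂ + C V̂^{2k−1} Ṽ². -/
open Real Set

/-- Lipschitz bound for `x ↦ x ^ p` on a positive interval. -/
lemma aux_lip (p a b : ℝ) (ha : 0 < a) :
    ∃ L, 0 ≤ L ∧ ∀ x ∈ Icc a b, ∀ y ∈ Icc a b, |x ^ p - y ^ p| ≤ L * |x - y| := by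
  refine ⟨|p| * max (a ^ (p - 1)) (b ^ (p - 1)), by positivity, fun x hx y hy => ?_⟩
  have hderiv : ∀ z ∈ Icc a b, HasDerivWithinAt (fun t : ℝ => t ^ p)
      (p * z ^ (p - 1)) (Icc a b) z := by
    intro z hz
    exact (Real.hasDerivAt_rpow_const (Or.inl (ha.trans_le hz.1).ne')).hasDerivWithinAt
  have hbound : ∀ z ∈ Icc a b, ‖p * z ^ (p - 1)‖ ≤ |p| * max (a ^ (p - 1)) (b ^ (p - 1)) := by
    intro z hz
    rw [Real.norm_eq_abs, abs_mul]
    refine mul_le_mul_of_nonneg_left ?_ (abs_nonneg p)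
    rw [abs_of_nonneg (Real.rpow_nonneg (ha.trans_le hz.1).le _)]
    rcases le_or_gt 0 (p - 1) with h | h
    · exact le_max_of_le_right (Real.rpow_le_rpow (ha.trans_le hz.1).le hz.2 h)
    · exact le_max_of_le_left (Real.rpow_le_rpow_of_nonpos ha hz.1 h.le)
  have := (convex_Icc a b).norm_image_sub_le_of_norm_hasDerivWithin_le hderiv hbound hy hx
  simpa [Real.norm_eq_abs] using this

/-- Second-order Taylor bound for `(1+s)^p` near `s = 0`, on `[-1/2, 1/2]`. -/
lemma aux_taylor_s9 (p : ℝ) :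
    ∃ D, 0 ≤ D ∧ ∀ s ∈ Icc (-(1/2) : ℝ) (1/2), |(1 + s) ^ p - 1 - p * s| ≤ D * s ^ 2 := by
  obtain ⟨L, hL0, hL⟩ := aux_lip (p - 1) (1/2) (3/2) (by norm_num)
  refine ⟨|p| * L, by positivity, fun s hs => ?_⟩
  -- the function g t = (1+t)^p - p*t has derivative p*((1+t)^(p-1) - 1)
  set g : ℝ → ℝ := fun t => (1 + t) ^ p - p * t with hg
  have hmem : ∀ t ∈ uIcc (0:ℝ) s, t ∈ Icc (-(1/2):ℝ) (1/2) := by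
    intro t ht
    rcases le_total (0:ℝ) s with h | h
    · rw [uIcc_of_le h] at ht; exact ⟨le_trans (by norm_num) ht.1, le_trans ht.2 hs.2⟩
    · rw [uIcc_of_ge h] at ht; exact ⟨le_trans hs.1 ht.1, le_trans ht.2 (by norm_num)⟩
  have hderiv : ∀ t ∈ uIcc (0:ℝ) s,
      HasDerivWithinAt g (p * ((1 + t) ^ (p - 1) - 1)) (uIcc (0:ℝ) s) t := by
    intro t ht
    have h1t : (0:ℝ) < 1 + t := by have := (hmem t ht).1; linarith
    have h1 : HasDerivAt (fun t : ℝ => (1 + t) ^ p) (p * (1 + t) ^ (p - 1) * 1) t :=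
      HasDerivAt.comp t (Real.hasDerivAt_rpow_const (Or.inl h1t.ne'))
        ((hasDerivAt_id t).const_add 1)
    have h2 : HasDerivAt g (p * (1 + t) ^ (p - 1) * 1 - p) t := by
      have h3 : HasDerivAt (fun x => (1 + x) ^ p - p * x)
          (p * (1 + t) ^ (p - 1) * 1 - p * 1) t := h1.sub ((hasDerivAt_id t).const_mul p)
      simp only [mul_one] at h3 ⊢
      exact h3
    have : HasDerivAt g (p * ((1 + t) ^ (p - 1) - 1)) t := by
      convert h2 using 1; ring
    exact this.hasDerivWithinAt
  have hbound : ∀ t ∈ uIcc (0:ℝ) s, ‖p * ((1 + t) ^ (p - 1) - 1)‖ ≤ |p| * (L * |s|) := by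
    intro t ht
    rw [Real.norm_eq_abs, abs_mul]
    refine mul_le_mul_of_nonneg_left ?_ (abs_nonneg p)
    have h1t := hmem t ht
    have h1 : (1 + t) ∈ Icc (1/2 : ℝ) (3/2) := by
      constructor <;> [linarith [h1t.1]; linarith [h1t.2]]
    have h2 : (1:ℝ) ∈ Icc (1/2 : ℝ) (3/2) := by norm_num
    have := hL (1 + t) h1 1 h2
    rw [Real.one_rpow] at this
    refine this.trans ?_
    have hts : |1 + t - 1| ≤ |s| := by
      rcases le_total (0:ℝ) s with h | h
      · rw [uIcc_of_le h] at ht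
        rw [abs_of_nonneg (by linarith [ht.1] : (0:ℝ) ≤ 1 + t - 1), abs_of_nonneg h]
        linarith [ht.2]
      · rw [uIcc_of_ge h] at ht
        rw [abs_of_nonpos (by linarith [ht.2] : 1 + t - 1 ≤ (0:ℝ)), abs_of_nonpos h]
        linarith [ht.1]
    exact mul_le_mul_of_nonneg_left hts hL0
  have key := (convex_uIcc (0:ℝ) s).norm_image_sub_le_of_norm_hasDerivWithin_le hderiv hbound
    (left_mem_uIcc) (right_mem_uIcc)
  have hg0 : g 0 = 1 := by simp [hg]
  rw [Real.norm_eq_abs, Real.norm_eq_abs, hg0] at key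
  have : |(1 + s) ^ p - 1 - p * s| = |g s - 1| := by rw [hg]; ring_nf
  rw [this]
  calc |g s - 1| ≤ |p| * (L * |s|) * |s - 0| := key
    _ = |p| * (L * |s|) * |s| := by rw [sub_zero]
    _ = |p| * L * s ^ 2 := by rw [← sq_abs]; ring

lemma aux_eps {ε ε₁ : ℝ} (h0 : 0 < ε) (h1 : ε ≤ ε₁) {a : ℝ} (ha : 0 ≤ a) :
    ε ^ a ≤ max 1 (ε₁ ^ a) := by
  rcases le_total ε 1 with h | h
  · exact le_max_of_le_left (Real.rpow_le_one h0.le h ha)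
  · exact le_max_of_le_right (Real.rpow_le_rpow h0.le h1 ha)

lemma rpow_two' (x : ℝ) : x ^ ((2:ℝ)) = x ^ (2:ℕ) := by
  rw [show ((2:ℝ)) = ((2:ℕ):ℝ) by norm_num, Real.rpow_natCast]

lemma rpow_four' (x : ℝ) : x ^ ((4:ℝ)) = x ^ (4:ℕ) := by
  rw [show ((4:ℝ)) = ((4:ℕ):ℝ) by norm_num, Real.rpow_natCast]

lemma rpow_mul_self' {x : ℝ} (hx : 0 < x) (p : ℝ) : x ^ p * x = x ^ (p + 1) :=
  (Real.rpow_add_one hx.ne' p).symm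

lemma rpow_sq_eq {x : ℝ} (hx : 0 ≤ x) (p : ℝ) : (x ^ (2:ℕ)) ^ p = x ^ (2 * p) := by
  rw [← rpow_two' x, ← Real.rpow_mul hx]


set_option maxHeartbeats 1000000 in
/-- improved bounds on `G₁`, `G₂`, Lemma `g1-g2-bounds-better`:
with `ω = √(m²−ε²)`, `V = V̂+Ṽ`, `U = Û+Ũ`,
`G₁ = −ε⁻² f(ε^{2/k}(V²−ε²U²)) V + V̂^{2k+1} + (1+2k) V̂^{2k} Ṽ + (1/(m+ω) − 1/(2m)) V̂`,
`G₂ = f(ε^{2/k}(V²−ε²U²)) U + (m−ω) Û`, one has the three stated inequalities,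
where `κ = min(1, K/k − 1)`. -/
theorem stmt9 (k K : ℝ) (hk : 0 < k) (hkK : k < K) (m Λ ε₁ R c : ℝ)
    (hm : 0 < m) (hΛ : 0 < Λ) (hε₁ : ε₁ ∈ Set.Ioo 0 m) (hR : 0 < R)
    (f : ℝ → ℝ)
    (hf1 : ∀ τ : ℝ, |f τ - |τ| ^ k| ≤ c * |τ| ^ K)
    (hf2 : ∀ τ : ℝ, |f τ| ≤ (c + 1) * |τ| ^ k) :
    ∃ C : ℝ, ∀ ε ∈ Set.Ioo 0 ε₁, ∀ Vh Uh Vt Ut : ℝ,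
      Vh ∈ Set.Icc (-Λ) Λ → Uh ∈ Set.Icc (-Λ) Λ →
      Vt ∈ Set.Icc (-Λ) Λ → Ut ∈ Set.Icc (-Λ) Λ →
      ∀ ω V U : ℝ, ω = Real.sqrt (m ^ 2 - ε ^ 2) → V = Vh + Vt → U = Uh + Ut →
      ε₁ * |U| ≤ V / 2 → |Vt| ≤ Vh / 2 → |Uh| ≤ R * Vh →
      ∀ G₁ G₂ : ℝ,
      G₁ = -(ε ^ (-2 : ℝ)) * f (ε ^ (2 / k) * (V ^ 2 - ε ^ 2 * U ^ 2)) * V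
            + Vh ^ (2 * k + 1) + (1 + 2 * k) * Vh ^ (2 * k) * Vt
            + (1 / (m + ω) - 1 / (2 * m)) * Vh →
      G₂ = f (ε ^ (2 / k) * (V ^ 2 - ε ^ 2 * U ^ 2)) * U + (m - ω) * Uh →
      (|G₁ - (1 / (m + ω) - 1 / (2 * m)) * Vh - k * ε ^ 2 * V ^ (2 * k - 1) * U ^ 2|
          ≤ C * ((ε ^ (2 * K / k - 2) + ε ^ 4) * Vh ^ (2 * k + 1)
                + Vh ^ (2 * k - 1) * Vt ^ 2)) ∧
      (|G₂ - ε ^ 2 * Vh ^ (2 * k) * Uh - (m - ω) * Uh|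
          ≤ C * (ε ^ (2 + 2 * min 1 (K / k - 1)) * Vh ^ (2 * k)
                + ε ^ 2 * Vh ^ (2 * k - 1) * |Vt|) * |U|
            + ε ^ 2 * Vh ^ (2 * k) * |Ut|) ∧
      (|G₁| + |G₂| ≤ C * ε ^ (2 * min 1 (K / k - 1)) * Vh
            + C * Vh ^ (2 * k - 1) * Vt ^ 2) := by
  obtain ⟨hε₁0, hε₁m⟩ := hε₁
  have hk0 : k ≠ 0 := hk.ne'
  have hKk1 : 1 < K / k := (one_lt_div hk).mpr hkK
  set κ := min 1 (K / k - 1) with hκdef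
  have hκ0 : 0 < κ := lt_min one_pos (by linarith)
  have hκ1 : κ ≤ 1 := min_le_left _ _
  have hκ2 : κ ≤ K / k - 1 := min_le_right _ _
  have h2Kk : 2 * K / k = 2 * (K / k) := by ring
  have hc0 : 0 ≤ c := by
    have h := hf1 1
    simp only [abs_one, Real.one_rpow, mul_one] at h
    exact (abs_nonneg _).trans h
  obtain ⟨D₁, hD₁0, hD₁⟩ := aux_taylor_s9 k
  obtain ⟨D₂, hD₂0, hD₂⟩ := aux_taylor_s9 (2 * k + 1)
  obtain ⟨L, hL0, hL⟩ := aux_lip k (1/8) 3 (by norm_num)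
  set B := max 1 (3 / 2 * Λ) with hBdef
  have hB1 : (1:ℝ) ≤ B := le_max_left _ _
  set M1 := ((3:ℝ)/2) ^ (2*k+1) with hM1def
  have hM10 : 0 ≤ M1 := Real.rpow_nonneg (by norm_num) _
  set M2 := ((3:ℝ)/2) ^ (2*k) with hM2def
  have hM20 : 0 ≤ M2 := Real.rpow_nonneg (by norm_num) _
  set BK := B ^ (2*(K-k)) with hBKdef
  have hBK0 : 0 ≤ BK := Real.rpow_nonneg (by linarith) _
  set E₁ := max 1 (ε₁ ^ (2 - 2*κ)) with hE₁def
  have hE₁0 : 0 ≤ E₁ := le_trans zero_le_one (le_max_left _ _)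
  set E₂ := max 1 (ε₁ ^ (2*K/k - 2 - 2*κ)) with hE₂def
  have hE₂0 : 0 ≤ E₂ := le_trans zero_le_one (le_max_left _ _)
  set E₃ := max 1 (ε₁ ^ (4 - 2*κ)) with hE₃def
  have hE₃0 : 0 ≤ E₃ := le_trans zero_le_one (le_max_left _ _)
  set ΛB := Λ ^ (2*k) with hΛBdef
  have hΛB0 : 0 ≤ ΛB := Real.rpow_nonneg hΛ.le _
  set q := 9 / (16*ε₁^2) with hqdef
  have hq0 : 0 ≤ q := by positivity
  set k4 := k / (4*ε₁^2) with hk4def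
  have hk40 : 0 ≤ k4 := by positivity
  set c₁a := D₁ / (16*ε₁^4) * M1 with hc₁adef
  have hc₁a0 : 0 ≤ c₁a := mul_nonneg (by positivity) hM10
  set c₁c := c * M1 * BK with hc₁cdef
  have hc₁c0 : 0 ≤ c₁c := mul_nonneg (mul_nonneg hc0 hM10) hBK0
  set c₂b := L * q * E₁ + c * M2 * BK * E₂ with hc₂bdef
  set C₁ := max c₁a (max D₂ c₁c) with hC₁def
  set C₂ := max (L * (5/2)) c₂b with hC₂def
  set c₃b := (c₁a*E₃ + c₁c*E₂ + k4*M1*E₁ + (c+1)*M1*E₁/(2*ε₁))*ΛB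
      + E₁/(2*m^3) + R*E₁/m with hc₃bdef
  set C₃ := max D₂ c₃b with hC₃def
  set C := max C₁ (max C₂ C₃) with hCdef
  have hCC₁ : C₁ ≤ C := le_max_left _ _
  have hCC₂ : C₂ ≤ C := le_trans (le_max_left _ _) (le_max_right _ _)
  have hCC₃ : C₃ ≤ C := le_trans (le_max_right _ _) (le_max_right _ _)
  have hCc₁a : c₁a ≤ C := le_trans (le_max_left _ _) hCC₁
  have hCD₂ : D₂ ≤ C := le_trans (le_trans (le_max_left _ _) (le_max_right _ _)) hCC₁
  have hCc₁c : c₁c ≤ C := le_trans (le_trans (le_max_right _ _) (le_max_right _ _)) hCC₁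
  have hCc₂a : L * (5/2) ≤ C := le_trans (le_max_left _ _) hCC₂
  have hCc₂b : c₂b ≤ C := le_trans (le_max_right _ _) hCC₂
  have hCc₃b : c₃b ≤ C := le_trans (le_max_right _ _) hCC₃
  have hC0 : 0 ≤ C := le_trans hc₁a0 hCc₁a
  refine ⟨C, ?_⟩
  intro ε hε Vh Uh Vt Ut hVhm hUhm hVtm hUtm ω V U hω hVd hUd hUV hVtle hUhle G₁ G₂ hG₁ hG₂
  obtain ⟨hε0, hεε₁⟩ := hε
  have hεm : ε < m := lt_trans hεε₁ hε₁m
  have hVh0 : 0 ≤ Vh := by have := abs_nonneg Vt; linarith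
  have hVhΛ : Vh ≤ Λ := hVhm.2
  -- ω facts
  have hω0 : 0 ≤ ω := hω ▸ Real.sqrt_nonneg _
  have hω2 : ω^2 = m^2 - ε^2 := by
    rw [hω]; exact Real.sq_sqrt (sub_nonneg.2 (pow_le_pow_left₀ hε0.le hεm.le 2))
  have hωm : ω ≤ m := by
    rw [hω]
    calc Real.sqrt (m^2 - ε^2) ≤ Real.sqrt (m^2) :=
          Real.sqrt_le_sqrt (by linarith only [pow_pos hε0 2])
      _ = m := Real.sqrt_sq hm.le
  have hcoefnn : 0 ≤ 1/(m+ω) - 1/(2*m) := by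
    rw [sub_nonneg]
    exact one_div_le_one_div_of_le (by linarith) (by linarith)
  have hcoefub : 1/(m+ω) - 1/(2*m) ≤ ε^2/(2*m^3) := by
    have h : 1/(m+ω) - 1/(2*m) = (m-ω)/(2*m*(m+ω)) := by
      field_simp
      ring
    rw [h, div_le_div_iff₀ (by positivity) (by positivity)]
    nlinarith only [hω2, hωm, hω0, hm, mul_nonneg (sub_nonneg.2 hωm) hω0]
  have hmω2 : m - ω ≤ ε^2/m := by
    rw [le_div_iff₀ hm]; nlinarith only [hω2, hω0, hm]
  by_cases hVhz : Vh = 0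
  · -- degenerate case: everything is zero
    subst hVhz
    have hVt0 : Vt = 0 := by
      have h : |Vt| ≤ 0 := by simpa using hVtle
      exact abs_eq_zero.1 (le_antisymm h (abs_nonneg _))
    subst hVt0
    have hV0 : V = 0 := by simpa using hVd
    subst hV0
    have hU0 : U = 0 := by
      have h : ε₁ * |U| ≤ 0 := by simpa using hUV
      have h2 : |U| ≤ 0 := by nlinarith only [abs_nonneg U, h, hε₁0]
      exact abs_eq_zero.1 (le_antisymm h2 (abs_nonneg _))
    subst hU0
    have hUh0 : Uh = 0 := by
      have h : |Uh| ≤ 0 := by simpa using hUhle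
      exact abs_eq_zero.1 (le_antisymm h (abs_nonneg _))
    subst hUh0
    have hUt0 : Ut = 0 := by simpa using hUd.symm
    subst hUt0
    have hf0 : f 0 = 0 := by
      have h := hf2 0
      simp only [abs_zero, Real.zero_rpow hk0, mul_zero] at h
      exact abs_eq_zero.1 (le_antisymm h (abs_nonneg _))
    have harg : ε ^ (2/k) * ((0:ℝ)^2 - ε^2*(0:ℝ)^2) = 0 := by ring
    rw [harg, hf0] at hG₁ hG₂
    rw [Real.zero_rpow (by positivity : 2*k+1 ≠ 0)] at hG₁
    have hG₁0 : G₁ = 0 := by rw [hG₁]; ring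
    have hG₂0 : G₂ = 0 := by rw [hG₂]; ring
    refine ⟨?_, ?_, ?_⟩
    · rw [show G₁ - (1/(m+ω) - 1/(2*m)) * 0 - k * ε^2 * (0:ℝ)^(2*k-1) * (0:ℝ)^2 = 0 by
        rw [hG₁0]; ring, abs_zero]
      refine mul_nonneg hC0 (add_nonneg (mul_nonneg
        (add_nonneg (Real.rpow_nonneg hε0.le _) (by positivity))
        (Real.rpow_nonneg le_rfl _))
        (mul_nonneg (Real.rpow_nonneg le_rfl _) (sq_nonneg _)))
    · rw [show G₂ - ε^2 * (0:ℝ)^(2*k) * 0 - (m-ω) * 0 = 0 by rw [hG₂0]; ring, abs_zero]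
      refine add_nonneg (mul_nonneg (mul_nonneg hC0 (add_nonneg
        (mul_nonneg (Real.rpow_nonneg hε0.le _) (Real.rpow_nonneg le_rfl _))
        (mul_nonneg (mul_nonneg (sq_nonneg _) (Real.rpow_nonneg le_rfl _)) (by positivity))))
        (by positivity))
        (mul_nonneg (mul_nonneg (sq_nonneg _) (Real.rpow_nonneg le_rfl _)) (by positivity))
    · rw [hG₁0, hG₂0, abs_zero]
      rw [show (0:ℝ) + 0 = 0 by ring]
      have : C * ε ^ (2*κ) * 0 + C * (0:ℝ)^(2*k-1) * (0:ℝ)^2 = 0 := by ring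
      rw [this]

  · -- main case : Vh > 0
    have hVhp : 0 < Vh := lt_of_le_of_ne hVh0 (Ne.symm hVhz)
    have hVtb := abs_le.1 hVtle
    have hV1 : Vh/2 ≤ V := by rw [hVd]; linarith only [hVtb.1]
    have hV32 : V ≤ 3/2*Vh := by rw [hVd]; linarith only [hVtb.2]
    have hV0 : 0 < V := lt_of_lt_of_le (by linarith only [hVhp]) hV1
    have hVB : V ≤ B := le_trans hV32 (le_trans (by linarith only [hVhΛ, hVhp]) (le_max_right _ _))
    have hVsq : Vh^2/4 ≤ V^2 := by
      nlinarith only [mul_nonneg (by linarith only [hV1] : (0:ℝ) ≤ V - Vh/2)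
        (by linarith only [hV1, hVhp] : (0:ℝ) ≤ V + Vh/2)]
    have hVsq2 : V^2 ≤ 9/4*Vh^2 := by
      nlinarith only [mul_nonneg (by linarith only [hV32] : (0:ℝ) ≤ 3/2*Vh - V)
        (by linarith only [hV0, hVhp] : (0:ℝ) ≤ 3/2*Vh + V)]
    have hε₁U : ε₁^2 * U^2 ≤ V^2/4 := by
      have h := mul_self_le_mul_self (mul_nonneg hε₁0.le (abs_nonneg U)) hUV
      have h2 := abs_mul_abs_self U
      nlinarith only [h, h2]
    have hεU : ε^2*U^2 ≤ V^2/4 := by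
      have h : ε^2 * U^2 ≤ ε₁^2 * U^2 :=
        mul_le_mul_of_nonneg_right (pow_le_pow_left₀ hε0.le hεε₁.le 2) (sq_nonneg U)
      linarith only [h, hε₁U]
    have hUb : |U| ≤ V/(2*ε₁) := by
      rw [le_div_iff₀ (by positivity)]
      nlinarith only [hUV]
    -- rpow identities
    have hXa : V ^ (2*k) = V ^ (2*k-1) * V := by
      rw [rpow_mul_self' hV0, show 2*k-1+1 = 2*k by ring]
    have hXb : V ^ (2*k+1) = V ^ (2*k-1) * V^2 := by
      rw [← rpow_two' V, ← Real.rpow_add hV0]; congr 1; ring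
    have hXc : (V^(2:ℕ)) ^ k = V ^ (2*k-1) * V := by rw [rpow_sq_eq hV0.le, hXa]
    have hXK : V ^ (2*K) = V ^ (2*k-1) * V * V ^ (2*(K-k)) := by
      rw [← hXa, ← Real.rpow_add hV0]; congr 1; ring
    have hWa : Vh ^ (2*k) = Vh ^ (2*k-1) * Vh := by
      rw [rpow_mul_self' hVhp, show 2*k-1+1 = 2*k by ring]
    have hWb : Vh ^ (2*k+1) = Vh ^ (2*k-1) * Vh^2 := by
      rw [← rpow_two' Vh, ← Real.rpow_add hVhp]; congr 1; ring
    have hWc : (Vh^(2:ℕ)) ^ k = Vh ^ (2*k-1) * Vh := by rw [rpow_sq_eq hVh0, hWa]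
    -- monotonicity facts
    have hXV2e : V ^ (2*k+1) ≤ M1 * (Vh ^ (2*k-1) * Vh^2) := by
      have h := Real.rpow_le_rpow hV0.le hV32 (by linarith only [hk] : (0:ℝ) ≤ 2*k+1)
      rwa [Real.mul_rpow (by norm_num) hVh0, ← hM1def, hWb] at h
    have hXV1e : V ^ (2*k) ≤ M2 * (Vh ^ (2*k-1) * Vh) := by
      have h := Real.rpow_le_rpow hV0.le hV32 (by linarith only [hk] : (0:ℝ) ≤ 2*k)
      rwa [Real.mul_rpow (by norm_num) hVh0, ← hM2def, hWa] at h
    have hVKb : V ^ (2*(K-k)) ≤ BK := by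
      rw [hBKdef]
      exact Real.rpow_le_rpow hV0.le hVB (by linarith only [hkK] : (0:ℝ) ≤ 2*(K-k))
    have hWΛ2 : Vh ^ (2*k-1) * Vh ≤ ΛB := by
      rw [← hWa, hΛBdef]
      exact Real.rpow_le_rpow hVh0 hVhΛ (by linarith only [hk])
    set X := V ^ (2*k-1) with hXdef
    set W := Vh ^ (2*k-1) with hWdef
    have hX0 : 0 ≤ X := Real.rpow_nonneg hV0.le _
    have hW0 : 0 ≤ W := Real.rpow_nonneg hVh0 _
    rw [hWa, hWb] at hG₁ ⊢
    -- ε-power facts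
    have hεsq : ε ^ ((2:ℝ)) = ε^2 := rpow_two' ε
    have hεneg2 : ε ^ (-2:ℝ) = (ε^2)⁻¹ := by
      rw [Real.rpow_neg hε0.le, hεsq]
    have hinv : ε ^ (-2:ℝ) * ε^2 = 1 := by
      rw [hεneg2]; field_simp
    have hεKk : ε ^ (2*K/k) = ε ^ (2*K/k - 2) * ε^2 := by
      rw [← hεsq, ← Real.rpow_add hε0]; congr 1; ring
    have hεp1 : ε^2 ≤ ε ^ (2*κ) * E₁ := by
      have h1 : (ε:ℝ)^2 = ε^(2*κ) * ε^(2-2*κ) := by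
        rw [← Real.rpow_add hε0, show 2*κ + (2-2*κ) = (2:ℝ) by ring, hεsq]
      rw [h1]
      exact mul_le_mul_of_nonneg_left (hE₁def ▸ aux_eps hε0 hεε₁.le (by linarith only [hκ1]))
        (Real.rpow_nonneg hε0.le _)
    have hεp2 : (ε:ℝ)^4 ≤ ε ^ (2*κ) * E₃ := by
      have h1 : (ε:ℝ)^4 = ε^(2*κ) * ε^(4-2*κ) := by
        rw [← Real.rpow_add hε0, show 2*κ + (4-2*κ) = (4:ℝ) by ring, rpow_four']
      rw [h1]
      exact mul_le_mul_of_nonneg_left (hE₃def ▸ aux_eps hε0 hεε₁.le (by linarith only [hκ1]))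
        (Real.rpow_nonneg hε0.le _)
    have hεp3 : ε ^ (2*K/k - 2) ≤ ε ^ (2*κ) * E₂ := by
      have h1 : ε ^ (2*K/k - 2) = ε^(2*κ) * ε^(2*K/k - 2 - 2*κ) := by
        rw [← Real.rpow_add hε0]; congr 1; ring
      rw [h1]
      refine mul_le_mul_of_nonneg_left (hE₂def ▸ aux_eps hε0 hεε₁.le ?_)
        (Real.rpow_nonneg hε0.le _)
      rw [h2Kk]; linarith only [hκ2, h2Kk]
    have hεp4 : (ε:ℝ)^4 ≤ ε ^ (2+2*κ) * E₁ := by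
      have h1 : (ε:ℝ)^4 = ε^(2+2*κ) * ε^(2-2*κ) := by
        rw [← Real.rpow_add hε0, show (2+2*κ) + (2-2*κ) = (4:ℝ) by ring, rpow_four']
      rw [h1]
      exact mul_le_mul_of_nonneg_left (hE₁def ▸ aux_eps hε0 hεε₁.le (by linarith only [hκ1]))
        (Real.rpow_nonneg hε0.le _)
    have hεp5 : ε ^ (2*K/k) ≤ ε ^ (2+2*κ) * E₂ := by
      have h1 : ε ^ (2*K/k) = ε^(2+2*κ) * ε^(2*K/k - 2 - 2*κ) := by
        rw [← Real.rpow_add hε0]; congr 1; ring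
      rw [h1]
      refine mul_le_mul_of_nonneg_left (hE₂def ▸ aux_eps hε0 hεε₁.le ?_)
        (Real.rpow_nonneg hε0.le _)
      rw [h2Kk]; linarith only [hκ2, h2Kk]
    -- the nonlinearity
    set A := V^2 - ε^2 * U^2 with hAdef
    have hA1 : 3/4*V^2 ≤ A := by rw [hAdef]; linarith only [hεU]
    have hA2 : A ≤ V^2 := by
      rw [hAdef]
      nlinarith only [sq_nonneg ε, sq_nonneg U, mul_nonneg (sq_nonneg ε) (sq_nonneg U)]
    have hA0 : 0 < A := lt_of_lt_of_le (by positivity) hA1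
    set τ := ε ^ (2/k) * A with hτdef
    have hτ0 : 0 < τ := mul_pos (Real.rpow_pos_of_pos hε0 _) hA0
    have hτk : τ ^ k = ε^2 * A^k := by
      rw [hτdef, Real.mul_rpow (Real.rpow_nonneg hε0.le _) hA0.le]
      congr 1
      rw [← Real.rpow_mul hε0.le, div_mul_cancel₀ _ hk0, hεsq]
    have hτK : τ ^ K = ε^(2*K/k) * A^K := by
      rw [hτdef, Real.mul_rpow (Real.rpow_nonneg hε0.le _) hA0.le]
      congr 1
      rw [← Real.rpow_mul hε0.le]
      congr 1
      field_simp
    set e := f τ - ε^2 * A^k with hedef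
    have hfτ : f τ = ε^2 * A^k + e := by rw [hedef]; ring
    have he1 : |e| ≤ c * (ε^(2*K/k) * A^K) := by
      have h := hf1 τ
      rw [abs_of_nonneg hτ0.le, hτk, hτK] at h
      rw [hedef]
      exact h.trans (le_of_eq (by ring))
    have hfb : |f τ| ≤ (c+1) * (ε^2 * A^k) := by
      have h := hf2 τ
      rwa [abs_of_nonneg hτ0.le, hτk] at h
    -- Taylor expansion 1 : in U
    set s₁ := -(ε^2*U^2/V^2) with hs₁def
    have hs₁a : ε^2*U^2/V^2 ≤ 1/4 := by
      rw [div_le_iff₀ (by positivity)]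
      linarith only [hεU]
    have hs₁b : (0:ℝ) ≤ ε^2*U^2/V^2 := by positivity
    have hs₁mem : s₁ ∈ Set.Icc (-(1/2):ℝ) (1/2) := by
      rw [hs₁def, Set.mem_Icc]
      constructor <;> [linarith only [hs₁a]; linarith only [hs₁b]]
    have hs₁c : ε^2*U^2/V^2 ≤ ε^2/(4*ε₁^2) := by
      rw [div_le_div_iff₀ (by positivity) (by positivity)]
      nlinarith only [mul_le_mul_of_nonneg_left hε₁U (by positivity : (0:ℝ) ≤ 4*ε^2)]
    have hs₁sq : s₁^2 ≤ ε^4/(16*ε₁^4) := by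
      calc s₁^2 = (ε^2*U^2/V^2)^2 := by rw [hs₁def]; ring
        _ ≤ (ε^2/(4*ε₁^2))^2 := pow_le_pow_left₀ hs₁b hs₁c 2
        _ = ε^4/(16*ε₁^4) := by ring
    have h1s₁ : (0:ℝ) ≤ 1 + s₁ := by rw [hs₁def]; linarith only [hs₁a]
    have hAeq : A = V^(2:ℕ) * (1 + s₁) := by
      rw [hs₁def, hAdef]
      field_simp
      ring
    have hAk : A ^ k = (X*V) * (1+s₁)^k := by
      rw [hAeq, Real.mul_rpow (by positivity) h1s₁, hXc]
    set P := A^k*V - X*V^2 + k*ε^2*X*U^2 with hPdef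
    have hPeq : P = (X*V^2) * ((1+s₁)^k - 1 - k*s₁) := by
      rw [hPdef, hAk, hs₁def]
      field_simp
      ring
    have hXV20 : (0:ℝ) ≤ X*V^2 := mul_nonneg hX0 (sq_nonneg V)
    have hWVh20 : (0:ℝ) ≤ W*Vh^2 := mul_nonneg hW0 (sq_nonneg Vh)
    have hWVh0 : (0:ℝ) ≤ W*Vh := mul_nonneg hW0 hVh0
    have hXV2 : X*V^2 ≤ M1*(W*Vh^2) := by rw [← hXb]; exact hXV2e
    have hXV1 : X*V ≤ M2*(W*Vh) := by rw [← hXa]; exact hXV1e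
    have hPbound : |P| ≤ c₁a * (ε^4*(W*Vh^2)) := by
      rw [hPeq, abs_mul, abs_of_nonneg hXV20]
      calc (X*V^2) * |(1+s₁)^k - 1 - k*s₁| ≤ (X*V^2) * (D₁*s₁^2) :=
            mul_le_mul_of_nonneg_left (hD₁ s₁ hs₁mem) hXV20
        _ ≤ (M1*(W*Vh^2)) * (D₁*(ε^4/(16*ε₁^4))) :=
            mul_le_mul hXV2 (mul_le_mul_of_nonneg_left hs₁sq hD₁0)
              (mul_nonneg hD₁0 (sq_nonneg s₁)) (mul_nonneg hM10 hWVh20)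
        _ = c₁a * (ε^4*(W*Vh^2)) := by rw [hc₁adef]; ring
    -- Taylor expansion 2 : in Vt
    set s₂ := Vt/Vh with hs₂def
    have hs₂abs : |s₂| ≤ 1/2 := by
      rw [hs₂def, abs_div, abs_of_pos hVhp, div_le_iff₀ hVhp]
      linarith only [hVtle]
    have hs₂mem : s₂ ∈ Set.Icc (-(1/2):ℝ) (1/2) := by
      have h := abs_le.1 hs₂abs
      exact Set.mem_Icc.2 ⟨by linarith only [h.1], h.2⟩
    have h1s₂ : (0:ℝ) ≤ 1 + s₂ := by
      have h := abs_le.1 hs₂abs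
      linarith only [h.1]
    have hVeq2 : V = Vh * (1 + s₂) := by
      rw [hs₂def, hVd]
      field_simp
    have hV2k1 : X*V^2 = (W*Vh^2) * (1+s₂)^(2*k+1) := by
      rw [← hXb, hVeq2, Real.mul_rpow hVh0 h1s₂, hWb]
    set Q := X*V^2 - W*Vh^2 - (1+2*k)*(W*Vh)*Vt with hQdef
    have hQeq : Q = (W*Vh^2) * ((1+s₂)^(2*k+1) - 1 - (2*k+1)*s₂) := by
      rw [hQdef, hV2k1, hs₂def]
      field_simp
      ring
    have hQbound : |Q| ≤ D₂ * (W*Vt^2) := by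
      rw [hQeq, abs_mul, abs_of_nonneg hWVh20]
      calc (W*Vh^2) * |(1+s₂)^(2*k+1) - 1 - (2*k+1)*s₂| ≤ (W*Vh^2) * (D₂*s₂^2) :=
            mul_le_mul_of_nonneg_left (hD₂ s₂ hs₂mem) hWVh20
        _ = D₂ * (W*Vt^2) := by rw [hs₂def]; field_simp
    -- the f-error term
    set r := ε ^ (-2:ℝ) * e * V with hrdef
    have hAK : A^K ≤ BK * (X*V) := by
      have h1 : A^K ≤ (V^(2:ℕ))^K := Real.rpow_le_rpow hA0.le hA2 (by linarith only [hk, hkK])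
      rw [rpow_sq_eq hV0.le, hXK] at h1
      calc A^K ≤ X*V*V^(2*(K-k)) := h1
        _ ≤ X*V*BK := mul_le_mul_of_nonneg_left hVKb (mul_nonneg hX0 hV0.le)
        _ = BK*(X*V) := by ring
    have hAKV : A^K * V ≤ BK * (M1*(W*Vh^2)) := by
      calc A^K * V ≤ (BK*(X*V)) * V := mul_le_mul_of_nonneg_right hAK hV0.le
        _ = BK * (X*V^2) := by ring
        _ ≤ BK * (M1*(W*Vh^2)) := mul_le_mul_of_nonneg_left hXV2 hBK0
    have hrbound : |r| ≤ c₁c * (ε^(2*K/k-2) * (W*Vh^2)) := by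
      have h1 : |r| = (ε^2)⁻¹ * (|e| * V) := by
        rw [hrdef, abs_mul, abs_mul, abs_of_nonneg (Real.rpow_nonneg hε0.le _),
          abs_of_nonneg hV0.le, hεneg2]
        ring
      rw [h1]
      calc (ε^2)⁻¹ * (|e| * V) ≤ (ε^2)⁻¹ * ((c * (ε^(2*K/k) * A^K)) * V) := by
            refine mul_le_mul_of_nonneg_left (mul_le_mul_of_nonneg_right he1 hV0.le) ?_
            positivity
        _ = c * ε^(2*K/k-2) * (A^K * V) := by
            rw [hεKk]
            field_simp
        _ ≤ c * ε^(2*K/k-2) * (BK * (M1*(W*Vh^2))) := by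
            refine mul_le_mul_of_nonneg_left hAKV ?_
            exact mul_nonneg hc0 (Real.rpow_nonneg hε0.le _)
        _ = c₁c * (ε^(2*K/k-2) * (W*Vh^2)) := by rw [hc₁cdef]; ring
    -- key algebraic identities
    have hkey₁ : G₁ - (1/(m+ω) - 1/(2*m))*Vh - k*ε^2*X*U^2 = -P - Q - r := by
      rw [hG₁, hfτ, hPdef, hQdef, hrdef]
      linear_combination (-(A^k*V)) * hinv
    have hkey₂ : G₂ - ε^2*(W*Vh)*Uh - (m-ω)*Uh
        = ε^2*((A^k - W*Vh)*U) + e*U + ε^2*((W*Vh)*Ut) := by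
      rw [hG₂, hfτ]
      linear_combination (ε^2*(W*Vh)) * hUd
    refine ⟨?_, ?_, ?_⟩
    · -- inequality (i)
      have htri : |G₁ - (1/(m+ω) - 1/(2*m))*Vh - k*ε^2*X*U^2| ≤ |P| + |Q| + |r| := by
        rw [hkey₁, show -P - Q - r = -((P + Q) + r) by ring, abs_neg]
        exact le_trans (abs_add_le _ _) (add_le_add_left (abs_add_le _ _) _)
      have n1 : (0:ℝ) ≤ ε^(2*K/k-2) * (W*Vh^2) :=
        mul_nonneg (Real.rpow_nonneg hε0.le _) hWVh20
      have n2 : (0:ℝ) ≤ ε^4 * (W*Vh^2) := mul_nonneg (by positivity) hWVh20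
      have n3 : (0:ℝ) ≤ W*Vt^2 := mul_nonneg hW0 (sq_nonneg Vt)
      nlinarith only [htri, hPbound, hQbound, hrbound,
        mul_nonneg (sub_nonneg.2 hCc₁a) n2, mul_nonneg (sub_nonneg.2 hCD₂) n3,
        mul_nonneg (sub_nonneg.2 hCc₁c) n1]
    · -- inequality (ii)
      -- Lipschitz bound on A^k - Vh^{2k}
      set u := A / Vh^2 with hudef
      have hu0 : (0:ℝ) ≤ u := by positivity
      have humem : u ∈ Set.Icc (1/8 : ℝ) 3 := by
        have hVh2 : (0:ℝ) < Vh^2 := by positivity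
        rw [hudef, Set.mem_Icc]
        constructor
        · rw [le_div_iff₀ hVh2]; nlinarith only [hA1, hVsq]
        · rw [div_le_iff₀ hVh2]; nlinarith only [hA2, hVsq2]
      have h1mem : (1:ℝ) ∈ Set.Icc (1/8 : ℝ) 3 := by norm_num
      have hAu : A = Vh^(2:ℕ) * u := by rw [hudef]; field_simp
      have hAku : A^k = (W*Vh) * u^k := by
        rw [hAu, Real.mul_rpow (by positivity) hu0, hWc]
      have hu1eq : u - 1 = (A - Vh^2)/Vh^2 := by rw [hudef]; field_simp
      have hεU3 : ε^2*U^2 ≤ q*(ε^2*Vh^2) := by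
        have h : q*(ε^2*Vh^2) = 9*(ε^2*Vh^2)/(16*ε₁^2) := by rw [hqdef]; ring
        rw [h, le_div_iff₀ (by positivity)]
        nlinarith only [mul_le_mul_of_nonneg_left hε₁U (by positivity : (0:ℝ) ≤ 16*ε^2),
          mul_le_mul_of_nonneg_left hVsq2 (by positivity : (0:ℝ) ≤ 4*ε^2)]
      have hnum : |A - Vh^2| ≤ (5/2)*Vh*|Vt| + q*(ε^2*Vh^2) := by
        have hAexp : A - Vh^2 = 2*Vh*Vt + Vt^2 - ε^2*U^2 := by
          rw [hAdef, hVd]; ring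
        rw [hAexp]
        rw [abs_le]
        have h1 := le_abs_self Vt
        have h2 := neg_abs_le Vt
        have h3 : Vt^2 ≤ (Vh/2)*|Vt| := by
          have := abs_mul_abs_self Vt
          nlinarith only [this, hVtle, abs_nonneg Vt]
        have h4 : (0:ℝ) ≤ ε^2*U^2 := by positivity
        have h5 : (0:ℝ) ≤ Vt^2 := sq_nonneg Vt
        have hv1 : Vh*(-|Vt|) ≤ Vh*Vt := mul_le_mul_of_nonneg_left h2 hVh0
        have hv2 : Vh*Vt ≤ Vh*|Vt| := mul_le_mul_of_nonneg_left h1 hVh0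
        constructor
        · nlinarith only [h3, h4, h5, hεU3, hv1, hv2, abs_nonneg Vt]
        · nlinarith only [h3, h4, h5, hεU3, hv1, hv2, abs_nonneg Vt]
      have hS : |A^k - W*Vh| ≤ L*((5/2)*(W*|Vt|) + q*(ε^2*(W*Vh))) := by
        have heq : A^k - W*Vh = (W*Vh) * (u^k - 1^k) := by
          rw [hAku, Real.one_rpow]; ring
        rw [heq, abs_mul, abs_of_nonneg hWVh0]
        calc (W*Vh) * |u^k - 1^k| ≤ (W*Vh) * (L*|u - 1|) :=
              mul_le_mul_of_nonneg_left (hL u humem 1 h1mem) hWVh0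
          _ = L * ((W*Vh) * (|A - Vh^2|/Vh^2)) := by
              rw [hu1eq, abs_div, abs_of_nonneg (sq_nonneg Vh)]; ring
          _ ≤ L * ((W*Vh) * (((5/2)*Vh*|Vt| + q*(ε^2*Vh^2))/Vh^2)) := by
              refine mul_le_mul_of_nonneg_left (mul_le_mul_of_nonneg_left ?_ hWVh0) hL0
              exact (div_le_div_iff_of_pos_right (by positivity)).2 hnum
          _ = L*((5/2)*(W*|Vt|) + q*(ε^2*(W*Vh))) := by field_simp
      have htri : |G₂ - ε^2*(W*Vh)*Uh - (m-ω)*Uh|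
          ≤ ε^2*(|A^k - W*Vh| *|U|) + |e| *|U| + ε^2*((W*Vh)*|Ut|) := by
        rw [hkey₂]
        have ha : |ε^2*((A^k - W*Vh)*U)| = ε^2*(|A^k - W*Vh| *|U|) := by
          rw [abs_mul, abs_mul, abs_of_nonneg (sq_nonneg ε)]
        have hb : |e*U| = |e| *|U| := abs_mul _ _
        have hc' : |ε^2*((W*Vh)*Ut)| = ε^2*((W*Vh)*|Ut|) := by
          rw [abs_mul, abs_mul, abs_of_nonneg (sq_nonneg ε), abs_of_nonneg hWVh0]
        calc |ε^2*((A^k - W*Vh)*U) + e*U + ε^2*((W*Vh)*Ut)|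
            ≤ |ε^2*((A^k - W*Vh)*U)| + |e*U| + |ε^2*((W*Vh)*Ut)| :=
              le_trans (abs_add_le _ _) (add_le_add_left (abs_add_le _ _) _)
          _ = ε^2*(|A^k - W*Vh| *|U|) + |e| *|U| + ε^2*((W*Vh)*|Ut|) := by rw [ha, hb, hc']
      have hT1 : ε^2*(|A^k - W*Vh| *|U|)
          ≤ L*(5/2)*(ε^2*(W*|Vt|)*|U|) + L*q*((ε^4)*((W*Vh)*|U|)) := by
        have h := mul_le_mul_of_nonneg_right hS (abs_nonneg U)
        have h2 := mul_le_mul_of_nonneg_left h (sq_nonneg ε)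
        calc ε^2*(|A^k - W*Vh| *|U|) = ε^2*(|A^k - W*Vh| *|U|) := rfl
          _ ≤ ε^2*((L*((5/2)*(W*|Vt|) + q*(ε^2*(W*Vh))))*|U|) := h2
          _ = L*(5/2)*(ε^2*(W*|Vt|)*|U|) + L*q*((ε^4)*((W*Vh)*|U|)) := by ring
      have hWVhU : (0:ℝ) ≤ (W*Vh)*|U| := mul_nonneg hWVh0 (abs_nonneg U)
      have hT1b : (ε:ℝ)^4*((W*Vh)*|U|) ≤ (ε^(2+2*κ)*E₁)*((W*Vh)*|U|) :=
        mul_le_mul_of_nonneg_right hεp4 hWVhU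
      have hT2 : |e| *|U| ≤ c*M2*BK*(ε^(2*K/k)*((W*Vh)*|U|)) := by
        have h1 : A^K ≤ BK*(M2*(W*Vh)) :=
          hAK.trans (mul_le_mul_of_nonneg_left hXV1 hBK0)
        have h2 : |e| ≤ c*(ε^(2*K/k)*(BK*(M2*(W*Vh)))) := by
          refine he1.trans ?_
          exact mul_le_mul_of_nonneg_left
            (mul_le_mul_of_nonneg_left h1 (Real.rpow_nonneg hε0.le _)) hc0
        calc |e| *|U| ≤ (c*(ε^(2*K/k)*(BK*(M2*(W*Vh)))))*|U| :=
              mul_le_mul_of_nonneg_right h2 (abs_nonneg U)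
          _ = c*M2*BK*(ε^(2*K/k)*((W*Vh)*|U|)) := by ring
      have hT2b : ε^(2*K/k)*((W*Vh)*|U|) ≤ (ε^(2+2*κ)*E₂)*((W*Vh)*|U|) :=
        mul_le_mul_of_nonneg_right hεp5 hWVhU
      have n1 : (0:ℝ) ≤ ε^(2+2*κ)*(W*Vh)*|U| :=
        mul_nonneg (mul_nonneg (Real.rpow_nonneg hε0.le _) hWVh0) (abs_nonneg U)
      have n2 : (0:ℝ) ≤ ε^2*(W*|Vt|)*|U| :=
        mul_nonneg (mul_nonneg (sq_nonneg ε) (mul_nonneg hW0 (abs_nonneg Vt))) (abs_nonneg U)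
      have hcM2BK0 : (0:ℝ) ≤ c*M2*BK := mul_nonneg (mul_nonneg hc0 hM20) hBK0
      have hLq0 : (0:ℝ) ≤ L*q := mul_nonneg hL0 hq0
      nlinarith only [htri, hT1, hT1b, hT2, hT2b, n1, n2,
        mul_le_mul_of_nonneg_left hT1b hLq0, mul_le_mul_of_nonneg_left hT2b hcM2BK0,
        mul_nonneg (sub_nonneg.2 hCc₂a) n2, mul_nonneg (sub_nonneg.2 hCc₂b) n1,
        hc₂bdef]
    · -- inequality (iii)
      have hG₁eq : G₁ = -P - Q - r + (1/(m+ω) - 1/(2*m))*Vh + k*ε^2*X*U^2 := by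
        linear_combination hkey₁
      have habs₁ : |G₁| ≤ |P| + |Q| + |r| + (1/(m+ω) - 1/(2*m))*Vh + k*ε^2*X*U^2 := by
        rw [hG₁eq]
        have h1 : |(-P - Q - r + (1/(m+ω) - 1/(2*m))*Vh + k*ε^2*X*U^2)|
            ≤ |(-P - Q - r)| + |(1/(m+ω) - 1/(2*m))*Vh| + |k*ε^2*X*U^2| :=
          le_trans (abs_add_le _ _) (add_le_add_left (abs_add_le _ _) _)
        have h2 : |(-P - Q - r)| ≤ |P| + |Q| + |r| := by
          rw [show -P - Q - r = -((P + Q) + r) by ring, abs_neg]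
          exact le_trans (abs_add_le _ _) (add_le_add_left (abs_add_le _ _) _)
        have h3 : |(1/(m+ω) - 1/(2*m))*Vh| = (1/(m+ω) - 1/(2*m))*Vh :=
          abs_of_nonneg (mul_nonneg hcoefnn hVh0)
        have h4 : |k*ε^2*X*U^2| = k*ε^2*X*U^2 := by
          refine abs_of_nonneg ?_
          exact mul_nonneg (mul_nonneg (mul_nonneg hk.le (sq_nonneg ε)) hX0) (sq_nonneg U)
        linarith only [h1, h2, h3.le, h3.ge, h4.le, h4.ge]
      -- upgrades to the common monomial μ = ε^{2κ} Vh
      have hWVh2Λ : W*Vh^2 ≤ ΛB*Vh := by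
        calc W*Vh^2 = (W*Vh)*Vh := by ring
          _ ≤ ΛB*Vh := mul_le_mul_of_nonneg_right hWΛ2 hVh0
      have hμ0 : (0:ℝ) ≤ ε^(2*κ)*Vh := mul_nonneg (Real.rpow_nonneg hε0.le _) hVh0
      have hΛBVh0 : (0:ℝ) ≤ ΛB*Vh := mul_nonneg hΛB0 hVh0
      have m1 : ε^4*(W*Vh^2) ≤ (ε^(2*κ)*E₃)*(ΛB*Vh) :=
        mul_le_mul hεp2 hWVh2Λ hWVh20 (mul_nonneg (Real.rpow_nonneg hε0.le _) hE₃0)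
      have m2 : ε^(2*K/k-2)*(W*Vh^2) ≤ (ε^(2*κ)*E₂)*(ΛB*Vh) :=
        mul_le_mul hεp3 hWVh2Λ hWVh20 (mul_nonneg (Real.rpow_nonneg hε0.le _) hE₂0)
      have m1' : |P| ≤ (c₁a*E₃*ΛB)*(ε^(2*κ)*Vh) := by
        refine hPbound.trans ?_
        calc c₁a*(ε^4*(W*Vh^2)) ≤ c₁a*((ε^(2*κ)*E₃)*(ΛB*Vh)) :=
              mul_le_mul_of_nonneg_left m1 hc₁a0
          _ = (c₁a*E₃*ΛB)*(ε^(2*κ)*Vh) := by ring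
      have m2' : |r| ≤ (c₁c*E₂*ΛB)*(ε^(2*κ)*Vh) := by
        refine hrbound.trans ?_
        calc c₁c*(ε^(2*K/k-2)*(W*Vh^2)) ≤ c₁c*((ε^(2*κ)*E₂)*(ΛB*Vh)) :=
              mul_le_mul_of_nonneg_left m2 hc₁c0
          _ = (c₁c*E₂*ΛB)*(ε^(2*κ)*Vh) := by ring
      have m3' : (1/(m+ω) - 1/(2*m))*Vh ≤ (E₁/(2*m^3))*(ε^(2*κ)*Vh) := by
        calc (1/(m+ω) - 1/(2*m))*Vh ≤ (ε^2/(2*m^3))*Vh :=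
              mul_le_mul_of_nonneg_right hcoefub hVh0
          _ ≤ ((ε^(2*κ)*E₁)/(2*m^3))*Vh := by
              refine mul_le_mul_of_nonneg_right ?_ hVh0
              exact (div_le_div_iff_of_pos_right (by positivity)).2 hεp1
          _ = (E₁/(2*m^3))*(ε^(2*κ)*Vh) := by ring
      have hU2d : U^2 ≤ V^2/(4*ε₁^2) := by
        rw [le_div_iff₀ (by positivity)]
        nlinarith only [hε₁U]
      have m4' : k*ε^2*X*U^2 ≤ (k4*M1*E₁*ΛB)*(ε^(2*κ)*Vh) := by
        have h1 : k*ε^2*X*U^2 ≤ k*ε^2*X*(V^2/(4*ε₁^2)) := by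
          refine mul_le_mul_of_nonneg_left hU2d ?_
          exact mul_nonneg (mul_nonneg hk.le (sq_nonneg ε)) hX0
        have h2 : k*ε^2*X*(V^2/(4*ε₁^2)) = k4*(ε^2*(X*V^2)) := by rw [hk4def]; ring
        have h3 : k4*(ε^2*(X*V^2)) ≤ k4*(ε^2*(M1*(W*Vh^2))) := by
          refine mul_le_mul_of_nonneg_left (mul_le_mul_of_nonneg_left hXV2 (sq_nonneg ε)) hk40
        have h4 : k4*(ε^2*(M1*(W*Vh^2))) ≤ k4*((ε^(2*κ)*E₁)*(M1*(ΛB*Vh))) := by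
          refine mul_le_mul_of_nonneg_left ?_ hk40
          exact mul_le_mul hεp1 (mul_le_mul_of_nonneg_left hWVh2Λ hM10)
            (mul_nonneg hM10 hWVh20) (mul_nonneg (Real.rpow_nonneg hε0.le _) hE₁0)
        calc k*ε^2*X*U^2 ≤ k*ε^2*X*(V^2/(4*ε₁^2)) := h1
          _ = k4*(ε^2*(X*V^2)) := h2
          _ ≤ k4*(ε^2*(M1*(W*Vh^2))) := h3
          _ ≤ k4*((ε^(2*κ)*E₁)*(M1*(ΛB*Vh))) := h4
          _ = (k4*M1*E₁*ΛB)*(ε^(2*κ)*Vh) := by ring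
      have mQ : |Q| ≤ D₂*(W*Vt^2) := hQbound
      -- bound on G₂
      have m5' : |G₂| ≤ ((c+1)*M1*E₁/(2*ε₁)*ΛB + R*E₁/m)*(ε^(2*κ)*Vh) := by
        have hAkXV : A^k ≤ X*V :=
          le_of_le_of_eq (Real.rpow_le_rpow hA0.le hA2 hk.le) hXc
        have hG₂abs : |G₂| ≤ |f τ| *|U| + (m-ω)*|Uh| := by
          rw [hG₂]
          refine le_trans (abs_add_le _ _) ?_
          rw [abs_mul, abs_mul, abs_of_nonneg (by linarith only [hωm] : (0:ℝ) ≤ m - ω)]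
        have hfU : |f τ| *|U| ≤ ((c+1)*(ε^2*A^k))*(V/(2*ε₁)) := by
          refine mul_le_mul hfb hUb (abs_nonneg U) ?_
          exact mul_nonneg (by linarith only [hc0]) (mul_nonneg (sq_nonneg ε)
            (Real.rpow_nonneg hA0.le _))
        have hfU2 : ((c+1)*(ε^2*A^k))*(V/(2*ε₁)) ≤ (c+1)/(2*ε₁)*(ε^2*(X*V^2)) := by
          have h := mul_le_mul_of_nonneg_right hAkXV hV0.le
          calc ((c+1)*(ε^2*A^k))*(V/(2*ε₁)) = (c+1)/(2*ε₁)*(ε^2*(A^k*V)) := by ring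
            _ ≤ (c+1)/(2*ε₁)*(ε^2*(X*V*V)) := by
                refine mul_le_mul_of_nonneg_left (mul_le_mul_of_nonneg_left h (sq_nonneg ε)) ?_
                positivity
            _ = (c+1)/(2*ε₁)*(ε^2*(X*V^2)) := by ring
        have hfU3 : (c+1)/(2*ε₁)*(ε^2*(X*V^2)) ≤ (c+1)/(2*ε₁)*((ε^(2*κ)*E₁)*(M1*(ΛB*Vh))) := by
          refine mul_le_mul_of_nonneg_left ?_ (by positivity)
          refine mul_le_mul hεp1 ?_ (mul_nonneg hX0 (sq_nonneg V))
            (mul_nonneg (Real.rpow_nonneg hε0.le _) hE₁0)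
          exact hXV2.trans (mul_le_mul_of_nonneg_left hWVh2Λ hM10)
        have hUhb : (m-ω)*|Uh| ≤ (ε^2/m)*(R*Vh) := by
          refine mul_le_mul hmω2 hUhle (abs_nonneg Uh) (by positivity)
        have hUhb2 : (ε^2/m)*(R*Vh) ≤ ((ε^(2*κ)*E₁)/m)*(R*Vh) := by
          refine mul_le_mul_of_nonneg_right ?_ (mul_nonneg hR.le hVh0)
          exact (div_le_div_iff_of_pos_right hm).2 hεp1
        calc |G₂| ≤ |f τ| *|U| + (m-ω)*|Uh| := hG₂abs
          _ ≤ (c+1)/(2*ε₁)*((ε^(2*κ)*E₁)*(M1*(ΛB*Vh))) + ((ε^(2*κ)*E₁)/m)*(R*Vh) := by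
            refine add_le_add (le_trans hfU (le_trans hfU2 hfU3)) (le_trans hUhb hUhb2)
          _ = ((c+1)*M1*E₁/(2*ε₁)*ΛB + R*E₁/m)*(ε^(2*κ)*Vh) := by ring
      have nν : (0:ℝ) ≤ W*Vt^2 := mul_nonneg hW0 (sq_nonneg Vt)
      have hsum : (c₁a*E₃*ΛB) + (c₁c*E₂*ΛB) + E₁/(2*m^3) + (k4*M1*E₁*ΛB)
          + ((c+1)*M1*E₁/(2*ε₁)*ΛB + R*E₁/m) ≤ C := by
        refine le_trans (le_of_eq ?_) hCc₃b
        rw [hc₃bdef]; ring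
      nlinarith only [habs₁, m1', m2', m3', m4', mQ, m5', hμ0, nν, hsum,
        mul_nonneg (sub_nonneg.2 hsum) hμ0, mul_nonneg (sub_nonneg.2 hCD₂) nν]
end
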